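/- arXiv:1411.4193 — 7 statements merged into one kernel-verified Lean document; each statement's English description precedes it below -/
import Mathlib

section
/- Let T > 0, s₀ > 0, strikes 0 < K₁ < … < Kₙ with given prices c(K₁),…,c(Kₙ), and barriers s₀ < B₁ < … < B_m with given prices b(B₁),…,b(B_m) ∈ [0,1]. Suppose a market model exists for these data. Then: (1) there exists a probability measure μ on (0,∞) with mean s₀ whose call function c_μ satisfies c_μ(K_i) = c(K_i) for all i = 1,…,n; and (2) there exist functions 𝔠^{B₁},…,𝔠^{B_m} from [0,∞) to [0,s₀] such that, setting 𝔠^{B_{m+1}} := c_μ, for every j = 1,…,m: (a) 𝔠^{B_j} is convex; (b) 0 ≤ 𝔠^{B₁} ≤ … ≤ 𝔠^{B_m} ≤ 𝔠^{B_{m+1}} pointwise; (c) the right derivative of 𝔠^{B_j} at 0 equals −1, 𝔠^{B_j}(0) = s₀, and 𝔠^{B_j}(x) = 0 for all x ≥ B_j; (d) the left derivative of 𝔠^{B_j} at B_j equals −b(B_j); (e) the function x ↦ 𝔠^{B_{j+1}}(x) − 𝔠^{B_j}(x) + b(B_j)·(B_j − x)⁺ is convex on [0,∞). -/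
open MeasureTheory Set Filter

noncomputable section

/-- The running maximum `M_T(ω) = sup_{t ∈ [0,T]} S_t(ω)`. -/
def runMax {Ω : Type} (S : ℝ → Ω → ℝ) (T : ℝ) (ω : Ω) : ℝ :=
  ⨆ t : Icc (0:ℝ) T, S t ω

/-- The stopped value `S_{T ∧ H_B}(ω)`, where `H_B` is the first hitting time of
`[B, ∞)` by `S` during the time interval `[0,T]` (`= S_T(ω)` if `B` is not reached). -/
def stopVal {Ω : Type} (S : ℝ → Ω → ℝ) (B T : ℝ) (ω : Ω) : ℝ :=
  S (hittingBtwn S (Ici B) 0 T ω) ω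

/-- The event `{H_B ≤ T}`: the level `B` is reached by `S` during `[0,T]`. -/
def hitEvent {Ω : Type} (S : ℝ → Ω → ℝ) (B T : ℝ) : Set Ω :=
  {ω | ∃ t ∈ Icc (0:ℝ) T, B ≤ S t ω}

/-- `S` is an adapted martingale on the time interval `[0,T]` with continuous sample
paths, a.s. (strictly) positive values, and initial value `s₀`. -/
structure IsPosContMart {Ω : Type} [mΩ : MeasurableSpace Ω]
    (ℙ : Measure Ω) (ℱ : Filtration ℝ mΩ) (S : ℝ → Ω → ℝ) (s₀ T : ℝ) : Prop where
  adapted : ∀ t ∈ Icc (0:ℝ) T, StronglyMeasurable[ℱ t] (S t)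
  integrable : ∀ t ∈ Icc (0:ℝ) T, Integrable (S t) ℙ
  mart : ∀ s t : ℝ, s ∈ Icc (0:ℝ) T → t ∈ Icc (0:ℝ) T → s ≤ t →
    ℙ[S t|ℱ s] =ᵐ[ℙ] S s
  contPaths : ∀ ω, ContinuousOn (fun t => S t ω) (Icc (0:ℝ) T)
  pos : ∀ t ∈ Icc (0:ℝ) T, ∀ᵐ ω ∂ℙ, 0 < S t ω
  init : ∀ᵐ ω ∂ℙ, S 0 ω = s₀

/-- A market model for maturity `T`, initial price `s₀`, call prices `c i` at strikes `K i`
(`i = 1,…,n`) and barrier prices `b j` at barriers `B j` (`j = 1,…,m`). -/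
def IsMarketModel (Ω : Type) [mΩ : MeasurableSpace Ω] (ℙ : Measure Ω)
    (ℱ : Filtration ℝ mΩ) (S : ℝ → Ω → ℝ) (s₀ T : ℝ)
    (n m : ℕ) (K c B b : ℕ → ℝ) : Prop :=
  IsProbabilityMeasure ℙ ∧
  IsPosContMart ℙ ℱ S s₀ T ∧
  (∀ i, 1 ≤ i → i ≤ n → (∫ ω, max (S T ω - K i) 0 ∂ℙ) = c i) ∧
  (∀ j, 1 ≤ j → j ≤ m → (ℙ {ω | B j ≤ runMax S T ω}).toReal = b j)

open Topology

set_option maxHeartbeats 1000000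

namespace Stmt0Aux

/-- grid point `i * T / 2^k` -/
def gp (T : ℝ) (k i : ℕ) : ℝ := i * T / 2 ^ k

lemma gp_nonneg {T : ℝ} (hT : 0 ≤ T) (k i : ℕ) : 0 ≤ gp T k i := by
  unfold gp; positivity

lemma gp_le {T : ℝ} (hT : 0 ≤ T) {k i : ℕ} (hi : i ≤ 2 ^ k) : gp T k i ≤ T := by
  unfold gp
  rw [div_le_iff₀ (by positivity)]
  calc (i : ℝ) * T ≤ (2 ^ k : ℕ) * T := by
        apply mul_le_mul_of_nonneg_right _ hT
        exact_mod_cast hi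
    _ = T * 2 ^ k := by push_cast; ring

lemma gp_mem {T : ℝ} (hT : 0 ≤ T) {k i : ℕ} (hi : i ≤ 2 ^ k) : gp T k i ∈ Icc (0:ℝ) T :=
  ⟨gp_nonneg hT k i, gp_le hT hi⟩

lemma gp_succ (T : ℝ) (k i : ℕ) : gp T (k+1) (2*i) = gp T k i := by
  unfold gp; push_cast; ring_nf

lemma gp_mono {T : ℝ} (hT : 0 ≤ T) (k : ℕ) {i j : ℕ} (h : i ≤ j) : gp T k i ≤ gp T k j := by
  unfold gp
  have : (i:ℝ) ≤ j := by exact_mod_cast h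
  gcongr

/-- there is a grid point within `T/2^k` to the left (inclusive) of `t`. -/
lemma exists_gp_floor {T : ℝ} (hT : 0 < T) {t : ℝ} (ht : t ∈ Icc 0 T) (k : ℕ) :
    ∃ i ≤ 2 ^ k, gp T k i ≤ t ∧ t - T / 2 ^ k ≤ gp T k i := by
  set m := T / 2 ^ k with hm
  have hm0 : 0 < m := by positivity
  refine ⟨⌊t / m⌋₊, ?_, ?_, ?_⟩
  · have : (⌊t / m⌋₊ : ℝ) ≤ t / m := Nat.floor_le (div_nonneg ht.1 hm0.le)
    have h2 : t / m ≤ 2 ^ k := by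
      rw [div_le_iff₀ hm0]
      calc t ≤ T := ht.2
        _ = 2 ^ k * m := by rw [hm]; field_simp
        _ = (2:ℝ) ^ k * m := by norm_num
    have := this.trans h2
    exact_mod_cast Nat.cast_le.mp (by exact_mod_cast this.trans_eq (by push_cast; ring))
  · have : (⌊t / m⌋₊ : ℝ) ≤ t / m := Nat.floor_le (div_nonneg ht.1 hm0.le)
    calc gp T k ⌊t / m⌋₊ = (⌊t / m⌋₊ : ℝ) * m := by unfold gp; rw [hm]; ring
      _ ≤ t / m * m := by nlinarith
      _ = t := by field_simp
  · have : t / m < ⌊t / m⌋₊ + 1 := Nat.lt_floor_add_one _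
    have : t < (⌊t / m⌋₊ + 1) * m := by
      calc t = t / m * m := by field_simp
        _ < (⌊t / m⌋₊ + 1) * m := by nlinarith
    calc t - m ≤ (⌊t / m⌋₊ : ℝ) * m := by nlinarith
      _ = gp T k ⌊t / m⌋₊ := by unfold gp; rw [hm]; ring

/-- a grid point strictly to the left of `t`, within `T/2^k`, provided `T/2^k < t`. -/
lemma exists_gp_lt {T : ℝ} (hT : 0 < T) {t : ℝ} (ht : 0 < t) (htT : t ≤ T) {k : ℕ}
    (hk : T / 2 ^ k < t) :
    ∃ i ≤ 2 ^ k, gp T k i < t ∧ t - T / 2 ^ k ≤ gp T k i := by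
  set m := T / 2 ^ k with hm
  have hm0 : 0 < m := by positivity
  have h1 : 1 ≤ ⌈t / m⌉₊ := Nat.one_le_ceil_iff.mpr (by positivity)
  refine ⟨⌈t / m⌉₊ - 1, ?_, ?_, ?_⟩
  · have h2 : (⌈t / m⌉₊ : ℝ) - 1 < t / m := by
      have := Nat.ceil_lt_add_one (show (0:ℝ) ≤ t / m by positivity)
      linarith
    have h3 : t / m ≤ 2 ^ k := by
      rw [div_le_iff₀ hm0]
      calc t ≤ T := htT
        _ = 2 ^ k * m := by rw [hm]; field_simp
        _ = (2:ℝ) ^ k * m := by norm_num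
    have : ((⌈t / m⌉₊ - 1 : ℕ) : ℝ) < 2 ^ k := by
      push_cast [h1]
      linarith
    exact_mod_cast Nat.cast_lt.mp (by exact_mod_cast this.trans_le le_rfl) |>.le
  · have h2 : (⌈t / m⌉₊ : ℝ) - 1 < t / m := by
      have := Nat.ceil_lt_add_one (show (0:ℝ) ≤ t / m by positivity)
      linarith
    have : ((⌈t / m⌉₊ - 1 : ℕ) : ℝ) < t / m := by push_cast [h1]; linarith
    calc gp T k (⌈t / m⌉₊ - 1) = ((⌈t / m⌉₊ - 1 : ℕ) : ℝ) * m := by unfold gp; rw [hm]; ring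
      _ < t / m * m := by nlinarith
      _ = t := by field_simp
  · have h2 : t / m ≤ (⌈t / m⌉₊ : ℝ) := Nat.le_ceil _
    have : t / m - 1 ≤ ((⌈t / m⌉₊ - 1 : ℕ) : ℝ) := by push_cast [h1]; linarith
    calc t - m = (t / m - 1) * m := by field_simp
      _ ≤ ((⌈t / m⌉₊ - 1 : ℕ) : ℝ) * m := by nlinarith
      _ = gp T k (⌈t / m⌉₊ - 1) := by unfold gp; rw [hm]; ring

variable {Ω : Type}

/-- the event that `S` reaches level `β` at a level-`k` dyadic gridpoint of `[0,T]` -/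
def gridHit (S : ℝ → Ω → ℝ) (T β : ℝ) (k : ℕ) : Set Ω :=
  {ω | ∃ i ≤ 2 ^ k, β ≤ S (gp T k i) ω}

/-- the event that `S` reaches level `β` at some dyadic time in `[0,T]` -/
def dyHit (S : ℝ → Ω → ℝ) (T β : ℝ) : Set Ω := ⋃ k, gridHit S T β k

variable {S : ℝ → Ω → ℝ} {T β γ B : ℝ}

lemma gridHit_mono : Monotone (gridHit S T β) := by
  apply monotone_nat_of_le_succ
  rintro k ω ⟨i, hi, hS⟩
  refine ⟨2 * i, ?_, by rw [gp_succ]; exact hS⟩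
  calc 2 * i ≤ 2 * 2 ^ k := by omega
    _ = 2 ^ (k + 1) := (pow_succ' 2 k).symm

/-- mesh goes to 0 -/
lemma mesh_tendsto (T : ℝ) : Tendsto (fun k : ℕ => T / 2 ^ k) atTop (𝓝 0) := by
  simpa using tendsto_const_nhds.div_atTop (tendsto_pow_atTop_atTop_of_one_lt (by norm_num : (1:ℝ) < 2))

lemma hitEvent_subset_dyHit (hT : 0 < T) {ω : Ω}
    (hc : ContinuousOn (fun t => S t ω) (Icc 0 T)) (hβB : β < B)
    (hω : ∃ t ∈ Icc (0:ℝ) T, B ≤ S t ω) : ω ∈ dyHit S T β := by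
  obtain ⟨t, ht, hB⟩ := hω
  have hcw : ContinuousWithinAt (fun t => S t ω) (Icc 0 T) t := hc t ht
  have hev : ∀ᶠ s in 𝓝[Icc (0:ℝ) T] t, β < S s ω :=
    Filter.Tendsto.eventually_const_lt (lt_of_lt_of_le hβB hB) hcw
  rw [eventually_nhdsWithin_iff, Metric.eventually_nhds_iff] at hev
  obtain ⟨δ, hδ, hball⟩ := hev
  obtain ⟨k, hk⟩ := (mesh_tendsto T).eventually (eventually_lt_nhds hδ) |>.exists
  obtain ⟨i, hi, h1, h2⟩ := exists_gp_floor hT ht k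
  refine mem_iUnion.mpr ⟨k, i, hi, ?_⟩
  refine (hball ?_ (gp_mem hT.le hi)).le
  rw [Real.dist_eq, abs_lt]
  constructor <;> [skip; skip] <;> [linarith; linarith [gp_nonneg hT.le k i]]

/-- first hitting index of the level-`k` grid -/
def hitIdx (S : ℝ → Ω → ℝ) (T β : ℝ) (k : ℕ) (ω : Ω) : ℕ :=
  sInf {i | β ≤ S (gp T k i) ω}

/-- (discrete) first hitting time -/
def hitT (S : ℝ → Ω → ℝ) (T β : ℝ) (k : ℕ) (ω : Ω) : ℝ :=
  gp T k (hitIdx S T β k ω)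

lemma key_pointwise {ω : Ω} (hT : 0 < T)
    (hc : ContinuousOn (fun t => S t ω) (Icc 0 T))
    (h0 : S 0 ω < β) (hω : ω ∈ dyHit S T β) :
    Tendsto (fun k => S (hitT S T β k ω) ω) atTop (𝓝 β) := by
  obtain ⟨k₀, hk₀⟩ := mem_iUnion.mp hω
  -- for k ≥ k₀, the hitting set is nonempty with an element ≤ 2^k
  have hne : ∀ k, k₀ ≤ k → ∃ i ≤ 2 ^ k, β ≤ S (gp T k i) ω := fun k hk => gridHit_mono hk hk₀
  have hIle : ∀ k, k₀ ≤ k → hitIdx S T β k ω ≤ 2 ^ k := by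
    intro k hk
    obtain ⟨i, hi, hS⟩ := hne k hk
    exact (Nat.sInf_le hS).trans hi
  have hmemIcc : ∀ k, k₀ ≤ k → hitT S T β k ω ∈ Icc (0:ℝ) T :=
    fun k hk => gp_mem hT.le (hIle k hk)
  have hval : ∀ k, k₀ ≤ k → β ≤ S (hitT S T β k ω) ω := by
    intro k hk
    obtain ⟨i, hi, hS⟩ := hne k hk
    exact Nat.sInf_mem (⟨i, hS⟩ : {i | β ≤ S (gp T k i) ω}.Nonempty)
  have hanti : ∀ k, k₀ ≤ k → hitT S T β (k+1) ω ≤ hitT S T β k ω := by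
    intro k hk
    have h2 : β ≤ S (gp T (k+1) (2 * hitIdx S T β k ω)) ω := by
      rw [gp_succ]; exact hval k hk
    have : hitIdx S T β (k+1) ω ≤ 2 * hitIdx S T β k ω := Nat.sInf_le h2
    calc hitT S T β (k+1) ω ≤ gp T (k+1) (2 * hitIdx S T β k ω) := gp_mono hT.le _ this
      _ = hitT S T β k ω := gp_succ T k _
  -- shifted sequence
  set g : ℕ → ℝ := fun k => hitT S T β (k₀ + k) ω with hg
  have hganti : Antitone g := antitone_nat_of_succ_le fun k => hanti (k₀ + k) (Nat.le_add_right _ _)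
  have hgbdd : BddBelow (range g) := ⟨0, by rintro x ⟨k, rfl⟩; exact (hmemIcc _ (Nat.le_add_right _ _)).1⟩
  set t₁ : ℝ := ⨅ k, g k with ht₁
  have hgt : Tendsto g atTop (𝓝 t₁) := tendsto_atTop_ciInf hganti hgbdd
  have htk : Tendsto (fun k => hitT S T β k ω) atTop (𝓝 t₁) := by
    rw [← tendsto_add_atTop_iff_nat k₀]
    simpa [add_comm] using hgt
  have ht₁le : ∀ k, k₀ ≤ k → t₁ ≤ hitT S T β k ω := by
    intro k hk
    have hidx : k₀ + (k - k₀) = k := by omega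
    have heq : g (k - k₀) = hitT S T β k ω := by
      rw [hg]
      show hitT S T β (k₀ + (k - k₀)) ω = hitT S T β k ω
      rw [hidx]
    rw [← heq]; exact ciInf_le hgbdd _
  have ht₁Icc : t₁ ∈ Icc (0:ℝ) T := isClosed_Icc.mem_of_tendsto htk
    (eventually_atTop.mpr ⟨k₀, fun k hk => hmemIcc k hk⟩)
  have hStend : Tendsto (fun k => S (hitT S T β k ω) ω) atTop (𝓝 (S t₁ ω)) := by
    refine ((hc t₁ ht₁Icc).tendsto).comp ?_
    rw [tendsto_nhdsWithin_iff]
    exact ⟨htk, eventually_atTop.mpr ⟨k₀, fun k hk => hmemIcc k hk⟩⟩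
  have hβle : β ≤ S t₁ ω :=
    ge_of_tendsto hStend (eventually_atTop.mpr ⟨k₀, fun k hk => hval k hk⟩)
  have ht₁pos : 0 < t₁ := by
    rcases eq_or_lt_of_le ht₁Icc.1 with h | h
    · exfalso; rw [← h] at hβle; exact absurd hβle (not_le.mpr h0)
    · exact h
  -- show S t₁ ω = β
  have hSeq : S t₁ ω = β := by
    by_contra hne'
    have hlt : β < S t₁ ω := lt_of_le_of_ne hβle (Ne.symm hne')
    have hev : ∀ᶠ s in 𝓝[Icc (0:ℝ) T] t₁, β < S s ω :=
      Filter.Tendsto.eventually_const_lt hlt (hc t₁ ht₁Icc)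
    rw [eventually_nhdsWithin_iff, Metric.eventually_nhds_iff] at hev
    obtain ⟨δ, hδ, hball⟩ := hev
    obtain ⟨k, hk1, hk2⟩ := ((mesh_tendsto T).eventually
      (eventually_lt_nhds (lt_min hδ ht₁pos))).and (eventually_ge_atTop k₀) |>.exists
    obtain ⟨i, hi, hlt', hge⟩ := exists_gp_lt hT ht₁pos ht₁Icc.2 (hk1.trans_le (min_le_right _ _))
    have hmem : gp T k i ∈ Icc (0:ℝ) T := gp_mem hT.le hi
    have hdist : dist (gp T k i) t₁ < δ := by
      rw [Real.dist_eq, abs_lt]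
      have := hk1.trans_le (min_le_left _ _)
      constructor <;> linarith
    have hSi : β ≤ S (gp T k i) ω := (hball hdist hmem).le
    have : hitT S T β k ω ≤ gp T k i := gp_mono hT.le _ (Nat.sInf_le hSi)
    exact absurd (ht₁le k hk2) (not_le.mpr (lt_of_le_of_lt this hlt'))
  rw [hSeq] at hStend; exact hStend


section MeasurePart

variable [mΩ : MeasurableSpace Ω] {ℙ : Measure Ω} {ℱ : Filtration ℝ mΩ}
  {S : ℝ → Ω → ℝ} {T β γ B s₀ : ℝ}

lemma meas_S (hAd : ∀ t ∈ Icc (0:ℝ) T, StronglyMeasurable[ℱ t] (S t)) {t : ℝ}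
    (ht : t ∈ Icc (0:ℝ) T) : Measurable (S t) := by
  exact ((hAd t ht).measurable).mono (ℱ.le t) le_rfl

/-- first-hit decomposition set: hit at grid index `i` and not before -/
def fhit (S : ℝ → Ω → ℝ) (T β : ℝ) (k i : ℕ) : Set Ω :=
  {ω | β ≤ S (gp T k i) ω ∧ ∀ l < i, S (gp T k l) ω < β}

/-- the overshoot event -/
def overSet (S : ℝ → Ω → ℝ) (T β γ : ℝ) (k : ℕ) : Set Ω :=
  ⋃ i ∈ Finset.range (2 ^ k + 1), (fhit S T β k i ∩ {ω | γ ≤ S (gp T k i) ω})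

lemma measurableSet_fhit (hAd : ∀ t ∈ Icc (0:ℝ) T, StronglyMeasurable[ℱ t] (S t))
    (hT : 0 ≤ T) {k i : ℕ} (hik : i ≤ 2 ^ k) :
    MeasurableSet[ℱ (gp T k i)] (fhit S T β k i) := by
  have hmeas : ∀ l ≤ i, Measurable[ℱ (gp T k i)] (S (gp T k l)) := by
    intro l hl
    have h1 : StronglyMeasurable[ℱ (gp T k l)] (S (gp T k l)) :=
      hAd _ (gp_mem hT (hl.trans hik))
    exact h1.measurable.mono (ℱ.mono (gp_mono hT k hl)) le_rfl
  have h1 : MeasurableSet[ℱ (gp T k i)] {ω | β ≤ S (gp T k i) ω} :=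
    measurableSet_le measurable_const (hmeas i le_rfl)
  have h2 : MeasurableSet[ℱ (gp T k i)] {ω | ∀ l < i, S (gp T k l) ω < β} := by
    have : {ω | ∀ l < i, S (gp T k l) ω < β} = ⋂ l, ⋂ (_ : l < i), {ω | S (gp T k l) ω < β} := by
      ext ω; simp
    rw [this]
    exact MeasurableSet.iInter fun l => MeasurableSet.iInter fun hl =>
      measurableSet_lt (hmeas l hl.le) measurable_const
  exact h1.inter h2

lemma measurableSet_fhit' (hAd : ∀ t ∈ Icc (0:ℝ) T, StronglyMeasurable[ℱ t] (S t))
    (hT : 0 ≤ T) {k i : ℕ} (hik : i ≤ 2 ^ k) : MeasurableSet (fhit S T β k i) :=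
  ℱ.le _ _ (measurableSet_fhit hAd hT hik)

lemma measurableSet_ge_gp (hAd : ∀ t ∈ Icc (0:ℝ) T, StronglyMeasurable[ℱ t] (S t))
    (hT : 0 ≤ T) {k i : ℕ} (hik : i ≤ 2 ^ k) {γ : ℝ} :
    MeasurableSet[ℱ (gp T k i)] {ω | γ ≤ S (gp T k i) ω} :=
  measurableSet_le measurable_const ((hAd _ (gp_mem hT hik)).measurable)

lemma gridHit_eq_biUnion :
    gridHit S T β k = ⋃ i ∈ Finset.range (2 ^ k + 1), fhit S T β k i := by
  ext ω
  simp only [gridHit, mem_setOf_eq, mem_iUnion, Finset.mem_range]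
  constructor
  · rintro ⟨i, hi, hS⟩
    have hmemi : i ∈ {j | β ≤ S (gp T k j) ω} := hS
    have hne : {j | β ≤ S (gp T k j) ω}.Nonempty := ⟨i, hmemi⟩
    have hinf := Nat.sInf_le hmemi
    refine ⟨sInf {j | β ≤ S (gp T k j) ω}, by omega, Nat.sInf_mem hne, fun l hl => ?_⟩
    by_contra hle
    have hmeml : l ∈ {j | β ≤ S (gp T k j) ω} := not_lt.mp hle
    exact absurd (Nat.sInf_le hmeml) (by omega)
  · rintro ⟨i, hi, hS, -⟩
    exact ⟨i, by omega, hS⟩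

lemma pairwise_fhit :
    PairwiseDisjoint ↑(Finset.range (2 ^ k + 1)) (fhit S T β k) := by
  have key : ∀ i j : ℕ, i < j → Disjoint (fhit S T β k i) (fhit S T β k j) := by
    intro i j h
    refine disjoint_left.mpr fun ω hi hj => ?_
    exact absurd hi.1 (not_le.mpr (hj.2 i h))
  intro i _ j _ hij
  rcases lt_or_gt_of_ne hij with h | h
  · exact key i j h
  · exact (key j i h).symm

lemma mart_setIntegral [IsProbabilityMeasure ℙ]
    (hInt : ∀ t ∈ Icc (0:ℝ) T, Integrable (S t) ℙ)
    (hMart : ∀ s t : ℝ, s ∈ Icc (0:ℝ) T → t ∈ Icc (0:ℝ) T → s ≤ t → ℙ[S t|ℱ s] =ᵐ[ℙ] S s)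
    (hT : 0 ≤ T) {t : ℝ} (ht : t ∈ Icc (0:ℝ) T) {E : Set Ω}
    (hE : MeasurableSet[ℱ t] E) : ∫ ω in E, S T ω ∂ℙ = ∫ ω in E, S t ω ∂ℙ := by
  have h1 := setIntegral_condExp (ℱ.le t) (hInt T ⟨hT, le_rfl⟩) hE
  have h2 : ∫ ω in E, (ℙ[S T|ℱ t]) ω ∂ℙ = ∫ ω in E, S t ω ∂ℙ :=
    setIntegral_congr_ae (ℱ.le t _ hE)
      ((hMart t T ht ⟨hT, le_rfl⟩ ht.2).mono fun ω hω _ => hω)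
  rw [← h1, h2]

end MeasurePart


section GridBounds

variable [mΩ : MeasurableSpace Ω] {ℙ : Measure Ω} {ℱ : Filtration ℝ mΩ}
  {S : ℝ → Ω → ℝ} {T β γ B s₀ : ℝ} {k : ℕ}

lemma measurableSet_gridHit (hAd : ∀ t ∈ Icc (0:ℝ) T, StronglyMeasurable[ℱ t] (S t))
    (hT : 0 ≤ T) : MeasurableSet (gridHit S T β k) := by
  rw [gridHit_eq_biUnion]
  refine MeasurableSet.biUnion (Finset.range _).countable_toSet fun i hi => ?_
  exact measurableSet_fhit' hAd hT (by simpa using Nat.lt_succ_iff.mp (Finset.mem_range.mp hi))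

lemma measurableSet_overSet (hAd : ∀ t ∈ Icc (0:ℝ) T, StronglyMeasurable[ℱ t] (S t))
    (hT : 0 ≤ T) : MeasurableSet (overSet S T β γ k) := by
  refine MeasurableSet.biUnion (Finset.range _).countable_toSet fun i hi => ?_
  have hik : i ≤ 2 ^ k := Nat.lt_succ_iff.mp (Finset.mem_range.mp hi)
  exact (measurableSet_fhit' hAd hT hik).inter
    (ℱ.le _ _ (measurableSet_ge_gp hAd hT hik))

lemma overSet_subset_gridHit : overSet S T β γ k ⊆ gridHit S T β k := by
  rw [gridHit_eq_biUnion]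
  exact iUnion₂_mono fun i hi => inter_subset_left

lemma grid_lower [IsProbabilityMeasure ℙ]
    (hAd : ∀ t ∈ Icc (0:ℝ) T, StronglyMeasurable[ℱ t] (S t))
    (hInt : ∀ t ∈ Icc (0:ℝ) T, Integrable (S t) ℙ)
    (hMart : ∀ s t : ℝ, s ∈ Icc (0:ℝ) T → t ∈ Icc (0:ℝ) T → s ≤ t → ℙ[S t|ℱ s] =ᵐ[ℙ] S s)
    (hT : 0 < T) (k : ℕ) :
    β * (ℙ (gridHit S T β k)).toReal ≤ ∫ ω in gridHit S T β k, S T ω ∂ℙ := by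
  have hIntT : Integrable (S T) ℙ := hInt T ⟨hT.le, le_rfl⟩
  have hmf : ∀ i ∈ Finset.range (2 ^ k + 1), MeasurableSet (fhit S T β k i) := fun i hi =>
    measurableSet_fhit' hAd hT.le (Nat.lt_succ_iff.mp (Finset.mem_range.mp hi))
  have hint : ∀ i ∈ Finset.range (2 ^ k + 1), IntegrableOn (S T) (fhit S T β k i) ℙ :=
    fun i _ => hIntT.integrableOn
  rw [gridHit_eq_biUnion, integral_biUnion_finset _ hmf pairwise_fhit hint]
  have hPsum : (ℙ (⋃ i ∈ Finset.range (2 ^ k + 1), fhit S T β k i)).toReal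
      = ∑ i ∈ Finset.range (2 ^ k + 1), (ℙ (fhit S T β k i)).toReal := by
    rw [measure_biUnion_finset pairwise_fhit hmf, ENNReal.toReal_sum]
    exact fun i _ => measure_ne_top ℙ _
  rw [hPsum, Finset.mul_sum]
  refine Finset.sum_le_sum fun i hi => ?_
  have hik : i ≤ 2 ^ k := Nat.lt_succ_iff.mp (Finset.mem_range.mp hi)
  have heq : ∫ ω in fhit S T β k i, S T ω ∂ℙ = ∫ ω in fhit S T β k i, S (gp T k i) ω ∂ℙ :=
    mart_setIntegral hInt hMart hT.le (gp_mem hT.le hik) (measurableSet_fhit hAd hT.le hik)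
  rw [heq]
  have := setIntegral_ge_of_const_le (hmf i hi) (measure_ne_top ℙ _)
    (fun ω hω => hω.1) ((hInt _ (gp_mem hT.le hik)).integrableOn)
  rwa [measureReal_def, smul_eq_mul, mul_comm] at this

lemma grid_upper [IsProbabilityMeasure ℙ]
    (hAd : ∀ t ∈ Icc (0:ℝ) T, StronglyMeasurable[ℱ t] (S t))
    (hInt : ∀ t ∈ Icc (0:ℝ) T, Integrable (S t) ℙ)
    (hMart : ∀ s t : ℝ, s ∈ Icc (0:ℝ) T → t ∈ Icc (0:ℝ) T → s ≤ t → ℙ[S t|ℱ s] =ᵐ[ℙ] S s)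
    (hT : 0 < T) (hγ : 0 ≤ γ) (k : ℕ) :
    ∫ ω in gridHit S T β k, S T ω ∂ℙ ≤
      γ * (ℙ (gridHit S T β k)).toReal + ∫ ω in overSet S T β γ k, S T ω ∂ℙ := by
  have hIntT : Integrable (S T) ℙ := hInt T ⟨hT.le, le_rfl⟩
  have hmf : ∀ i ∈ Finset.range (2 ^ k + 1), MeasurableSet (fhit S T β k i) := fun i hi =>
    measurableSet_fhit' hAd hT.le (Nat.lt_succ_iff.mp (Finset.mem_range.mp hi))
  have hmo : ∀ i ∈ Finset.range (2 ^ k + 1),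
      MeasurableSet (fhit S T β k i ∩ {ω | γ ≤ S (gp T k i) ω}) := fun i hi =>
    (hmf i hi).inter (ℱ.le _ _
      (measurableSet_ge_gp hAd hT.le (Nat.lt_succ_iff.mp (Finset.mem_range.mp hi))))
  have hint : ∀ i ∈ Finset.range (2 ^ k + 1), IntegrableOn (S T) (fhit S T β k i) ℙ :=
    fun i _ => hIntT.integrableOn
  have hPsum : (ℙ (⋃ i ∈ Finset.range (2 ^ k + 1), fhit S T β k i)).toReal
      = ∑ i ∈ Finset.range (2 ^ k + 1), (ℙ (fhit S T β k i)).toReal := by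
    rw [measure_biUnion_finset pairwise_fhit hmf, ENNReal.toReal_sum]
    exact fun i _ => measure_ne_top ℙ _
  have hover : ∫ ω in overSet S T β γ k, S T ω ∂ℙ
      = ∑ i ∈ Finset.range (2 ^ k + 1),
          ∫ ω in fhit S T β k i ∩ {ω | γ ≤ S (gp T k i) ω}, S T ω ∂ℙ := by
    unfold overSet
    exact integral_biUnion_finset _ hmo
      (pairwise_fhit.mono fun i => inter_subset_left)
      fun i _ => hIntT.integrableOn
  rw [gridHit_eq_biUnion, integral_biUnion_finset _ hmf pairwise_fhit hint, hPsum, hover,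
    Finset.mul_sum, ← Finset.sum_add_distrib]
  refine Finset.sum_le_sum fun i hi => ?_
  have hik : i ≤ 2 ^ k := Nat.lt_succ_iff.mp (Finset.mem_range.mp hi)
  have hui : gp T k i ∈ Icc (0:ℝ) T := gp_mem hT.le hik
  have hIu : Integrable (S (gp T k i)) ℙ := hInt _ hui
  have hmlt : MeasurableSet (fhit S T β k i ∩ {ω | S (gp T k i) ω < γ}) :=
    (hmf i hi).inter (measurableSet_lt (meas_S hAd hui) measurable_const)
  have hmge : MeasurableSet (fhit S T β k i ∩ {ω | γ ≤ S (gp T k i) ω}) := hmo i hi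
  have heq : ∫ ω in fhit S T β k i, S T ω ∂ℙ = ∫ ω in fhit S T β k i, S (gp T k i) ω ∂ℙ :=
    mart_setIntegral hInt hMart hT.le hui (measurableSet_fhit hAd hT.le hik)
  have hsplit : fhit S T β k i = (fhit S T β k i ∩ {ω | S (gp T k i) ω < γ})
      ∪ (fhit S T β k i ∩ {ω | γ ≤ S (gp T k i) ω}) := by
    rw [← inter_union_distrib_left]
    have : {ω | S (gp T k i) ω < γ} ∪ {ω | γ ≤ S (gp T k i) ω} = univ := by
      ext ω; simp [lt_or_ge]
    rw [this, inter_univ]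
  have hdisj : Disjoint (fhit S T β k i ∩ {ω | S (gp T k i) ω < γ})
      (fhit S T β k i ∩ {ω | γ ≤ S (gp T k i) ω}) := by
    refine Disjoint.mono inter_subset_right inter_subset_right ?_
    refine disjoint_left.mpr fun ω h1 h2 => ?_
    have hlt : S (gp T k i) ω < γ := h1
    have hge : γ ≤ S (gp T k i) ω := h2
    linarith
  rw [heq]
  nth_rewrite 1 [hsplit]
  rw [setIntegral_union hdisj hmge hIu.integrableOn hIu.integrableOn]
  have h1 : ∫ ω in fhit S T β k i ∩ {ω | S (gp T k i) ω < γ}, S (gp T k i) ω ∂ℙ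
      ≤ γ * (ℙ (fhit S T β k i)).toReal := by
    calc ∫ ω in fhit S T β k i ∩ {ω | S (gp T k i) ω < γ}, S (gp T k i) ω ∂ℙ
        ≤ ∫ _ω in fhit S T β k i ∩ {ω | S (gp T k i) ω < γ}, γ ∂ℙ := by
          refine setIntegral_mono_on hIu.integrableOn ((integrableOn_const_iff (C := γ)).mpr ?_) hmlt
            fun ω hω => hω.2.le
          exact Or.inr (measure_lt_top ℙ _)
      _ = (ℙ (fhit S T β k i ∩ {ω | S (gp T k i) ω < γ})).toReal * γ := by
          rw [setIntegral_const]; rfl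
      _ ≤ γ * (ℙ (fhit S T β k i)).toReal := by
          rw [mul_comm]
          refine mul_le_mul_of_nonneg_left ?_ hγ
          refine ENNReal.toReal_le_toReal (measure_ne_top ℙ _) (measure_ne_top ℙ _) |>.mpr ?_
          exact measure_mono inter_subset_left
  have h2 : ∫ ω in fhit S T β k i ∩ {ω | γ ≤ S (gp T k i) ω}, S (gp T k i) ω ∂ℙ
      = ∫ ω in fhit S T β k i ∩ {ω | γ ≤ S (gp T k i) ω}, S T ω ∂ℙ := by
    refine (mart_setIntegral hInt hMart hT.le hui ?_).symm
    exact (measurableSet_fhit hAd hT.le hik).inter (measurableSet_ge_gp hAd hT.le hik)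
  rw [h2]
  exact add_le_add h1 le_rfl

end GridBounds


section KeyLimit

variable [mΩ : MeasurableSpace Ω] {ℙ : Measure Ω} {ℱ : Filtration ℝ mΩ}
  {S : ℝ → Ω → ℝ} {T β γ B s₀ : ℝ} {k : ℕ}

lemma measurableSet_dyHit (hAd : ∀ t ∈ Icc (0:ℝ) T, StronglyMeasurable[ℱ t] (S t))
    (hT : 0 ≤ T) : MeasurableSet (dyHit S T β) :=
  MeasurableSet.iUnion fun _ => measurableSet_gridHit hAd hT

lemma overSet_subset_dyHit : overSet S T β γ k ⊆ dyHit S T β :=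
  overSet_subset_gridHit.trans (subset_iUnion (gridHit S T β) k)

lemma overSet_hitT {ω : Ω} (hω : ω ∈ overSet S T β γ k) : γ ≤ S (hitT S T β k ω) ω := by
  simp only [overSet, mem_iUnion, Finset.mem_range] at hω
  obtain ⟨i, hi, hfhit, hge⟩ := hω
  have hidx : hitIdx S T β k ω = i := by
    have hmem : i ∈ {j | β ≤ S (gp T k j) ω} := hfhit.1
    have h1 : sInf {j | β ≤ S (gp T k j) ω} ≤ i := Nat.sInf_le hmem
    rcases eq_or_lt_of_le h1 with h | h
    · exact h
    · exact absurd (Nat.sInf_mem ⟨i, hmem⟩ : β ≤ S (gp T k (sInf {j | β ≤ S (gp T k j) ω})) ω)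
        (not_le.mpr (hfhit.2 _ h))
  rw [hitT, hidx]
  exact hge

lemma dyHit_anti {β β' : ℝ} (h : β ≤ β') : dyHit S T β' ⊆ dyHit S T β := by
  refine iUnion_mono fun k => ?_
  rintro ω ⟨i, hi, hS⟩
  exact ⟨i, hi, h.trans hS⟩

lemma key_dy [IsProbabilityMeasure ℙ]
    (hAd : ∀ t ∈ Icc (0:ℝ) T, StronglyMeasurable[ℱ t] (S t))
    (hInt : ∀ t ∈ Icc (0:ℝ) T, Integrable (S t) ℙ)
    (hMart : ∀ s t : ℝ, s ∈ Icc (0:ℝ) T → t ∈ Icc (0:ℝ) T → s ≤ t → ℙ[S t|ℱ s] =ᵐ[ℙ] S s)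
    (hcont : ∀ ω, ContinuousOn (fun t => S t ω) (Icc (0:ℝ) T))
    (hinit : ∀ᵐ ω ∂ℙ, S 0 ω = s₀)
    (hT : 0 < T) (hs₀β : s₀ < β) (hβ : 0 < β) :
    ∫ ω in dyHit S T β, S T ω ∂ℙ = β * (ℙ (dyHit S T β)).toReal := by
  have hIntT : Integrable (S T) ℙ := hInt T ⟨hT.le, le_rfl⟩
  have hmg : ∀ k : ℕ, MeasurableSet (gridHit S T β k) := fun _ => measurableSet_gridHit hAd hT.le
  have hlim1 : Tendsto (fun k => ∫ ω in gridHit S T β k, S T ω ∂ℙ) atTop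
      (𝓝 (∫ ω in dyHit S T β, S T ω ∂ℙ)) :=
    tendsto_setIntegral_of_monotone hmg gridHit_mono hIntT.integrableOn
  have hlim2 : Tendsto (fun k => (ℙ (gridHit S T β k)).toReal) atTop
      (𝓝 ((ℙ (dyHit S T β)).toReal)) := by
    refine (ENNReal.tendsto_toReal (measure_ne_top ℙ _)).comp ?_
    exact tendsto_measure_iUnion_atTop gridHit_mono
  set I := ∫ ω in dyHit S T β, S T ω ∂ℙ with hI
  set p := (ℙ (dyHit S T β)).toReal with hp
  have hp0 : 0 ≤ p := ENNReal.toReal_nonneg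
  have hlow : β * p ≤ I := by
    refine le_of_tendsto_of_tendsto' (hlim2.const_mul β) hlim1 fun k => ?_
    exact grid_lower hAd hInt hMart hT k
  have hup : ∀ γ, β < γ → I ≤ γ * p := by
    intro γ hγβ
    have hγ0 : 0 ≤ γ := (hβ.trans hγβ).le
    -- overshoot integral tends to 0
    have hover0 : Tendsto (fun k => ∫ ω in overSet S T β γ k, S T ω ∂ℙ) atTop (𝓝 0) := by
      have hmo : ∀ k : ℕ, MeasurableSet (overSet S T β γ (k:ℕ)) :=
        fun _ => measurableSet_overSet hAd hT.le
      have heq : ∀ k : ℕ, ∫ ω in overSet S T β γ k, S T ω ∂ℙ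
          = ∫ ω, (overSet S T β γ k).indicator (S T) ω ∂ℙ :=
        fun k => (integral_indicator (hmo k)).symm
      simp only [heq]
      have h0 : (0:ℝ) = ∫ ω, (0:ℝ) ∂ℙ := by simp
      rw [h0]
      refine tendsto_integral_of_dominated_convergence (fun ω => |S T ω|)
        (fun k => hIntT.aestronglyMeasurable.indicator (hmo k)) hIntT.abs
        (fun k => Eventually.of_forall fun ω => ?_) ?_
      · have := norm_indicator_le_norm_self (S T) ω (s := overSet S T β γ k)
        simpa [Real.norm_eq_abs] using this
      · refine hinit.mono fun ω hω => ?_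
        by_cases hdy : ω ∈ dyHit S T β
        · have hkp := key_pointwise (S := S) hT (hcont ω) (hω ▸ hs₀β) hdy
          have hev : ∀ᶠ k in atTop, S (hitT S T β k ω) ω < γ :=
            hkp.eventually_lt_const hγβ
          refine Tendsto.congr' ?_ tendsto_const_nhds
          filter_upwards [hev] with k hk
          have : ω ∉ overSet S T β γ k := fun hmem => absurd (overSet_hitT hmem) (not_le.mpr hk)
          simp [indicator_of_notMem this]
        · refine Tendsto.congr' (Eventually.of_forall fun k => ?_) tendsto_const_nhds
          have : ω ∉ overSet S T β γ k := fun hmem => hdy (overSet_subset_dyHit hmem)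
          simp [indicator_of_notMem this]
    have : Tendsto (fun k => γ * (ℙ (gridHit S T β k)).toReal
        + ∫ ω in overSet S T β γ k, S T ω ∂ℙ) atTop (𝓝 (γ * p + 0)) :=
      (hlim2.const_mul γ).add hover0
    refine le_of_tendsto_of_tendsto' hlim1 (by simpa using this) fun k => ?_
    exact grid_upper hAd hInt hMart hT hγ0 k
  -- conclude I = β * p
  refine le_antisymm ?_ hlow
  by_contra hcon
  push_neg at hcon
  set Δ := I - β * p with hΔ
  have hΔ0 : 0 < Δ := by simp [hΔ]; linarith
  have hlt : β < β + Δ / (p + 1) := by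
    have : 0 < Δ / (p + 1) := by positivity
    linarith
  have hle := hup (β + Δ / (p + 1)) hlt
  have hq : Δ / (p + 1) * (p + 1) = Δ := div_mul_cancel₀ _ (by linarith)
  nlinarith [hle, hp0, hΔ0, hq]

end KeyLimit


section Key2

variable [mΩ : MeasurableSpace Ω] {ℙ : Measure Ω} {ℱ : Filtration ℝ mΩ}
  {S : ℝ → Ω → ℝ} {T β γ B s₀ : ℝ} {k : ℕ}

omit mΩ in
lemma exists_max' {f : ℝ → ℝ} {T : ℝ} (hT : 0 ≤ T) (hc : ContinuousOn f (Icc 0 T)) :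
    ∃ t ∈ Icc (0:ℝ) T, ∀ s ∈ Icc (0:ℝ) T, f s ≤ f t := by
  obtain ⟨t, ht, hmax⟩ := isCompact_Icc.exists_isMaxOn (nonempty_Icc.mpr hT) hc
  exact ⟨t, ht, fun s hs => hmax hs⟩

lemma key_main [IsProbabilityMeasure ℙ]
    (hAd : ∀ t ∈ Icc (0:ℝ) T, StronglyMeasurable[ℱ t] (S t))
    (hInt : ∀ t ∈ Icc (0:ℝ) T, Integrable (S t) ℙ)
    (hMart : ∀ s t : ℝ, s ∈ Icc (0:ℝ) T → t ∈ Icc (0:ℝ) T → s ≤ t → ℙ[S t|ℱ s] =ᵐ[ℙ] S s)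
    (hcont : ∀ ω, ContinuousOn (fun t => S t ω) (Icc (0:ℝ) T))
    (hinit : ∀ᵐ ω ∂ℙ, S 0 ω = s₀)
    (hT : 0 < T) (hs₀ : 0 < s₀) (hB : s₀ < B) :
    MeasurableSet {ω | ∃ t ∈ Icc (0:ℝ) T, B ≤ S t ω} ∧
    ∫ ω in {ω | ∃ t ∈ Icc (0:ℝ) T, B ≤ S t ω}, S T ω ∂ℙ
      = B * (ℙ {ω | ∃ t ∈ Icc (0:ℝ) T, B ≤ S t ω}).toReal := by
  have hIntT : Integrable (S T) ℙ := hInt T ⟨hT.le, le_rfl⟩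
  set β : ℕ → ℝ := fun n => B - (B - s₀) / (n + 2) with hβdef
  have hβs₀ : ∀ n, s₀ < β n := by
    intro n
    have hn2 : (1:ℝ) < (n:ℝ) + 2 := by
      have : (0:ℝ) ≤ (n:ℝ) := Nat.cast_nonneg n
      linarith
    have h1 : (B - s₀) / ((n:ℝ) + 2) < B - s₀ := div_lt_self (by linarith) hn2
    simp only [hβdef]; linarith
  have hβB : ∀ n, β n < B := by
    intro n
    have : 0 < (B - s₀) / ((n:ℝ) + 2) := div_pos (by linarith) (by positivity)
    simp only [hβdef]; linarith
  have hβmono : Monotone β := by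
    intro n m h
    simp only [hβdef]
    have hc : (n:ℝ) ≤ (m:ℝ) := Nat.cast_le.mpr h
    have : (B - s₀) / ((m:ℝ) + 2) ≤ (B - s₀) / ((n:ℝ) + 2) := by
      gcongr
    linarith
  have hβtend : Tendsto β atTop (𝓝 B) := by
    have h0 : Tendsto (fun n : ℕ => (B - s₀) / ((n:ℝ) + 2)) atTop (𝓝 0) := by
      apply Tendsto.div_atTop tendsto_const_nhds
      exact tendsto_atTop_add_const_right _ 2 tendsto_natCast_atTop_atTop
    have := (tendsto_const_nhds (x := B) (f := atTop (α := ℕ))).sub h0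
    simpa using this
  have hseteq : ⋂ n, dyHit S T (β n) = {ω | ∃ t ∈ Icc (0:ℝ) T, B ≤ S t ω} := by
    ext ω
    simp only [mem_iInter, mem_setOf_eq]
    constructor
    · intro h
      obtain ⟨t₁, ht₁, hmax⟩ := exists_max' hT.le (hcont ω)
      have hall : ∀ n, β n ≤ S t₁ ω := by
        intro n
        obtain ⟨k, i, hik, hS⟩ := mem_iUnion.mp (h n)
        exact hS.trans (hmax _ (gp_mem hT.le hik))
      exact ⟨t₁, ht₁, le_of_tendsto hβtend (Eventually.of_forall hall)⟩
    · intro h n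
      exact hitEvent_subset_dyHit hT (hcont ω) (hβB n) h
  have hmeasdy : ∀ n : ℕ, MeasurableSet (dyHit S T (β n)) :=
    fun _ => measurableSet_dyHit hAd hT.le
  have hmeas : MeasurableSet {ω | ∃ t ∈ Icc (0:ℝ) T, B ≤ S t ω} := by
    rw [← hseteq]; exact MeasurableSet.iInter hmeasdy
  have hanti : Antitone (fun n => dyHit S T (β n)) := fun n m h => dyHit_anti (hβmono h)
  refine ⟨hmeas, ?_⟩
  have hlimI : Tendsto (fun n => ∫ ω in dyHit S T (β n), S T ω ∂ℙ) atTop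
      (𝓝 (∫ ω in {ω | ∃ t ∈ Icc (0:ℝ) T, B ≤ S t ω}, S T ω ∂ℙ)) := by
    have := tendsto_setIntegral_of_antitone hmeasdy hanti ⟨0, hIntT.integrableOn⟩
    rwa [hseteq] at this
  have hlimP : Tendsto (fun n => (ℙ (dyHit S T (β n))).toReal) atTop
      (𝓝 ((ℙ {ω | ∃ t ∈ Icc (0:ℝ) T, B ≤ S t ω}).toReal)) := by
    have h1 : Tendsto (fun n => ℙ (dyHit S T (β n))) atTop
        (𝓝 (ℙ (⋂ n, dyHit S T (β n)))) := by
      refine tendsto_measure_iInter_atTop (fun n => (hmeasdy n).nullMeasurableSet) hanti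
        ⟨0, measure_ne_top ℙ _⟩
    rw [hseteq] at h1
    exact (ENNReal.tendsto_toReal (measure_ne_top ℙ _)).comp h1
  have heach : ∀ n, ∫ ω in dyHit S T (β n), S T ω ∂ℙ = β n * (ℙ (dyHit S T (β n))).toReal :=
    fun n => key_dy hAd hInt hMart hcont hinit hT (hβs₀ n) (hs₀.trans (hβs₀ n))
  have hlim2 : Tendsto (fun n => β n * (ℙ (dyHit S T (β n))).toReal) atTop
      (𝓝 (B * (ℙ {ω | ∃ t ∈ Icc (0:ℝ) T, B ≤ S t ω}).toReal)) := hβtend.mul hlimP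
  exact tendsto_nhds_unique (hlimI.congr fun n => heach n) hlim2

omit mΩ in
lemma runMax_set_eq (hT : 0 ≤ T) (hcont : ∀ ω, ContinuousOn (fun t => S t ω) (Icc (0:ℝ) T)) :
    {ω | B ≤ runMax S T ω} = {ω | ∃ t ∈ Icc (0:ℝ) T, B ≤ S t ω} := by
  ext ω
  obtain ⟨t₁, ht₁, hmax⟩ := exists_max' hT (hcont ω)
  have hrm : runMax S T ω = S t₁ ω := by
    haveI : Nonempty (Icc (0:ℝ) T) := ⟨⟨0, le_refl 0, hT⟩⟩
    refine le_antisymm (ciSup_le fun t => hmax t t.2) ?_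
    exact le_ciSup ⟨S t₁ ω, by rintro _ ⟨t, rfl⟩; exact hmax t t.2⟩ (⟨t₁, ht₁⟩ : Icc (0:ℝ) T)
  simp only [mem_setOf_eq, hrm]
  exact ⟨fun h => ⟨t₁, ht₁, h⟩, fun ⟨t, ht, h⟩ => h.trans (hmax t ht)⟩

end Key2


section CallFn

variable [mΩ : MeasurableSpace Ω] {ℙ : Measure Ω} {X : Ω → ℝ} {C : Set Ω} {B r x : ℝ}

/-- restricted call function -/
def cf (ℙ : Measure Ω) (X : Ω → ℝ) (C : Set Ω) (x : ℝ) : ℝ :=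
  ∫ ω in C, max (X ω - x) 0 ∂ℙ

lemma integrable_callInt (hX : Integrable X ℙ) [IsFiniteMeasure ℙ] (x : ℝ) :
    Integrable (fun ω => max (X ω - x) 0) ℙ :=
  (hX.sub (integrable_const x)).pos_part

omit mΩ in
lemma max_sub_convex_ineq {c x y a b : ℝ} (ha : 0 ≤ a) (hb : 0 ≤ b) (hab : a + b = 1) :
    max (c - (a * x + b * y)) 0 ≤ a * max (c - x) 0 + b * max (c - y) 0 := by
  have h1 := le_max_left (c - x) 0
  have h2 := le_max_right (c - x) 0
  have h3 := le_max_left (c - y) 0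
  have h4 := le_max_right (c - y) 0
  have hc : a * c + b * c = c := by rw [← add_mul, hab, one_mul]
  refine max_le ?_ (by nlinarith)
  have e1 : a * (c - x) ≤ a * max (c - x) 0 := mul_le_mul_of_nonneg_left h1 ha
  have e2 : b * (c - y) ≤ b * max (c - y) 0 := mul_le_mul_of_nonneg_left h3 hb
  nlinarith [e1, e2]

lemma convexOn_cf (hX : Integrable X ℙ) [IsFiniteMeasure ℙ] (hC : MeasurableSet C) :
    ConvexOn ℝ univ (cf ℙ X C) := by
  refine ⟨convex_univ, fun x _ y _ a b ha hb hab => ?_⟩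
  simp only [smul_eq_mul]
  have hint : ∀ z : ℝ, IntegrableOn (fun ω => max (X ω - z) 0) C ℙ :=
    fun z => (integrable_callInt hX z).integrableOn
  calc cf ℙ X C (a * x + b * y)
      ≤ ∫ ω in C, (a * max (X ω - x) 0 + b * max (X ω - y) 0) ∂ℙ := by
        refine setIntegral_mono_on ((integrable_callInt hX _).integrableOn)
          (((hint x).const_mul a).add ((hint y).const_mul b)) hC fun ω _ => ?_
        exact max_sub_convex_ineq ha hb hab
    _ = a * cf ℙ X C x + b * cf ℙ X C y := by
        rw [integral_add ((hint x).const_mul a) ((hint y).const_mul b),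
          integral_const_mul, integral_const_mul]
        rfl

omit mΩ in
lemma max_sub_anti {c : ℝ} : Antitone (fun x : ℝ => max (c - x) 0) := by
  intro x y h
  exact max_le_max (by linarith) le_rfl

lemma cf_anti (hX : Integrable X ℙ) [IsFiniteMeasure ℙ] : Antitone (cf ℙ X C) := by
  intro x y h
  refine setIntegral_mono ((integrable_callInt hX y).integrableOn)
    ((integrable_callInt hX x).integrableOn) fun ω => ?_
  exact max_sub_anti h

lemma cf_nonneg : 0 ≤ cf ℙ X C x :=
  integral_nonneg fun ω => le_max_right _ _

end CallFn


section CallDeriv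

variable [mΩ : MeasurableSpace Ω] {ℙ : Measure Ω} {X : Ω → ℝ} {C : Set Ω} {B r x : ℝ}

lemma cf_eq_zero (hC : MeasurableSet C) (hCb : ∀ ω ∈ C, X ω < B) (hx : B ≤ x) :
    cf ℙ X C x = 0 := by
  unfold cf
  rw [setIntegral_congr_fun hC (g := fun _ => (0:ℝ))
    (fun ω hω => max_eq_right (by linarith [hCb ω hω]))]
  simp

lemma cf_zero_eq (hC : MeasurableSet C) (hpos : ∀ᵐ ω ∂ℙ, 0 ≤ X ω) :
    cf ℙ X C 0 = ∫ ω in C, X ω ∂ℙ := by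
  refine setIntegral_congr_ae hC (hpos.mono fun ω h _ => ?_)
  rw [sub_zero, max_eq_left h]

lemma cf_deriv_zero [IsProbabilityMeasure ℙ] (hX : Integrable X ℙ) (hC : MeasurableSet C)
    (hpos : ∀ᵐ ω ∂ℙ, 0 < X ω) :
    HasDerivWithinAt (cf ℙ X C) (-(ℙ C).toReal) (Ioi 0) 0 := by
  rw [hasDerivWithinAt_iff_tendsto_slope,
    show (Ioi (0:ℝ)) \ {0} = Ioi 0 from diff_singleton_eq_self (by simp)]
  have hDCT : Tendsto (fun x : ℝ => ∫ ω in C, (max (X ω - x) 0 - max (X ω - 0) 0) / x ∂ℙ)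
      (𝓝[Ioi (0:ℝ)] 0) (𝓝 (∫ ω in C, (-1 : ℝ) ∂ℙ)) := by
    refine tendsto_integral_filter_of_dominated_convergence (fun _ => (1:ℝ)) ?_ ?_
      (integrable_const 1) ?_
    · refine Eventually.of_forall fun y => ?_
      exact ((((hX.sub (integrable_const y)).pos_part.sub
        (hX.sub (integrable_const 0)).pos_part).div_const y).aestronglyMeasurable).restrict
    · filter_upwards [self_mem_nhdsWithin] with y hy
      refine ae_of_all _ fun ω => ?_
      have hy0 : (0:ℝ) < y := hy
      have habs : |max (X ω - y) 0 - max (X ω - 0) 0| ≤ |X ω - y - (X ω - 0)| :=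
        abs_max_sub_max_le_abs _ _ _
      have : |X ω - y - (X ω - 0)| = y := by
        rw [show X ω - y - (X ω - 0) = -y by ring, abs_neg, abs_of_pos hy0]
      rw [Real.norm_eq_abs, abs_div, abs_of_pos hy0]
      rw [this] at habs
      exact div_le_one_of_le₀ habs hy0.le
    · refine (ae_restrict_of_ae hpos).mono fun ω hω => ?_
      have hev : ∀ᶠ y in 𝓝[Ioi (0:ℝ)] 0, (max (X ω - y) 0 - max (X ω - 0) 0) / y = -1 := by
        filter_upwards [Ioo_mem_nhdsGT_of_mem ⟨le_rfl, hω⟩] with y hy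
        rw [max_eq_left (by linarith [hy.2] : (0:ℝ) ≤ X ω - y),
          max_eq_left (by linarith [hω] : (0:ℝ) ≤ X ω - 0)]
        have hx : X ω - y - (X ω - 0) = -y := by ring
        rw [hx, neg_div, div_self (ne_of_gt hy.1)]
      exact Tendsto.congr' (hev.mono fun y h => h.symm) tendsto_const_nhds
  have hconst : ∫ ω in C, (-1 : ℝ) ∂ℙ = -(ℙ C).toReal := by
    rw [setIntegral_const]; simp [Measure.real]
  rw [hconst] at hDCT
  refine hDCT.congr' ?_
  filter_upwards [self_mem_nhdsWithin] with y hy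
  have hy0 : (0:ℝ) < y := hy
  unfold cf
  rw [slope_def_field, sub_zero,
    ← integral_sub ((integrable_callInt hX y).integrableOn)
      ((integrable_callInt hX 0).integrableOn), ← integral_div]

lemma cf_deriv_left [IsProbabilityMeasure ℙ] (hX : Integrable X ℙ) (hC : MeasurableSet C)
    (hCb : ∀ ω ∈ C, X ω < B) :
    HasDerivWithinAt (cf ℙ X C) 0 (Iio B) B := by
  rw [hasDerivWithinAt_iff_tendsto_slope,
    show (Iio B) \ {B} = Iio B from diff_singleton_eq_self (by simp)]
  have hcfB : cf ℙ X C B = 0 := cf_eq_zero hC hCb le_rfl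
  have hDCT : Tendsto (fun x : ℝ => ∫ ω in C, max (X ω - x) 0 / (x - B) ∂ℙ)
      (𝓝[Iio B] B) (𝓝 (∫ ω in C, (0 : ℝ) ∂ℙ)) := by
    refine tendsto_integral_filter_of_dominated_convergence (fun _ => (1:ℝ)) ?_ ?_
      (integrable_const 1) ?_
    · refine Eventually.of_forall fun y => ?_
      exact (((hX.sub (integrable_const y)).pos_part.div_const (y - B)).aestronglyMeasurable).restrict
    · filter_upwards [self_mem_nhdsWithin] with y hy
      filter_upwards [ae_restrict_mem hC] with ω hω
      have hyB : y < B := hy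
      rw [Real.norm_eq_abs, abs_div, abs_of_neg (by linarith : y - B < 0)]
      rw [abs_of_nonneg (le_max_right _ _)]
      refine div_le_one_of_le₀ ?_ (by linarith)
      refine max_le (by linarith [hCb ω hω]) (by linarith)
    · filter_upwards [ae_restrict_mem hC] with ω hω
      have hev : ∀ᶠ y in 𝓝[Iio B] B, max (X ω - y) 0 / (y - B) = 0 := by
        have hmlt : max (X ω) (B - 1) < B := max_lt (hCb ω hω) (by linarith)
        filter_upwards [Ioo_mem_nhdsLT_of_mem ⟨hmlt, le_rfl⟩] with y hy
        rw [max_eq_right (by linarith [hy.1, le_max_left (X ω) (B - 1)] : X ω - y ≤ 0)]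
        simp
      exact Tendsto.congr' (hev.mono fun y h => h.symm) tendsto_const_nhds
  simp only [integral_zero] at hDCT
  refine hDCT.congr' ?_
  filter_upwards [self_mem_nhdsWithin] with y hy
  rw [slope_def_field, hcfB, sub_zero]
  unfold cf
  rw [← integral_div]

omit mΩ in
lemma barrier_deriv_zero {r c : ℝ} (hc : 0 < c) :
    HasDerivWithinAt (fun x : ℝ => r * max (c - x) 0) (-r) (Ioi 0) 0 := by
  have h1 : HasDerivAt (fun x : ℝ => r * (c - x)) (-r) 0 := by
    have := ((hasDerivAt_id (0:ℝ)).const_sub c).const_mul r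
    simpa using this
  have h2 : (fun x : ℝ => r * max (c - x) 0) =ᶠ[𝓝 (0:ℝ)] (fun x => r * (c - x)) := by
    filter_upwards [Iio_mem_nhds hc] with x hx
    have hxc : x < c := hx
    rw [max_eq_left (by linarith : (0:ℝ) ≤ c - x)]
  exact (h1.congr_of_eventuallyEq h2).hasDerivWithinAt

omit mΩ in
lemma barrier_deriv_left {r c : ℝ} :
    HasDerivWithinAt (fun x : ℝ => r * max (c - x) 0) (-r) (Iio c) c := by
  have h1 : HasDerivAt (fun x : ℝ => r * (c - x)) (-r) c := by
    have := ((hasDerivAt_id c).const_sub c).const_mul r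
    simpa using this
  refine (h1.hasDerivWithinAt).congr ?_ ?_
  · intro x hx
    rw [max_eq_left (by linarith [mem_Iio.mp hx] : (0:ℝ) ≤ c - x)]
  · simp

end CallDeriv


section FinalHelpers

variable [mΩ : MeasurableSpace Ω] {ℙ : Measure Ω} {X : Ω → ℝ} {C C₁ D : Set Ω} {x : ℝ}

omit mΩ in
lemma convexOn_barrier {r c : ℝ} (hr : 0 ≤ r) :
    ConvexOn ℝ univ (fun x : ℝ => r * max (c - x) 0) := by
  refine ⟨convex_univ, fun x _ y _ a b ha hb hab => ?_⟩
  simp only [smul_eq_mul]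
  have h := max_sub_convex_ineq (c := c) (x := x) (y := y) ha hb hab
  calc r * max (c - (a * x + b * y)) 0 ≤ r * (a * max (c - x) 0 + b * max (c - y) 0) :=
        mul_le_mul_of_nonneg_left h hr
    _ = a * (r * max (c - x) 0) + b * (r * max (c - y) 0) := by ring

lemma cf_split (hX : Integrable X ℙ) [IsFiniteMeasure ℙ] (h₁ : MeasurableSet C₁)
    (hD : MeasurableSet D) (hdisj : Disjoint C₁ D) :
    cf ℙ X (C₁ ∪ D) x = cf ℙ X C₁ x + cf ℙ X D x := by
  unfold cf
  exact setIntegral_union hdisj hD (integrable_callInt hX x).integrableOn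
    (integrable_callInt hX x).integrableOn

lemma cf_univ_split (hX : Integrable X ℙ) [IsFiniteMeasure ℙ] (hC : MeasurableSet C) :
    cf ℙ X univ x = cf ℙ X Cᶜ x + cf ℙ X C x := by
  unfold cf
  rw [setIntegral_univ, ← integral_add_compl hC (integrable_callInt hX x), add_comm]

lemma step_nonneg [IsProbabilityMeasure ℙ] (hX : Integrable X ℙ)
    (hD : MeasurableSet D) {B₁ B₂ p₁ p₂ x : ℝ}
    (hB₁₂ : B₁ ≤ B₂)
    (hID : ∫ ω in D, X ω ∂ℙ = B₁ * p₁ - B₂ * p₂)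
    (hPD : (ℙ D).toReal = p₁ - p₂) (hp₂ : 0 ≤ p₂) :
    0 ≤ (cf ℙ X D x) + p₂ * max (B₂ - x) 0 - p₁ * max (B₁ - x) 0 := by
  rcases le_or_gt B₁ x with h | h
  · have h1 : max (B₁ - x) 0 = 0 := max_eq_right (by linarith)
    rw [h1]
    have h2 : (0:ℝ) ≤ cf ℙ X D x := cf_nonneg
    have h3 : (0:ℝ) ≤ p₂ * max (B₂ - x) 0 := mul_nonneg hp₂ (le_max_right _ _)
    linarith
  · have h1 : max (B₁ - x) 0 = B₁ - x := max_eq_left (by linarith)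
    have h2 : max (B₂ - x) 0 = B₂ - x := max_eq_left (by linarith)
    have h3 : ∫ ω in D, (X ω - x) ∂ℙ ≤ cf ℙ X D x := by
      refine setIntegral_mono (hX.integrableOn.sub ((integrableOn_const_iff (C := x)).mpr
        (Or.inr (measure_lt_top ℙ D)))) (integrable_callInt hX x).integrableOn fun ω => ?_
      exact le_max_left _ _
    have h4 : ∫ ω in D, (X ω - x) ∂ℙ = (B₁ * p₁ - B₂ * p₂) - x * (p₁ - p₂) := by
      rw [integral_sub hX.integrableOn ((integrableOn_const_iff (C := x)).mpr (Or.inr (measure_lt_top ℙ D))),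
        setIntegral_const, measureReal_def, hID, hPD]
      simp [smul_eq_mul]; ring
    rw [h1, h2]
    nlinarith [h3, h4]

end FinalHelpers

end Stmt0Aux

open Stmt0Aux

/-- necessity direction of the one-maturity characterization.
If a market model exists for the given call and barrier prices, then there is a
probability measure `μ` on `(0,∞)` with mean `s₀` interpolating the call prices, and a
decomposition `𝔠^{B₁} ≤ … ≤ 𝔠^{B_m} ≤ 𝔠^{B_{m+1}} = c_μ` satisfying conditions (a)–(e). -/
theorem stmt_0 (T s₀ : ℝ) (hT : 0 < T) (hs₀ : 0 < s₀)
    (n m : ℕ) (K c B b : ℕ → ℝ)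
    (hK : ∀ i, 1 ≤ i → i ≤ n → 0 < K i)
    (hKmono : ∀ i, 1 ≤ i → i < n → K i < K (i + 1))
    (hB1 : s₀ < B 1)
    (hBmono : ∀ j, 1 ≤ j → j < m → B j < B (j + 1))
    (hb : ∀ j, 1 ≤ j → j ≤ m → b j ∈ Icc (0:ℝ) 1)
    (hmodel : ∃ (Ω : Type) (mΩ : MeasurableSpace Ω) (ℙ : @Measure Ω mΩ)
      (ℱ : Filtration ℝ mΩ) (S : ℝ → Ω → ℝ),
      @IsMarketModel Ω mΩ ℙ ℱ S s₀ T n m K c B b) :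
    ∃ μ : Measure ℝ, IsProbabilityMeasure μ ∧ μ (Iic 0) = 0 ∧ (∫ y, y ∂μ) = s₀ ∧
      (∀ i, 1 ≤ i → i ≤ n → (∫ y, max (y - K i) 0 ∂μ) = c i) ∧
      ∃ 𝔠 : ℕ → ℝ → ℝ,
        (∀ x : ℝ, 0 ≤ x → 𝔠 (m + 1) x = ∫ y, max (y - x) 0 ∂μ) ∧
        ∀ j, 1 ≤ j → j ≤ m →
          ConvexOn ℝ (Ici 0) (𝔠 j) ∧
          (∀ x : ℝ, 0 ≤ x → 𝔠 j x ∈ Icc 0 s₀) ∧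
          (∀ x : ℝ, 0 ≤ x → 0 ≤ 𝔠 1 x ∧ 𝔠 j x ≤ 𝔠 (j + 1) x) ∧
          HasDerivWithinAt (𝔠 j) (-1) (Ioi 0) 0 ∧
          𝔠 j 0 = s₀ ∧
          (∀ x : ℝ, B j ≤ x → 𝔠 j x = 0) ∧
          HasDerivWithinAt (𝔠 j) (-(b j)) (Iio (B j)) (B j) ∧
          ConvexOn ℝ (Ici 0) (fun x => 𝔠 (j + 1) x - 𝔠 j x + b j * max (B j - x) 0) := by
  obtain ⟨Ω, mΩ, ℙ, ℱ, S, hPM, hM, hcall, hbar⟩ := hmodel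
  haveI : IsProbabilityMeasure ℙ := hPM
  obtain ⟨hAd, hInt, hMart, hcont, hpos, hinit⟩ := hM
  have hTmem : T ∈ Icc (0:ℝ) T := ⟨hT.le, le_rfl⟩
  have hST : Measurable (S T) := meas_S hAd hTmem
  have hIntT : Integrable (S T) ℙ := hInt T hTmem
  have hposT : ∀ᵐ ω ∂ℙ, 0 < S T ω := hpos T hTmem
  have hmean : ∫ ω, S T ω ∂ℙ = s₀ := by
    have h0mem : (0:ℝ) ∈ Icc (0:ℝ) T := ⟨le_rfl, hT.le⟩
    have h1 : ∫ ω, (ℙ[S T|ℱ 0]) ω ∂ℙ = ∫ ω, S T ω ∂ℙ := integral_condExp (ℱ.le 0)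
    have h2 : ∫ ω, (ℙ[S T|ℱ 0]) ω ∂ℙ = ∫ ω, S 0 ω ∂ℙ :=
      integral_congr_ae (hMart 0 T h0mem hTmem hT.le)
    have h3 : ∫ ω, S 0 ω ∂ℙ = s₀ := by
      rw [integral_congr_ae hinit]; simp
    rw [← h1, h2, h3]
  set μ : Measure ℝ := Measure.map (S T) ℙ with hμdef
  have hμprob : IsProbabilityMeasure μ := Measure.isProbabilityMeasure_map hST.aemeasurable
  have hμIic : μ (Iic 0) = 0 := by
    rw [hμdef, Measure.map_apply hST measurableSet_Iic]
    have h0 : ℙ {ω | ¬ (0 < S T ω)} = 0 := by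
      have := hposT
      rwa [ae_iff] at this
    refine le_antisymm (le_trans (measure_mono ?_) h0.le) zero_le
    intro ω hω
    simpa using not_lt.mpr (hω : S T ω ≤ 0)
  have hμmean : ∫ y, y ∂μ = s₀ := by
    rw [hμdef, ← hmean]
    exact integral_map hST.aemeasurable aestronglyMeasurable_id
  have hμcall : ∀ x : ℝ, ∫ y, max (y - x) 0 ∂μ = ∫ ω, max (S T ω - x) 0 ∂ℙ := by
    intro x
    rw [hμdef]
    exact integral_map hST.aemeasurable
      ((continuous_id.sub continuous_const).max continuous_const).aestronglyMeasurable
  refine ⟨μ, hμprob, hμIic, hμmean, fun i h1 h2 => by rw [hμcall]; exact hcall i h1 h2, ?_⟩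
  -- barrier part
  set A : ℕ → Set Ω := fun j => {ω | ∃ t ∈ Icc (0:ℝ) T, B j ≤ S t ω} with hAdef
  have hBgt : ∀ j, 1 ≤ j → j ≤ m → s₀ < B j := by
    intro j h1 h2
    induction j with
    | zero => omega
    | succ q ih =>
      rcases Nat.lt_or_ge 1 (q + 1) with h | h
      · have hq1 : 1 ≤ q := by omega
        exact lt_trans (ih hq1 (by omega)) (hBmono q hq1 (by omega))
      · have hq : q + 1 = 1 := by omega
        rw [hq]; exact hB1
  have hkey : ∀ j, 1 ≤ j → j ≤ m → MeasurableSet (A j) ∧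
      ∫ ω in A j, S T ω ∂ℙ = B j * (ℙ (A j)).toReal :=
    fun j h1 h2 => key_main hAd hInt hMart hcont hinit hT hs₀ (hBgt j h1 h2)
  have hbj : ∀ j, 1 ≤ j → j ≤ m → b j = (ℙ (A j)).toReal := by
    intro j h1 h2
    rw [← hbar j h1 h2]
    congr 1
    exact congrArg ℙ (runMax_set_eq hT.le hcont)
  have hbj0 : ∀ j, 1 ≤ j → j ≤ m → 0 ≤ b j := by
    intro j h1 h2; rw [hbj j h1 h2]; exact ENNReal.toReal_nonneg
  have hB0 : ∀ j, 1 ≤ j → j ≤ m → 0 < B j := fun j h1 h2 => hs₀.trans (hBgt j h1 h2)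
  have hSTlt : ∀ j, ∀ ω ∈ (A j)ᶜ, S T ω < B j := by
    intro j ω hω
    by_contra h
    exact hω ⟨T, hTmem, not_lt.mp h⟩
  have hAsub : ∀ j, 1 ≤ j → j < m → A (j + 1) ⊆ A j := by
    rintro j h1 h2 ω ⟨t, ht, hSB⟩
    exact ⟨t, ht, (hBmono j h1 h2).le.trans hSB⟩
  set 𝔠 : ℕ → ℝ → ℝ := fun j x =>
    if j ≤ m then cf ℙ (S T) ((A j)ᶜ) x + b j * max (B j - x) 0
    else cf ℙ (S T) univ x with h𝔠def
  have hcj : ∀ j, j ≤ m → 𝔠 j = fun x => cf ℙ (S T) ((A j)ᶜ) x + b j * max (B j - x) 0 := by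
    intro j hj; funext x; simp only [h𝔠def, if_pos hj]
  have hcm1 : 𝔠 (m + 1) = fun x => cf ℙ (S T) univ x := by
    funext x; simp only [h𝔠def, if_neg (by omega : ¬ (m + 1 ≤ m))]
  have hcm1' : ∀ x : ℝ, 𝔠 (m + 1) x = ∫ y, max (y - x) 0 ∂μ := by
    intro x
    rw [hcm1, hμcall x]
    show ∫ ω in univ, max (S T ω - x) 0 ∂ℙ = _
    rw [setIntegral_univ]
  refine ⟨𝔠, fun x _ => hcm1' x, ?_⟩
  intro j hj1 hjm
  have hAj : MeasurableSet (A j) := (hkey j hj1 hjm).1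
  have hIAj : ∫ ω in A j, S T ω ∂ℙ = B j * (ℙ (A j)).toReal := (hkey j hj1 hjm).2
  have hbjP : b j = (ℙ (A j)).toReal := hbj j hj1 hjm
  have hbj0' : 0 ≤ b j := hbj0 j hj1 hjm
  have hBj0 : 0 < B j := hB0 j hj1 hjm
  -- value at 0
  have h𝔠0 : 𝔠 j 0 = s₀ := by
    rw [hcj j hjm]
    show cf ℙ (S T) ((A j)ᶜ) 0 + b j * max (B j - 0) 0 = s₀
    rw [cf_zero_eq hAj.compl (hposT.mono fun ω h => h.le)]
    have hsplit : ∫ ω in A j, S T ω ∂ℙ + ∫ ω in (A j)ᶜ, S T ω ∂ℙ = ∫ ω, S T ω ∂ℙ :=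
      integral_add_compl hAj hIntT
    rw [sub_zero, max_eq_left hBj0.le, hbjP]
    rw [hmean] at hsplit
    rw [hIAj] at hsplit
    linarith
  -- vanishing beyond the barrier
  have h𝔠B : ∀ x : ℝ, B j ≤ x → 𝔠 j x = 0 := by
    intro x hx
    rw [hcj j hjm]
    show cf ℙ (S T) ((A j)ᶜ) x + b j * max (B j - x) 0 = 0
    rw [cf_eq_zero hAj.compl (hSTlt j) hx, max_eq_right (by linarith), mul_zero, add_zero]
  -- convexity
  have hconv : ConvexOn ℝ (Ici 0) (𝔠 j) := by
    rw [hcj j hjm]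
    exact ((convexOn_cf hIntT hAj.compl).add (convexOn_barrier hbj0')).subset
      (subset_univ _) (convex_Ici 0)
  -- range
  have hrange : ∀ x : ℝ, 0 ≤ x → 𝔠 j x ∈ Icc 0 s₀ := by
    intro x hx
    constructor
    · rw [hcj j hjm]
      exact add_nonneg cf_nonneg (mul_nonneg hbj0' (le_max_right _ _))
    · rw [← h𝔠0, hcj j hjm]
      exact add_le_add (cf_anti hIntT hx) (mul_le_mul_of_nonneg_left (max_sub_anti hx) hbj0')
  -- derivative at 0
  have hderiv0 : HasDerivWithinAt (𝔠 j) (-1) (Ioi 0) 0 := by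
    rw [hcj j hjm]
    have hd1 := cf_deriv_zero (ℙ := ℙ) hIntT hAj.compl hposT
    have hd2 := barrier_deriv_zero (r := b j) hBj0
    have hsum := hd1.add hd2
    have hcompl : (ℙ (A j)ᶜ).toReal = 1 - (ℙ (A j)).toReal := by
      rw [prob_compl_eq_one_sub hAj,
        ENNReal.toReal_sub_of_le prob_le_one ENNReal.one_ne_top, ENNReal.toReal_one]
    refine hsum.congr_deriv ?_
    rw [hcompl, hbjP]
    ring
  -- derivative at B j
  have hderivB : HasDerivWithinAt (𝔠 j) (-(b j)) (Iio (B j)) (B j) := by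
    rw [hcj j hjm]
    have hd1 := cf_deriv_left (ℙ := ℙ) (B := B j) hIntT hAj.compl (hSTlt j)
    have hd2 := barrier_deriv_left (r := b j) (c := B j)
    have hsum := hd1.add hd2
    refine hsum.congr_deriv ?_
    ring
  -- monotone step and convexity of the step, by cases
  rcases Nat.lt_or_ge j m with hjlt | hjge
  · -- j < m
    have hj1m : j + 1 ≤ m := hjlt
    have hAj1 : MeasurableSet (A (j + 1)) := (hkey (j + 1) (by omega) hj1m).1
    have hIAj1 : ∫ ω in A (j + 1), S T ω ∂ℙ = B (j + 1) * (ℙ (A (j + 1))).toReal :=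
      (hkey (j + 1) (by omega) hj1m).2
    have hbj1P : b (j + 1) = (ℙ (A (j + 1))).toReal := hbj (j + 1) (by omega) hj1m
    have hbj10 : 0 ≤ b (j + 1) := hbj0 (j + 1) (by omega) hj1m
    have hsub : A (j + 1) ⊆ A j := hAsub j hj1 hjlt
    set D : Set Ω := A j \ A (j + 1) with hDdef
    have hD : MeasurableSet D := hAj.diff hAj1
    have hcomplsplit : (A (j + 1))ᶜ = (A j)ᶜ ∪ D := by
      ext ω
      simp only [hDdef, mem_compl_iff, mem_union, mem_diff]
      constructor
      · intro h2
        by_cases h1 : ω ∈ A j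
        · exact Or.inr ⟨h1, h2⟩
        · exact Or.inl h1
      · rintro (h1 | ⟨h1, h2⟩)
        · exact fun hh => h1 (hsub hh)
        · exact h2
    have hdisj : Disjoint ((A j)ᶜ) D := disjoint_compl_left.mono_right diff_subset
    have hcfsplit : ∀ x : ℝ, cf ℙ (S T) ((A (j + 1))ᶜ) x
        = cf ℙ (S T) ((A j)ᶜ) x + cf ℙ (S T) D x := by
      intro x; rw [hcomplsplit]; exact cf_split hIntT hAj.compl hD hdisj
    have hPD : (ℙ D).toReal = (ℙ (A j)).toReal - (ℙ (A (j + 1))).toReal := by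
      rw [hDdef, measure_diff hsub hAj1.nullMeasurableSet (measure_ne_top ℙ _),
        ENNReal.toReal_sub_of_le (measure_mono hsub) (measure_ne_top ℙ _)]
    have hID : ∫ ω in D, S T ω ∂ℙ
        = B j * (ℙ (A j)).toReal - B (j + 1) * (ℙ (A (j + 1))).toReal := by
      rw [hDdef, integral_diff hAj1 hIntT.integrableOn hsub, hIAj, hIAj1]
    have hstep : ∀ x : ℝ, 0 ≤ cf ℙ (S T) D x
        + b (j + 1) * max (B (j + 1) - x) 0 - b j * max (B j - x) 0 := by
      intro x
      refine step_nonneg hIntT hD (hBmono j hj1 hjlt).le ?_ ?_ hbj10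
      · rw [hID, hbjP, hbj1P]
      · rw [hPD, hbjP, hbj1P]
    have hdiffeq : ∀ x : ℝ, 𝔠 (j + 1) x - 𝔠 j x + b j * max (B j - x) 0
        = cf ℙ (S T) D x + b (j + 1) * max (B (j + 1) - x) 0 := by
      intro x
      rw [hcj (j + 1) hj1m, hcj j hjm]
      simp only []
      rw [hcfsplit x]
      ring
    refine ⟨hconv, hrange, fun x hx => ⟨?_, ?_⟩, hderiv0, h𝔠0, h𝔠B, hderivB, ?_⟩
    · -- 0 ≤ 𝔠 1 x
      rw [hcj 1 (by omega)]
      exact add_nonneg cf_nonneg (mul_nonneg (hbj0 1 (by omega) (by omega)) (le_max_right _ _))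
    · -- 𝔠 j x ≤ 𝔠 (j+1) x
      have h1 := hstep x
      have h2 := hdiffeq x
      linarith
    · -- convexity of the step
      have : (fun x => 𝔠 (j + 1) x - 𝔠 j x + b j * max (B j - x) 0)
          = fun x => cf ℙ (S T) D x + b (j + 1) * max (B (j + 1) - x) 0 := by
        funext x; exact hdiffeq x
      rw [this]
      exact ((convexOn_cf hIntT hD).add (convexOn_barrier hbj10)).subset
        (subset_univ _) (convex_Ici 0)
  · -- j = m
    have hjeq : j = m := le_antisymm hjm hjge
    have huniv : ∀ x : ℝ, cf ℙ (S T) univ x = cf ℙ (S T) ((A j)ᶜ) x + cf ℙ (S T) (A j) x :=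
      fun x => cf_univ_split hIntT hAj
    have hstep : ∀ x : ℝ, 0 ≤ cf ℙ (S T) (A j) x
        + 0 * max (B j - x) 0 - b j * max (B j - x) 0 := by
      intro x
      refine step_nonneg hIntT hAj le_rfl ?_ ?_ le_rfl
      · rw [hIAj, hbjP]; ring
      · rw [hbjP]; ring
    have hdiffeq : ∀ x : ℝ, 𝔠 (j + 1) x - 𝔠 j x + b j * max (B j - x) 0
        = cf ℙ (S T) (A j) x := by
      intro x
      rw [show j + 1 = m + 1 from by omega, hcm1, hcj j hjm]
      simp only []
      rw [huniv x]
      ring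
    refine ⟨hconv, hrange, fun x hx => ⟨?_, ?_⟩, hderiv0, h𝔠0, h𝔠B, hderivB, ?_⟩
    · rw [hcj 1 (by omega)]
      exact add_nonneg cf_nonneg (mul_nonneg (hbj0 1 (by omega) (by omega)) (le_max_right _ _))
    · have h1 := hstep x
      have h2 := hdiffeq x
      linarith
    · have : (fun x => 𝔠 (j + 1) x - 𝔠 j x + b j * max (B j - x) 0)
          = fun x => cf ℙ (S T) (A j) x := by
        funext x; exact hdiffeq x
      rw [this]
      exact (convexOn_cf hIntT hAj).subset (subset_univ _) (convex_Ici 0)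
end
end

section
/- Let B > s₀ and define 𝔠^B(x) := E[(S_{T∧H_B} − x)⁺] for x ∈ ℝ. Then 𝔠^B is convex, and for every x ∈ [0, B): ℙ(S_T > x, M_T < B) = −(right derivative of 𝔠^B at x) − ℙ(M_T ≥ B). -/
open MeasureTheory Set Filter

noncomputable section

/-- Convexity of the call function `x ↦ E[(Y − x)⁺]`. -/
lemma convex_call {Ω : Type} [mΩ : MeasurableSpace Ω] (ℙ : Measure Ω) [IsProbabilityMeasure ℙ]
    (Y : Ω → ℝ) (hY : Integrable Y ℙ) :
    ConvexOn ℝ (univ : Set ℝ) (fun x => ∫ ω, max (Y ω - x) 0 ∂ℙ) := by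
  have hint : ∀ z : ℝ, Integrable (fun ω => max (Y ω - z) 0) ℙ := fun z =>
    (hY.sub (integrable_const z)).pos_part
  refine ⟨convex_univ, fun x _ y _ a b ha hb hab => ?_⟩
  have key : ∀ ω, max (Y ω - (a • x + b • y)) 0
      ≤ a * max (Y ω - x) 0 + b * max (Y ω - y) 0 := by
    intro ω
    have h1 : a * (Y ω - x) ≤ a * max (Y ω - x) 0 :=
      mul_le_mul_of_nonneg_left (le_max_left _ _) ha
    have h3 : b * (Y ω - y) ≤ b * max (Y ω - y) 0 :=
      mul_le_mul_of_nonneg_left (le_max_left _ _) hb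
    have h2 : 0 ≤ a * max (Y ω - x) 0 := mul_nonneg ha (le_max_right _ _)
    have h4 : 0 ≤ b * max (Y ω - y) 0 := mul_nonneg hb (le_max_right _ _)
    have hsum : a * (Y ω - x) + b * (Y ω - y) = Y ω - (a * x + b * y) := by
      linear_combination (Y ω) * hab
    apply max_le
    · simp only [smul_eq_mul]; linarith
    · linarith
  calc (∫ ω, max (Y ω - (a • x + b • y)) 0 ∂ℙ)
      ≤ ∫ ω, (a * max (Y ω - x) 0 + b * max (Y ω - y) 0) ∂ℙ :=
        integral_mono (hint _) (((hint x).const_mul a).add ((hint y).const_mul b)) key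
    _ = a • (∫ ω, max (Y ω - x) 0 ∂ℙ) + b • (∫ ω, max (Y ω - y) 0 ∂ℙ) := by
        rw [integral_add ((hint x).const_mul a) ((hint y).const_mul b), integral_const_mul,
          integral_const_mul]
        simp [smul_eq_mul]

/-- The right derivative of the call function `x ↦ E[(Y − x)⁺]` is `−ℙ(Y > x)`. -/
lemma deriv_call {Ω : Type} [mΩ : MeasurableSpace Ω] (ℙ : Measure Ω) [IsProbabilityMeasure ℙ]
    (Y : Ω → ℝ) (hY : Integrable Y ℙ) (hm : Measurable Y) (x : ℝ) :
    HasDerivWithinAt (fun y => ∫ ω, max (Y ω - y) 0 ∂ℙ)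
      (-(ℙ {ω | x < Y ω}).toReal) (Ioi x) x := by
  have hint : ∀ z : ℝ, Integrable (fun ω => max (Y ω - z) 0) ℙ := fun z =>
    (hY.sub (integrable_const z)).pos_part
  have hmlt : MeasurableSet {ω | x < Y ω} := measurableSet_lt measurable_const hm
  have hmle : ∀ u : ℝ, MeasurableSet {ω | u ≤ Y ω} := fun u =>
    measurableSet_le measurable_const hm
  -- Step A : bounds on the slope
  have slope_bounds : ∀ y : ℝ, x < y →
      -(ℙ {ω | x < Y ω}).toReal ≤ slope (fun y => ∫ ω, max (Y ω - y) 0 ∂ℙ) x y ∧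
      slope (fun y => ∫ ω, max (Y ω - y) 0 ∂ℙ) x y ≤ -(ℙ {ω | y ≤ Y ω}).toReal := by
    intro y hxy
    have hyx : (0:ℝ) < y - x := by linarith
    have hmid : Integrable (fun ω => max (Y ω - x) 0 - max (Y ω - y) 0) ℙ :=
      (hint x).sub (hint y)
    have lower : ∀ ω, ({ω | y ≤ Y ω}.indicator (fun _ => y - x)) ω
        ≤ max (Y ω - x) 0 - max (Y ω - y) 0 := by
      intro ω
      simp only [Set.indicator_apply, mem_setOf_eq]
      split_ifs with h
      · rw [max_eq_left (by linarith : (0:ℝ) ≤ Y ω - x),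
          max_eq_left (by linarith : (0:ℝ) ≤ Y ω - y)]
        linarith
      · push_neg at h
        have h1 : max (Y ω - y) 0 = 0 := max_eq_right (by linarith)
        have h2 := le_max_right (Y ω - x) (0:ℝ)
        linarith
    have upper : ∀ ω, max (Y ω - x) 0 - max (Y ω - y) 0
        ≤ ({ω | x < Y ω}.indicator (fun _ => y - x)) ω := by
      intro ω
      simp only [Set.indicator_apply, mem_setOf_eq]
      split_ifs with h
      · have h1 : max (Y ω - x) 0 ≤ max (Y ω - y) 0 + (y - x) := by
          apply max_le
          · have := le_max_left (Y ω - y) (0:ℝ); linarith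
          · have := le_max_right (Y ω - y) (0:ℝ); linarith
        linarith
      · push_neg at h
        have h1 : max (Y ω - x) 0 = 0 := max_eq_right (by linarith)
        have h2 := le_max_right (Y ω - y) (0:ℝ)
        linarith
    have hii : ∀ (s : Set Ω), MeasurableSet s → Integrable (s.indicator (fun _ => y - x)) ℙ :=
      fun s hs => (integrable_const (y - x)).indicator hs
    have hA : (ℙ {ω | y ≤ Y ω}).toReal * (y - x)
        ≤ (∫ ω, max (Y ω - x) 0 ∂ℙ) - ∫ ω, max (Y ω - y) 0 ∂ℙ := by
      have h := integral_mono (hii _ (hmle y)) hmid lower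
      rw [integral_indicator_const _ (hmle y)] at h
      rw [integral_sub (hint x) (hint y)] at h
      simpa [smul_eq_mul, measureReal_def] using h
    have hB : (∫ ω, max (Y ω - x) 0 ∂ℙ) - (∫ ω, max (Y ω - y) 0 ∂ℙ)
        ≤ (ℙ {ω | x < Y ω}).toReal * (y - x) := by
      have h := integral_mono hmid (hii _ hmlt) upper
      rw [integral_indicator_const _ hmlt] at h
      rw [integral_sub (hint x) (hint y)] at h
      simpa [smul_eq_mul, measureReal_def] using h
    constructor
    · rw [slope_def_field, le_div_iff₀ hyx]
      linarith
    · rw [slope_def_field, div_le_iff₀ hyx]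
      linarith
  -- Step B : right-continuity
  have hqten : Tendsto (fun y => -(ℙ {ω | y ≤ Y ω}).toReal) (nhdsWithin x (Ioi x))
      (nhds (-(ℙ {ω | x < Y ω}).toReal)) := by
    apply Tendsto.neg
    rw [Metric.tendsto_nhds]
    intro ε hε
    set A : ℕ → Set Ω := fun n => {ω | x + 1 / (n + 1) ≤ Y ω} with hA
    have hmono : Monotone A := by
      intro n m hnm ω hω
      simp only [hA, mem_setOf_eq] at hω ⊢
      have hc : (n:ℝ) ≤ m := Nat.cast_le.2 hnm
      have h1 : (1:ℝ) / (m + 1) ≤ 1 / (n + 1) :=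
        one_div_le_one_div_of_le (by positivity) (by linarith)
      linarith
    have hunion : (⋃ n, A n) = {ω | x < Y ω} := by
      ext ω
      simp only [mem_iUnion, mem_setOf_eq, hA]
      constructor
      · rintro ⟨n, h⟩
        have : (0:ℝ) < 1 / (n + 1) := by positivity
        linarith
      · intro h
        obtain ⟨n, hn⟩ := exists_nat_one_div_lt (show (0:ℝ) < Y ω - x by linarith)
        exact ⟨n, by linarith⟩
    have htend : Tendsto (fun n => (ℙ (A n)).toReal) atTop
        (nhds (ℙ {ω | x < Y ω}).toReal) := by
      have h1 := tendsto_measure_iUnion_atTop (μ := ℙ) hmono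
      rw [hunion] at h1
      exact (ENNReal.tendsto_toReal (measure_ne_top ℙ _)).comp h1
    obtain ⟨N, hN⟩ := (Metric.tendsto_atTop.1 htend ε hε).imp (fun N h => h N le_rfl)
    rw [Real.dist_eq, abs_lt] at hN
    have hNpos : (0:ℝ) < 1 / ((N:ℝ) + 1) := by positivity
    have hNlt : x < x + 1 / ((N:ℝ) + 1) := by linarith
    filter_upwards [Ioo_mem_nhdsGT_of_mem ⟨le_rfl, hNlt⟩] with y hy
    have hy1 : x < y := hy.1
    have hy2 : y ≤ x + 1 / ((N:ℝ) + 1) := hy.2.le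
    have hq1 : (ℙ (A N)).toReal ≤ (ℙ {ω | y ≤ Y ω}).toReal := by
      apply ENNReal.toReal_mono (measure_ne_top ℙ _)
      apply measure_mono
      intro ω hω
      simp only [hA, mem_setOf_eq] at hω ⊢
      linarith
    have hq2 : (ℙ {ω | y ≤ Y ω}).toReal ≤ (ℙ {ω | x < Y ω}).toReal := by
      apply ENNReal.toReal_mono (measure_ne_top ℙ _)
      apply measure_mono
      intro ω hω
      simp only [mem_setOf_eq] at hω ⊢
      linarith
    rw [Real.dist_eq, abs_lt]
    constructor <;> linarith
  -- Step C : squeeze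
  rw [hasDerivWithinAt_iff_tendsto_slope' (notMem_Ioi.2 le_rfl)]
  apply tendsto_of_tendsto_of_tendsto_of_le_of_le' tendsto_const_nhds hqten
  · filter_upwards [self_mem_nhdsWithin] with y hy
    exact (slope_bounds y hy).1
  · filter_upwards [self_mem_nhdsWithin] with y hy
    exact (slope_bounds y hy).2

/-- The running maximum is attained on `[0,T]` for continuous paths. -/
lemma runMax_aux {Ω : Type} (S : ℝ → Ω → ℝ) (T : ℝ) (hT : 0 < T)
    (hc : ∀ ω, ContinuousOn (fun t => S t ω) (Icc (0:ℝ) T)) (ω : Ω) :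
    ∃ t₀ ∈ Icc (0:ℝ) T, runMax S T ω = S t₀ ω ∧
      ∀ t ∈ Icc (0:ℝ) T, S t ω ≤ runMax S T ω := by
  haveI : Nonempty (Icc (0:ℝ) T) := ⟨⟨0, left_mem_Icc.2 hT.le⟩⟩
  obtain ⟨t₀, ht₀, hmax⟩ := isCompact_Icc.exists_isMaxOn (nonempty_Icc.2 hT.le) (hc ω)
  have bdd : BddAbove (range fun t : Icc (0:ℝ) T => S t ω) := by
    refine ⟨S t₀ ω, ?_⟩
    rintro _ ⟨⟨t, ht⟩, rfl⟩
    exact hmax ht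
  have h1 : runMax S T ω = S t₀ ω :=
    le_antisymm (ciSup_le fun ⟨t, ht⟩ => hmax ht) (le_ciSup bdd ⟨t₀, ht₀⟩)
  exact ⟨t₀, ht₀, h1, fun t ht => h1 ▸ hmax ht⟩

/-- Measurability of the running maximum. -/
lemma runMax_measurable {Ω : Type} [mΩ : MeasurableSpace Ω] (S : ℝ → Ω → ℝ) (T : ℝ)
    (hT : 0 < T) (hc : ∀ ω, ContinuousOn (fun t => S t ω) (Icc (0:ℝ) T))
    (hm : ∀ t ∈ Icc (0:ℝ) T, Measurable (S t)) :
    Measurable (runMax S T) := by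
  haveI : Nonempty (Icc (0:ℝ) T) := ⟨⟨0, left_mem_Icc.2 hT.le⟩⟩
  obtain ⟨u, hu⟩ := TopologicalSpace.exists_dense_seq (Icc (0:ℝ) T)
  have key : runMax S T = fun ω => ⨆ n : ℕ, S (u n) ω := by
    funext ω
    obtain ⟨t₀, ht₀, hEq, hle⟩ := runMax_aux S T hT hc ω
    have bdd' : BddAbove (range fun n : ℕ => S (u n) ω) := by
      refine ⟨runMax S T ω, ?_⟩
      rintro _ ⟨n, rfl⟩
      exact hle _ (u n).2
    have bdd : BddAbove (range fun t : Icc (0:ℝ) T => S t ω) := by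
      refine ⟨runMax S T ω, ?_⟩
      rintro _ ⟨⟨t, ht⟩, rfl⟩
      exact hle _ ht
    apply le_antisymm
    · apply ciSup_le
      rintro ⟨t, ht⟩
      obtain ⟨v, hv_mem, hv_lim⟩ := mem_closure_iff_seq_limit.1 (hu ⟨t, ht⟩)
      have hcont : Continuous fun s : Icc (0:ℝ) T => S s ω := by
        rw [← continuousOn_univ]
        exact (hc ω).restrict.continuousOn
      have htd : Tendsto (fun k => S (v k) ω) atTop (nhds (S t ω)) :=
        (hcont.tendsto _).comp hv_lim
      apply le_of_tendsto htd
      filter_upwards with k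
      obtain ⟨n, hn⟩ := hv_mem k
      rw [← hn]
      exact le_ciSup bdd' n
    · exact ciSup_le fun n => le_ciSup bdd (u n)
  rw [key]
  exact Measurable.iSup fun n => hm _ (u n).2

/-- Pathwise identification of the stopped value, provided `S 0 ω < B`. -/
lemma stopVal_eq {Ω : Type} (S : ℝ → Ω → ℝ) (B T : ℝ) (hT : 0 < T)
    (hc : ∀ ω, ContinuousOn (fun t => S t ω) (Icc (0:ℝ) T)) (ω : Ω) (h0 : S 0 ω < B) :
    stopVal S B T ω = if B ≤ runMax S T ω then B else S T ω := by
  obtain ⟨t₀, ht₀, hEq, hle⟩ := runMax_aux S T hT hc ω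
  by_cases hhit : ∃ t ∈ Icc (0:ℝ) T, B ≤ S t ω
  · obtain ⟨t₁, ht₁, hBt₁⟩ := hhit
    have hrB : B ≤ runMax S T ω := hBt₁.trans (hle _ ht₁)
    rw [if_pos hrB]
    have hex : ∃ j ∈ Icc (0:ℝ) T, S j ω ∈ Ici B := ⟨t₁, ht₁, hBt₁⟩
    unfold stopVal
    rw [hittingBtwn_def]; beta_reduce; rw [if_pos hex]
    set E : Set ℝ := Icc (0:ℝ) T ∩ {i | S i ω ∈ Ici B} with hE
    have hEclosed : IsClosed E :=
      (hc ω).preimage_isClosed_of_isClosed isClosed_Icc isClosed_Ici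
    have hEne : E.Nonempty := ⟨t₁, ht₁, hBt₁⟩
    have hEbdd : BddBelow E := ⟨0, fun t ht => ht.1.1⟩
    have hτmem : sInf E ∈ E := hEclosed.csInf_mem hEne hEbdd
    set τ := sInf E with hτ
    have hτIcc : τ ∈ Icc (0:ℝ) T := hτmem.1
    have hBτ : B ≤ S τ ω := hτmem.2
    have hτpos : 0 < τ := by
      rcases hτIcc.1.lt_or_eq with h | h
      · exact h
      · exfalso; rw [← h] at hBτ; linarith
    have hlt : ∀ t ∈ Ico (0:ℝ) τ, S t ω < B := by
      intro t ht
      by_contra hcon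
      push_neg at hcon
      have htE : t ∈ E := ⟨⟨ht.1, ht.2.le.trans hτIcc.2⟩, hcon⟩
      exact absurd (csInf_le hEbdd htE) (not_le.2 ht.2)
    have hτle : S τ ω ≤ B := by
      have hclos : τ ∈ closure (Ico (0:ℝ) τ) := by
        rw [closure_Ico hτpos.ne]
        exact ⟨hτpos.le, le_rfl⟩
      haveI hne : (nhdsWithin τ (Ico (0:ℝ) τ)).NeBot :=
        mem_closure_iff_nhdsWithin_neBot.1 hclos
      have hcw : ContinuousWithinAt (fun t => S t ω) (Ico (0:ℝ) τ) τ :=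
        ((hc ω) τ hτIcc).mono (fun t ht => ⟨ht.1, ht.2.le.trans hτIcc.2⟩)
      exact le_of_tendsto hcw (eventually_nhdsWithin_of_forall fun t ht => (hlt t ht).le)
    exact le_antisymm hτle hBτ
  · have hnr : ¬ B ≤ runMax S T ω := by
      intro h
      exact hhit ⟨t₀, ht₀, by rw [← hEq]; exact h⟩
    rw [if_neg hnr]
    unfold stopVal
    rw [hittingBtwn_def]; beta_reduce; rw [if_neg]
    exact hhit

/-- For `B > s₀`, the function `𝔠^B(x) = E[(S_{T∧H_B} − x)⁺]` is convex,
and for every `x ∈ [0,B)`,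
`ℙ(S_T > x, M_T < B) = −(right derivative of 𝔠^B at x) − ℙ(M_T ≥ B)`. -/
theorem stmt_2 {Ω : Type} [mΩ : MeasurableSpace Ω] (ℙ : Measure Ω) [IsProbabilityMeasure ℙ]
    (ℱ : Filtration ℝ mΩ) (S : ℝ → Ω → ℝ) (s₀ T : ℝ) (hs₀ : 0 < s₀) (hT : 0 < T)
    (hS : IsPosContMart ℙ ℱ S s₀ T) (B : ℝ) (hB : s₀ < B) :
    ConvexOn ℝ univ (fun x => ∫ ω, max (stopVal S B T ω - x) 0 ∂ℙ) ∧
    ∀ x, 0 ≤ x → x < B →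
      ∃ d : ℝ,
        HasDerivWithinAt (fun y => ∫ ω, max (stopVal S B T ω - y) 0 ∂ℙ) d (Ioi x) x ∧
        (ℙ {ω | x < S T ω ∧ runMax S T ω < B}).toReal
          = -d - (ℙ {ω | B ≤ runMax S T ω}).toReal := by
  have hTmem : T ∈ Icc (0:ℝ) T := ⟨hT.le, le_rfl⟩
  have hmS : ∀ t ∈ Icc (0:ℝ) T, Measurable (S t) := fun t ht =>
    ((hS.adapted t ht).measurable).mono (ℱ.le t) le_rfl
  have hrm : Measurable (runMax S T) := runMax_measurable S T hT hS.contPaths hmS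
  have hA₂meas : MeasurableSet {ω | B ≤ runMax S T ω} :=
    measurableSet_le measurable_const hrm
  set g : Ω → ℝ := fun ω => if B ≤ runMax S T ω then B else S T ω with hg
  have hmg : Measurable g :=
    Measurable.ite hA₂meas measurable_const (hmS T hTmem)
  have hintg : Integrable g ℙ := by
    apply Integrable.mono' (((hS.integrable T hTmem).abs).add (integrable_const |B|))
      hmg.aestronglyMeasurable
    filter_upwards with ω
    rw [Real.norm_eq_abs, hg]
    simp only []
    split_ifs with h
    · have := abs_nonneg (S T ω); simp only [Pi.add_apply]; linarith
    · have := abs_nonneg B; simp only [Pi.add_apply]; linarith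
  have hae : stopVal S B T =ᵐ[ℙ] g := by
    filter_upwards [hS.init] with ω h0
    have h0B : S 0 ω < B := by rw [h0]; exact hB
    exact stopVal_eq S B T hT hS.contPaths ω h0B
  have hfun : (fun x : ℝ => ∫ ω, max (stopVal S B T ω - x) 0 ∂ℙ)
      = fun x : ℝ => ∫ ω, max (g ω - x) 0 ∂ℙ := by
    funext x
    apply integral_congr_ae
    filter_upwards [hae] with ω h
    rw [h]
  constructor
  · rw [hfun]
    exact convex_call ℙ g hintg
  · intro x hx0 hxB
    refine ⟨-(ℙ {ω | x < g ω}).toReal, ?_, ?_⟩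
    · rw [hfun]
      exact deriv_call ℙ g hintg hmg x
    · have hsets : {ω | x < g ω}
          = {ω | x < S T ω ∧ runMax S T ω < B} ∪ {ω | B ≤ runMax S T ω} := by
        ext ω
        simp only [mem_setOf_eq, mem_union, hg]
        by_cases h : B ≤ runMax S T ω
        · simp [h, hxB]
        · simp [h, not_le.1 h]
      have hdis : Disjoint {ω | x < S T ω ∧ runMax S T ω < B} {ω | B ≤ runMax S T ω} := by
        rw [Set.disjoint_left]
        intro ω h1 h2
        exact absurd h2 (not_le.2 h1.2)
      rw [hsets, measure_union hdis hA₂meas,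
        ENNReal.toReal_add (measure_ne_top _ _) (measure_ne_top _ _)]
      ring
end
end

section
/- Let s₀ =: B₀ < B₁ < … < B_m be levels. For j = 1,…,m define c^{B_j}(x) := E[ 1_{H_{B_{j−1}} ≤ T} · (S_{T∧H_{B_j}} − x)⁺ ] and define c^{B_{m+1}}(x) := E[ 1_{H_{B_m} ≤ T} · (S_T − x)⁺ ]. Then for every j = 1,…,m and every x ∈ ℝ: Σ_{i=1}^{j−1} ( c^{B_i}(x) − ℙ(H_{B_i} ≤ T)·(B_i − x)⁺ ) + c^{B_j}(x) = E[(S_{T∧H_{B_j}} − x)⁺], and moreover Σ_{j=1}^{m} ( c^{B_j}(x) − ℙ(H_{B_j} ≤ T)·(B_j − x)⁺ ) + c^{B_{m+1}}(x) = E[(S_T − x)⁺]. -/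
open MeasureTheory Set Filter
open scoped Topology

noncomputable section

/-- A countable dense subset of `[0,T]`. -/
lemma dense_aux {T : ℝ} (hT : 0 < T) :
    ∃ D : Set ℝ, D.Countable ∧ D ⊆ Icc (0:ℝ) T ∧ Icc (0:ℝ) T ⊆ closure D := by
  refine ⟨Icc 0 T ∩ range ((↑) : ℚ → ℝ), (countable_range _).mono inter_subset_right,
    inter_subset_left, ?_⟩
  intro t ht
  rw [mem_closure_iff]
  intro U hU htU
  have h1 : t ∈ closure (Ioo (0:ℝ) T) := by
    rw [closure_Ioo hT.ne]; exact ht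
  rw [mem_closure_iff] at h1
  obtain ⟨y, hyU, hy⟩ := h1 U hU htU
  obtain ⟨q, hq⟩ := Rat.denseRange_cast.exists_mem_open (hU.inter isOpen_Ioo)
    ⟨y, hyU, hy⟩
  exact ⟨q, hq.1, ⟨Ioo_subset_Icc_self hq.2, mem_range_self _⟩⟩

lemma hitEvent_measurable {Ω : Type} [mΩ : MeasurableSpace Ω] {S : ℝ → Ω → ℝ} {B T : ℝ}
    (hT : 0 < T) (hcont : ∀ ω, ContinuousOn (fun t => S t ω) (Icc (0:ℝ) T))
    (hmeas : ∀ t ∈ Icc (0:ℝ) T, Measurable (S t)) :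
    MeasurableSet (hitEvent S B T) := by
  obtain ⟨D, hDc, hDsub, hDdense⟩ := dense_aux hT
  have hkey : hitEvent S B T = ⋂ n : ℕ, ⋃ q ∈ D, {ω | B - 1/(n+1) < S q ω} := by
    ext ω
    simp only [hitEvent, mem_setOf_eq, mem_iInter, mem_iUnion]
    constructor
    · rintro ⟨t, ht, hBt⟩ n
      have hcw : ContinuousWithinAt (fun u => S u ω) D t :=
        ((hcont ω t ht).mono hDsub)
      have hne : (𝓝[D] t).NeBot := mem_closure_iff_nhdsWithin_neBot.mp (hDdense ht)
      have hev : ∀ᶠ u in 𝓝[D] t, B - 1/(n+1) < S u ω := by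
        have : Ioi (B - 1/(n+1)) ∈ 𝓝 (S t ω) := by
          apply Ioi_mem_nhds
          have : (0:ℝ) < 1/(n+1) := by positivity
          linarith
        exact hcw this
      have hev2 : ∀ᶠ u in 𝓝[D] t, u ∈ D := self_mem_nhdsWithin
      obtain ⟨q, hq1, hq2⟩ := (hev.and hev2).exists
      exact ⟨q, hq2, hq1⟩
    · intro h
      obtain ⟨t₀, ht₀, hmax⟩ := isCompact_Icc.exists_isMaxOn (nonempty_Icc.mpr hT.le)
        (hcont ω)
      refine ⟨t₀, ht₀, ?_⟩
      by_contra hlt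
      push_neg at hlt
      obtain ⟨n, hn⟩ := exists_nat_one_div_lt (sub_pos.mpr hlt)
      obtain ⟨q, hqD, hq⟩ := h n
      have : S q ω ≤ S t₀ ω := hmax (hDsub hqD)
      have : (1:ℝ)/(n+1) < 1/(n+1) := by
        calc (1:ℝ)/(n+1) < B - S t₀ ω := hn
        _ ≤ B - S q ω := by linarith
        _ < 1/(n+1) := by linarith
      linarith
  rw [hkey]
  exact MeasurableSet.iInter fun n => MeasurableSet.biUnion hDc fun q hq =>
    measurableSet_lt measurable_const (hmeas q (hDsub hq))

lemma stopVal_of_not_mem {Ω : Type} {S : ℝ → Ω → ℝ} {B T : ℝ} {ω : Ω}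
    (h : ω ∉ hitEvent S B T) : stopVal S B T ω = S T ω := by
  have hcond : ¬ ∃ j ∈ Icc (0:ℝ) T, S j ω ∈ Ici B := by
    simpa [hitEvent, mem_Ici] using h
  simp only [stopVal, hittingBtwn]
  rw [if_neg hcond]

lemma stopVal_of_mem {Ω : Type} {S : ℝ → Ω → ℝ} {B T : ℝ} {ω : Ω}
    (hcont : ContinuousOn (fun t => S t ω) (Icc (0:ℝ) T)) (h0 : S 0 ω < B)
    (h : ω ∈ hitEvent S B T) : stopVal S B T ω = B := by
  have hcond : ∃ j ∈ Icc (0:ℝ) T, S j ω ∈ Ici B := by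
    simpa [hitEvent, mem_Ici] using h
  have hval : stopVal S B T ω = S (sInf (Icc (0:ℝ) T ∩ {i | S i ω ∈ Ici B})) ω := by
    simp only [stopVal, hittingBtwn]
    rw [if_pos hcond]
  set A : Set ℝ := Icc (0:ℝ) T ∩ {i | S i ω ∈ Ici B} with hA
  have hAne : A.Nonempty := by
    obtain ⟨j, hj, hj2⟩ := hcond; exact ⟨j, hj, hj2⟩
  have hAclosed : IsClosed A := hcont.preimage_isClosed_of_isClosed isClosed_Icc isClosed_Ici
  have hAbdd : BddBelow A := ⟨0, fun t ht => ht.1.1⟩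
  have hmem : sInf A ∈ A := hAclosed.csInf_mem hAne hAbdd
  set τ := sInf A with hτ
  have hτIcc : τ ∈ Icc (0:ℝ) T := hmem.1
  have hge : B ≤ S τ ω := hmem.2
  have hτpos : 0 < τ := by
    rcases lt_or_eq_of_le hτIcc.1 with h' | h'
    · exact h'
    · exfalso; rw [← h'] at hge; linarith
  have hle : S τ ω ≤ B := by
    have hsub : Ico (0:ℝ) τ ⊆ Icc (0:ℝ) T :=
      fun t ht => ⟨ht.1, le_trans ht.2.le hτIcc.2⟩
    have hcw : ContinuousWithinAt (fun t => S t ω) (Ico (0:ℝ) τ) τ :=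
      (hcont τ hτIcc).mono hsub
    have hτcl : τ ∈ closure (Ico (0:ℝ) τ) := by
      rw [closure_Ico hτpos.ne]; exact ⟨hτpos.le, le_refl _⟩
    have himg : S τ ω ∈ closure ((fun t => S t ω) '' Ico (0:ℝ) τ) :=
      hcw.mem_closure_image hτcl
    have hsubB : (fun t => S t ω) '' Ico (0:ℝ) τ ⊆ Iio B := by
      rintro y ⟨t, ht, rfl⟩
      by_contra hy
      simp only [mem_Iio, not_lt] at hy
      have : τ ≤ t := csInf_le hAbdd ⟨hsub ht, hy⟩
      exact absurd ht.2 (not_lt.mpr this)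
    have := closure_mono hsubB himg
    rwa [closure_Iio] at this
  rw [hval]
  linarith

open Classical in
/-- Auxiliary function: a.e. version of the stopped value `S_{T ∧ H_{B_j}}`, equal to
`s₀` for `j = 0`, to `S_T` for `j > m`, and otherwise to `B j` on the hit event and
`S_T` off it. -/
def gAux {Ω : Type} (S : ℝ → Ω → ℝ) (T s₀ : ℝ) (B : ℕ → ℝ) (m j : ℕ) (ω : Ω) : ℝ :=
  if j = 0 then s₀ else if m < j then S T ω else
    if ω ∈ hitEvent S (B j) T then B j else S T ω

/-- Levels `s₀ = B₀ < B₁ < … < B_m`; with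
`c^{B_j}(x) = E[1_{H_{B_{j−1}} ≤ T}·(S_{T∧H_{B_j}} − x)⁺]` for `j = 1,…,m` and
`c^{B_{m+1}}(x) = E[1_{H_{B_m} ≤ T}·(S_T − x)⁺]`, for every `j = 1,…,m` and every `x`,
`Σ_{i=1}^{j−1} (c^{B_i}(x) − ℙ(H_{B_i} ≤ T)·(B_i − x)⁺) + c^{B_j}(x) = E[(S_{T∧H_{B_j}} − x)⁺]`,
and `Σ_{j=1}^{m} (c^{B_j}(x) − ℙ(H_{B_j} ≤ T)·(B_j − x)⁺) + c^{B_{m+1}}(x) = E[(S_T − x)⁺]`. -/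
theorem stmt_5 {Ω : Type} [mΩ : MeasurableSpace Ω] (ℙ : Measure Ω) [IsProbabilityMeasure ℙ]
    (ℱ : Filtration ℝ mΩ) (S : ℝ → Ω → ℝ) (s₀ T : ℝ) (hs₀ : 0 < s₀) (hT : 0 < T)
    (hS : IsPosContMart ℙ ℱ S s₀ T)
    (m : ℕ) (B : ℕ → ℝ) (hB0 : B 0 = s₀) (hBmono : ∀ j, j < m → B j < B (j + 1)) :
    (∀ j, 1 ≤ j → j ≤ m → ∀ x : ℝ,
      (∑ i ∈ Finset.Ico 1 j,
          ((∫ ω in hitEvent S (B (i - 1)) T, max (stopVal S (B i) T ω - x) 0 ∂ℙ)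
            - (ℙ (hitEvent S (B i) T)).toReal * max (B i - x) 0))
        + (∫ ω in hitEvent S (B (j - 1)) T, max (stopVal S (B j) T ω - x) 0 ∂ℙ)
        = ∫ ω, max (stopVal S (B j) T ω - x) 0 ∂ℙ) ∧
    (∀ x : ℝ,
      (∑ j ∈ Finset.Icc 1 m,
          ((∫ ω in hitEvent S (B (j - 1)) T, max (stopVal S (B j) T ω - x) 0 ∂ℙ)
            - (ℙ (hitEvent S (B j) T)).toReal * max (B j - x) 0))
        + (∫ ω in hitEvent S (B m) T, max (S T ω - x) 0 ∂ℙ)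
        = ∫ ω, max (S T ω - x) 0 ∂ℙ) := by
  -- basic measurability and integrability facts
  have hmeasS : ∀ t ∈ Icc (0:ℝ) T, Measurable (S t) :=
    fun t ht => ((hS.adapted t ht).measurable).mono (ℱ.le t) le_rfl
  have hTmem : T ∈ Icc (0:ℝ) T := ⟨hT.le, le_rfl⟩
  have hSTmeas : Measurable (S T) := hmeasS T hTmem
  have hSTint : Integrable (S T) ℙ := hS.integrable T hTmem
  have hE : ∀ b : ℝ, MeasurableSet (hitEvent S b T) :=
    fun b => hitEvent_measurable hT hS.contPaths hmeasS
  -- monotonicity of the levels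
  have hBlt : ∀ j, j ≤ m → ∀ i, i < j → B i < B j := by
    intro j
    induction j with
    | zero => intro _ i hi; omega
    | succ k ih =>
      intro hk1 i hik
      have hk : B k < B (k + 1) := hBmono k (by omega)
      rcases Nat.lt_or_ge i k with h | h
      · exact lt_trans (ih (by omega) i h) hk
      · have : i = k := by omega
        subst this; exact hk
  have hEsub : ∀ a b : ℝ, a ≤ b → hitEvent S b T ⊆ hitEvent S a T := by
    rintro a b hab ω ⟨t, ht, hbt⟩
    exact ⟨t, ht, le_trans hab hbt⟩
  -- the a.e. full hit event at level B 0 = s₀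
  have hE0ae : ∀ᵐ ω ∂ℙ, ω ∈ hitEvent S (B 0) T := by
    filter_upwards [hS.init] with ω h0
    exact ⟨0, ⟨le_rfl, hT.le⟩, by rw [hB0, h0]⟩
  have hE0null : ℙ (hitEvent S (B 0) T)ᶜ = 0 := by
    rw [Set.compl_def]
    exact ae_iff.mp hE0ae
  -- measurability and integrability of the auxiliary functions
  have hg_meas : ∀ j, Measurable (gAux S T s₀ B m j) := by
    intro j
    unfold gAux
    by_cases hj : j = 0
    · simp only [hj, if_true]; exact measurable_const
    · simp only [hj, if_false]
      by_cases hmj : m < j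
      · simp only [hmj, if_true]; exact hSTmeas
      · simp only [hmj, if_false]
        exact Measurable.ite (hE (B j)) measurable_const hSTmeas
  have hh_meas : ∀ (x : ℝ) j, Measurable (fun ω => max (gAux S T s₀ B m j ω - x) 0) :=
    fun x j => ((hg_meas j).sub measurable_const).max measurable_const
  have hgb : ∀ j ω, |gAux S T s₀ B m j ω| ≤ |s₀| + |B j| + |S T ω| := by
    intro j ω
    unfold gAux
    have h1 := abs_nonneg s₀
    have h2 := abs_nonneg (B j)
    have h3 := abs_nonneg (S T ω)
    split_ifs
    · linarith
    · linarith
    · linarith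
    · linarith
  have hh_int : ∀ (x : ℝ) j, Integrable (fun ω => max (gAux S T s₀ B m j ω - x) 0) ℙ := by
    intro x j
    refine Integrable.mono' (hSTint.abs.add (integrable_const (|s₀| + |B j| + |x|)))
      (hh_meas x j).aestronglyMeasurable ?_
    filter_upwards with ω
    have hb := hgb j ω
    have h1 := abs_nonneg (gAux S T s₀ B m j ω - x)
    have h2 : max (gAux S T s₀ B m j ω - x) 0 ≤ |gAux S T s₀ B m j ω - x| :=
      max_le (le_abs_self _) (abs_nonneg _)
    have h3 : |gAux S T s₀ B m j ω - x| ≤ |gAux S T s₀ B m j ω| + |x| := abs_sub _ _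
    rw [Real.norm_eq_abs, abs_of_nonneg (le_max_right _ _), Pi.add_apply]
    linarith
  -- pointwise values of gAux
  have hgval_top : ∀ ω, gAux S T s₀ B m (m+1) ω = S T ω := by
    intro ω; unfold gAux
    rw [if_neg (Nat.succ_ne_zero m), if_pos (Nat.lt_succ_self m)]
  have hgval_notmem' : ∀ i, 1 ≤ i → i ≤ m → ∀ ω, ω ∉ hitEvent S (B i) T →
      gAux S T s₀ B m i ω = S T ω := by
    intro i h1 h2 ω hω
    unfold gAux
    rw [if_neg (by omega : ¬ i = 0), if_neg (by omega : ¬ m < i), if_neg hω]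
  have hgval_notmem : ∀ j, 1 ≤ j → j ≤ m + 1 → ∀ ω, ω ∉ hitEvent S (B (j-1)) T →
      gAux S T s₀ B m j ω = S T ω := by
    intro j h1 h2 ω hω
    by_cases hmj : m < j
    · have : j = m + 1 := by omega
      subst this
      exact hgval_top ω
    · refine hgval_notmem' j h1 (by omega) ω ?_
      intro hc
      exact hω (hEsub _ _ (hBlt j (by omega) (j-1) (by omega)).le hc)
  have hgval_mem : ∀ j, j ≤ m → ∀ ω, ω ∈ hitEvent S (B j) T →
      gAux S T s₀ B m j ω = B j := by
    intro j hj ω hω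
    unfold gAux
    by_cases hj0 : j = 0
    · subst hj0
      rw [if_pos rfl, hB0]
    · rw [if_neg hj0, if_neg (by omega : ¬ m < j), if_pos hω]
  -- the one-step recursion
  have hstep : ∀ (x : ℝ) (j : ℕ), 1 ≤ j → j ≤ m + 1 →
      ∫ ω, max (gAux S T s₀ B m j ω - x) 0 ∂ℙ
        = (∫ ω in hitEvent S (B (j-1)) T, max (gAux S T s₀ B m j ω - x) 0 ∂ℙ)
          + (∫ ω, max (gAux S T s₀ B m (j-1) ω - x) 0 ∂ℙ)
          - (ℙ (hitEvent S (B (j-1)) T)).toReal * max (B (j-1) - x) 0 := by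
    intro x j h1 h2
    have hsplit : (∫ ω in hitEvent S (B (j-1)) T, max (gAux S T s₀ B m j ω - x) 0 ∂ℙ)
        + (∫ ω in (hitEvent S (B (j-1)) T)ᶜ, max (gAux S T s₀ B m j ω - x) 0 ∂ℙ)
        = ∫ ω, max (gAux S T s₀ B m j ω - x) 0 ∂ℙ :=
      integral_add_compl (hE _) (hh_int x j)
    have hsplit' : (∫ ω in hitEvent S (B (j-1)) T, max (gAux S T s₀ B m (j-1) ω - x) 0 ∂ℙ)
        + (∫ ω in (hitEvent S (B (j-1)) T)ᶜ, max (gAux S T s₀ B m (j-1) ω - x) 0 ∂ℙ)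
        = ∫ ω, max (gAux S T s₀ B m (j-1) ω - x) 0 ∂ℙ :=
      integral_add_compl (hE _) (hh_int x (j-1))
    have hcompl : (∫ ω in (hitEvent S (B (j-1)) T)ᶜ, max (gAux S T s₀ B m j ω - x) 0 ∂ℙ)
        = ∫ ω in (hitEvent S (B (j-1)) T)ᶜ, max (gAux S T s₀ B m (j-1) ω - x) 0 ∂ℙ := by
      by_cases hj1 : j = 1
      · subst hj1
        have hz : ℙ.restrict (hitEvent S (B (1-1)) T)ᶜ = 0 :=
          Measure.restrict_eq_zero.mpr (by simpa using hE0null)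
        rw [hz]
        simp
      · refine setIntegral_congr_fun (hE _).compl ?_
        intro ω hω
        have e1 := hgval_notmem j h1 h2 ω hω
        have e2 : gAux S T s₀ B m (j-1) ω = S T ω :=
          hgval_notmem' (j-1) (by omega) (by omega) ω hω
        simp only [e1, e2]
    have hmean : (∫ ω in hitEvent S (B (j-1)) T, max (gAux S T s₀ B m (j-1) ω - x) 0 ∂ℙ)
        = (ℙ (hitEvent S (B (j-1)) T)).toReal * max (B (j-1) - x) 0 := by
      have heq : EqOn (fun ω => max (gAux S T s₀ B m (j-1) ω - x) 0)
          (fun _ => max (B (j-1) - x) 0) (hitEvent S (B (j-1)) T) := by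
        intro ω hω
        simp only [hgval_mem (j-1) (by omega) ω hω]
      rw [setIntegral_congr_fun (hE _) heq, setIntegral_const, smul_eq_mul, measureReal_def]
    linarith [hsplit, hsplit', hcompl, hmean]
  -- the key telescoping identity
  have hkey : ∀ (x : ℝ) (j : ℕ), 1 ≤ j → j ≤ m + 1 →
      (∑ i ∈ Finset.Ico 1 j,
          ((∫ ω in hitEvent S (B (i-1)) T, max (gAux S T s₀ B m i ω - x) 0 ∂ℙ)
            - (ℙ (hitEvent S (B i) T)).toReal * max (B i - x) 0))
        + (∫ ω in hitEvent S (B (j-1)) T, max (gAux S T s₀ B m j ω - x) 0 ∂ℙ)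
        = ∫ ω, max (gAux S T s₀ B m j ω - x) 0 ∂ℙ := by
    intro x j
    induction j with
    | zero => intro h; omega
    | succ k ih =>
      intro h1 h2
      by_cases hk : k = 0
      · subst hk
        simp only [Finset.Ico_self, Finset.sum_empty, zero_add]
        have hs := hstep x 1 le_rfl (by omega)
        have h0int : ∫ ω, max (gAux S T s₀ B m 0 ω - x) 0 ∂ℙ = max (B 0 - x) 0 := by
          have hv : ∀ ω, gAux S T s₀ B m 0 ω = B 0 := by
            intro ω; unfold gAux; rw [if_pos rfl, hB0]
          simp only [hv]
          rw [integral_const]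
          simp
        have hP0 : (ℙ (hitEvent S (B 0) T)).toReal = 1 := by
          have h1' : ℙ (hitEvent S (B 0) T) = 1 :=
            (prob_compl_eq_zero_iff (hE (B 0))).mp hE0null
          rw [h1']
          simp
        rw [hs]
        show _ = _ + (∫ ω, max (gAux S T s₀ B m 0 ω - x) 0 ∂ℙ)
          - (ℙ (hitEvent S (B 0) T)).toReal * max (B 0 - x) 0
        rw [h0int, hP0]
        ring
      · have hk1 : 1 ≤ k := by omega
        have ihk := ih hk1 (by omega)
        have hs := hstep x (k+1) (by omega) h2
        rw [Finset.sum_Ico_succ_top hk1]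
        have hred : k + 1 - 1 = k := rfl
        rw [hred] at hs ⊢
        linarith [ihk, hs]
  -- a.e. identification of the stopped value with gAux
  constructor
  · intro j hj1 hjm x
    have hae : ∀ i, 1 ≤ i → i ≤ m →
        (fun ω => max (stopVal S (B i) T ω - x) 0)
          =ᵐ[ℙ] (fun ω => max (gAux S T s₀ B m i ω - x) 0) := by
      intro i h1 h2
      filter_upwards [hS.init] with ω h0
      have hlt : S 0 ω < B i := by
        rw [h0, ← hB0]
        exact hBlt i h2 0 (by omega)
      by_cases hω : ω ∈ hitEvent S (B i) T
      · rw [stopVal_of_mem (hS.contPaths ω) hlt hω, hgval_mem i h2 ω hω]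
      · rw [stopVal_of_not_mem hω, hgval_notmem' i h1 h2 ω hω]
    have hterm : ∀ i, 1 ≤ i → i ≤ m →
        (∫ ω in hitEvent S (B (i-1)) T, max (stopVal S (B i) T ω - x) 0 ∂ℙ)
          = ∫ ω in hitEvent S (B (i-1)) T, max (gAux S T s₀ B m i ω - x) 0 ∂ℙ :=
      fun i h1 h2 => integral_congr_ae (ae_restrict_of_ae (hae i h1 h2))
    have hfull : (∫ ω, max (stopVal S (B j) T ω - x) 0 ∂ℙ)
        = ∫ ω, max (gAux S T s₀ B m j ω - x) 0 ∂ℙ :=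
      integral_congr_ae (hae j hj1 hjm)
    rw [hfull, hterm j hj1 hjm]
    rw [Finset.sum_congr rfl (fun i hi => by
      rw [hterm i (Finset.mem_Ico.mp hi).1 (by
        have := (Finset.mem_Ico.mp hi).2; omega)])]
    exact hkey x j hj1 (by omega)
  · intro x
    have htop : (fun ω => max (S T ω - x) 0)
        = fun ω => max (gAux S T s₀ B m (m+1) ω - x) 0 := by
      funext ω; rw [hgval_top ω]
    have hae : ∀ i, 1 ≤ i → i ≤ m →
        (fun ω => max (stopVal S (B i) T ω - x) 0)
          =ᵐ[ℙ] (fun ω => max (gAux S T s₀ B m i ω - x) 0) := by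
      intro i h1 h2
      filter_upwards [hS.init] with ω h0
      have hlt : S 0 ω < B i := by
        rw [h0, ← hB0]
        exact hBlt i h2 0 (by omega)
      by_cases hω : ω ∈ hitEvent S (B i) T
      · rw [stopVal_of_mem (hS.contPaths ω) hlt hω, hgval_mem i h2 ω hω]
      · rw [stopVal_of_not_mem hω, hgval_notmem' i h1 h2 ω hω]
    have hterm : ∀ i, 1 ≤ i → i ≤ m →
        (∫ ω in hitEvent S (B (i-1)) T, max (stopVal S (B i) T ω - x) 0 ∂ℙ)
          = ∫ ω in hitEvent S (B (i-1)) T, max (gAux S T s₀ B m i ω - x) 0 ∂ℙ :=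
      fun i h1 h2 => integral_congr_ae (ae_restrict_of_ae (hae i h1 h2))
    rw [htop]
    have hk := hkey x (m+1) (by omega) le_rfl
    have hred : m + 1 - 1 = m := rfl
    rw [hred] at hk
    rw [← Finset.Ico_add_one_right_eq_Icc]
    rw [Finset.sum_congr rfl (fun i hi => by
      rw [hterm i (Finset.mem_Ico.mp hi).1 (by
        have := (Finset.mem_Ico.mp hi).2; omega)])]
    exact hk
end
end

section
/- Let s₀ > 0, levels s₀ =: B₀ < B₁ < … < B_m < B_{m+1} < ∞, numbers b(B₁),…,b(B_{m+1}) ∈ [0,1] with b(B₀) := 1, and let c_μ be the call function of a probability measure μ on (0,∞) with mean s₀ such that μ((B_{m+1},∞)) = 0 and the left derivative of c_μ at B_{m+1} equals −b(B_{m+1}). Suppose c^{B₁},…,c^{B_{m+1}} : [0,∞) → [0,s₀] satisfy, for every j = 1,…,m+1: (a) c^{B_j} is convex; (b) the right derivative of c^{B_j} at 0 equals −b(B_{j−1}) and c^{B_j}(0) = b(B_{j−1})·B_{j−1}; (c) the left derivative of c^{B_j} at B_j equals −b(B_j) and c^{B_j}(x) = 0 for all x ≥ B_j; (d) b(B_{j−1})·(B_{j−1}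 − x)⁺ ≤ c^{B_j}(x) for all x ≥ 0; (e) Σ_{j=1}^{m} ( c^{B_j}(x) − b(B_j)·(B_j − x)⁺ ) + c^{B_{m+1}}(x) = c_μ(x) for all x ≥ 0. Then the functions 𝔠^{B_j}(x) := Σ_{i=1}^{j−1} ( c^{B_i}(x) − b(B_i)·(B_i − x)⁺ ) + c^{B_j}(x), j = 1,…,m, map [0,∞) to [0,s₀] and, setting 𝔠^{B_{m+1}} := c_μ, satisfy for every j = 1,…,m: 𝔠^{B_j} is convex; 0 ≤ 𝔠^{B₁} ≤ … ≤ 𝔠^{B_m} ≤ 𝔠^{B_{m+1}} pointwise; the right derivative of 𝔠^{B_j} at 0 equals −1, 𝔠^{B_j}(0) = s₀, and 𝔠^{B_j}(x) = 0 for x ≥ B_j; the left derivative of 𝔠^{B_j} at B_j equals −b(B_j); and x ↦ 𝔠^{B_{j+1}}(x) − 𝔠^{B_j}(x) + b(B_j)·(B_j − x)⁺ is convex on [0,∞). -/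
open MeasureTheory Set Filter

noncomputable section

private lemma maxDeriv (β Bv : ℝ) (hB : 0 < Bv) :
    HasDerivAt (fun x => β * max (Bv - x) 0) (-β) 0 := by
  have h1 : HasDerivAt (fun x : ℝ => β * (Bv - x)) (β * (-1)) 0 :=
    ((hasDerivAt_id (0:ℝ)).const_sub Bv).const_mul β
  have hev : (fun x => β * max (Bv - x) 0) =ᶠ[nhds (0:ℝ)] fun x => β * (Bv - x) := by
    filter_upwards [Iio_mem_nhds hB] with x hx
    rw [max_eq_left (by simp only [mem_Iio] at hx; linarith)]
  simpa using h1.congr_of_eventuallyEq hev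

private lemma support_line {f : ℝ → ℝ} {Bv β : ℝ} (hB : 0 < Bv)
    (hf : ConvexOn ℝ (Ici 0) f) (hfB : f Bv = 0)
    (hder : HasDerivWithinAt f (-β) (Iio Bv) Bv) :
    ∀ x, 0 ≤ x → x ≤ Bv → β * (Bv - x) ≤ f x := by
  intro x hx0 hxB
  rcases eq_or_lt_of_le hxB with rfl | hxB
  · simp [hfB]
  have htend : Tendsto (slope f Bv) (nhdsWithin Bv (Iio Bv)) (nhds (-β)) :=
    (hasDerivWithinAt_iff_tendsto_slope' (notMem_Iio.mpr le_rfl)).mp hder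
  have hslope : slope f Bv x ≤ -β := by
    refine ge_of_tendsto htend ?_
    filter_upwards [self_mem_nhdsWithin,
      mem_nhdsWithin_of_mem_nhds (Ioi_mem_nhds hxB)] with y hy1 hy2
    rw [slope_def_field, slope_def_field]
    exact hf.secant_mono (mem_Ici.mpr (le_of_lt hB)) (mem_Ici.mpr hx0)
      (mem_Ici.mpr (le_trans hx0 (le_of_lt (mem_Ioi.mp hy2))))
      (ne_of_lt hxB) (ne_of_lt (mem_Iio.mp hy1)) (le_of_lt (mem_Ioi.mp hy2))
  rw [slope_def_field, hfB, sub_zero, div_le_iff_of_neg (by linarith)] at hslope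
  linarith

private lemma glue_convex {f : ℝ → ℝ} {Bv β : ℝ} (hB : 0 < Bv)
    (hf : ConvexOn ℝ (Ici 0) f) (hf0 : ∀ x, Bv ≤ x → f x = 0)
    (hder : HasDerivWithinAt f (-β) (Iio Bv) Bv) :
    ConvexOn ℝ (Ici 0) (fun x => f x - β * max (Bv - x) 0) := by
  have hsupp := support_line hB hf (hf0 Bv le_rfl) hder
  set g : ℝ → ℝ := fun x => f x - β * max (Bv - x) 0 with hg
  have hg1 : ∀ x, x ≤ Bv → g x = f x - β * (Bv - x) := fun x hx => by
    simp only [hg]; rw [max_eq_left (by linarith)]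
  have hg2 : ∀ x, Bv ≤ x → g x = 0 := fun x hx => by
    simp only [hg]; rw [max_eq_right (by linarith), hf0 x hx]; ring
  have hgnn : ∀ x, 0 ≤ x → x ≤ Bv → 0 ≤ g x := fun x h0 h1 => by
    rw [hg1 x h1]; have := hsupp x h0 h1; linarith
  have key : ∀ a c : ℝ, a < c → c ≤ Bv →
      (g c - g a) / (c - a) = (f c - f a) / (c - a) + β := by
    intro a c hac hcB
    have hca : (0:ℝ) < c - a := by linarith
    rw [hg1 a (by linarith), hg1 c hcB]
    field_simp
    ring
  refine convexOn_of_slope_mono_adjacent (convex_Ici 0) ?_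
  intro x y z hx hz hxy hyz
  simp only [mem_Ici] at hx hz
  have hy0 : 0 ≤ y := le_trans hx (le_of_lt hxy)
  rcases le_or_gt z Bv with hzB | hzB
  · rw [key x y hxy (by linarith), key y z hyz hzB]
    have := hf.slope_mono_adjacent (mem_Ici.mpr hx) (mem_Ici.mpr hz) hxy hyz
    linarith
  · rcases le_or_gt Bv x with hxB | hxB
    · rw [hg2 x hxB, hg2 y (by linarith), hg2 z (by linarith)]
      simp
    · rcases le_or_gt Bv y with hyB | hyB
      · rw [hg2 y hyB, hg2 z (by linarith), sub_self, zero_div]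
        have hgx : 0 ≤ g x := hgnn x hx (le_of_lt hxB)
        exact div_nonpos_iff.mpr (Or.inr ⟨by linarith, by linarith⟩)
      · have hgy : 0 ≤ g y := hgnn y hy0 (le_of_lt hyB)
        have h1 : (g y - g x) / (y - x) ≤ (g Bv - g y) / (Bv - y) := by
          rw [key x y hxy (le_of_lt hyB), key y Bv hyB le_rfl]
          have := hf.slope_mono_adjacent (mem_Ici.mpr hx)
            (mem_Ici.mpr (le_of_lt hB)) hxy hyB
          linarith
        have h2 : (g Bv - g y) / (Bv - y) ≤ (g z - g y) / (z - y) := by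
          rw [hg2 Bv le_rfl, hg2 z (le_of_lt hzB)]
          rw [div_le_div_iff₀ (by linarith) (by linarith)]
          nlinarith [mul_le_mul_of_nonneg_left (show Bv - y ≤ z - y by linarith) hgy]
        linarith

private lemma convexOn_finset_sum {s : Finset ℕ} {g : ℕ → ℝ → ℝ}
    (h : ∀ i ∈ s, ConvexOn ℝ (Ici (0:ℝ)) (g i)) :
    ConvexOn ℝ (Ici (0:ℝ)) (fun x => ∑ i ∈ s, g i x) := by
  classical
  induction s using Finset.induction_on with
  | empty => simpa using convexOn_const (0:ℝ) (convex_Ici 0)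
  | insert _ _ hnotmem ih =>
      simp only [Finset.sum_insert hnotmem]
      exact (h _ (Finset.mem_insert_self _ _)).add
        (ih fun i hi => h i (Finset.mem_insert_of_mem hi))

private lemma convexOn_congr {s : Set ℝ} {f g : ℝ → ℝ} (hf : ConvexOn ℝ s f)
    (h : ∀ x ∈ s, f x = g x) : ConvexOn ℝ s g :=
  ⟨hf.1, fun x hx y hy a bb ha hb hab => by
    rw [← h _ hx, ← h _ hy, ← h _ (hf.1 hx hy ha hb hab)]
    exact hf.2 hx hy ha hb hab⟩
theorem stmt_6 (s₀ : ℝ) (hs₀ : 0 < s₀) (m : ℕ) (B : ℕ → ℝ) (hB0 : B 0 = s₀)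
    (hBmono : ∀ j, j ≤ m → B j < B (j + 1))
    (b : ℕ → ℝ) (hb0 : b 0 = 1) (hb : ∀ j, 1 ≤ j → j ≤ m + 1 → b j ∈ Icc (0:ℝ) 1)
    (μ : Measure ℝ) (hμ : IsProbabilityMeasure μ) (hμsupp : μ (Iic 0) = 0)
    (hμmean : (∫ y, y ∂μ) = s₀) (hμbdd : μ (Ioi (B (m + 1))) = 0)
    (hbtop : HasDerivWithinAt (fun x => ∫ y, max (y - x) 0 ∂μ) (-(b (m + 1)))
      (Iio (B (m + 1))) (B (m + 1)))
    (c : ℕ → ℝ → ℝ)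
    (hc : ∀ j, 1 ≤ j → j ≤ m + 1 →
      (∀ x : ℝ, 0 ≤ x → c j x ∈ Icc 0 s₀) ∧
      ConvexOn ℝ (Ici 0) (c j) ∧
      HasDerivWithinAt (c j) (-(b (j - 1))) (Ioi 0) 0 ∧
      c j 0 = b (j - 1) * B (j - 1) ∧
      HasDerivWithinAt (c j) (-(b j)) (Iio (B j)) (B j) ∧
      (∀ x : ℝ, B j ≤ x → c j x = 0) ∧
      (∀ x : ℝ, 0 ≤ x → b (j - 1) * max (B (j - 1) - x) 0 ≤ c j x))
    (hsum : ∀ x : ℝ, 0 ≤ x →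
      (∑ j ∈ Finset.Icc 1 m, (c j x - b j * max (B j - x) 0)) + c (m + 1) x
        = ∫ y, max (y - x) 0 ∂μ) :
    ∀ H : ℕ → ℝ → ℝ,
      (∀ j, 1 ≤ j → j ≤ m → ∀ x : ℝ,
        H j x = (∑ i ∈ Finset.Ico 1 j, (c i x - b i * max (B i - x) 0)) + c j x) →
      (∀ x : ℝ, H (m + 1) x = ∫ y, max (y - x) 0 ∂μ) →
      ∀ j, 1 ≤ j → j ≤ m →
        (∀ x : ℝ, 0 ≤ x → H j x ∈ Icc 0 s₀) ∧
        ConvexOn ℝ (Ici 0) (H j) ∧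
        (∀ x : ℝ, 0 ≤ x → 0 ≤ H 1 x ∧ H j x ≤ H (j + 1) x) ∧
        HasDerivWithinAt (H j) (-1) (Ioi 0) 0 ∧
        H j 0 = s₀ ∧
        (∀ x : ℝ, B j ≤ x → H j x = 0) ∧
        HasDerivWithinAt (H j) (-(b j)) (Iio (B j)) (B j) ∧
        ConvexOn ℝ (Ici 0) (fun x => H (j + 1) x - H j x + b j * max (B j - x) 0) := by
  intro H hH hHtop j hj1 hjm
  have hm1 : 1 ≤ m := le_trans hj1 hjm
  -- monotonicity of the levels
  have hBle : ∀ k : ℕ, k ≤ m + 1 → ∀ i : ℕ, i ≤ k → B i ≤ B k := by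
    intro k
    induction k with
    | zero =>
        intro _ i hi
        obtain rfl : i = 0 := Nat.le_zero.mp hi
        exact le_rfl
    | succ n ih =>
        intro hk i hi
        rcases Nat.eq_or_lt_of_le hi with rfl | hlt
        · exact le_rfl
        · exact le_trans (ih (by omega) i (by omega)) (le_of_lt (hBmono n (by omega)))
  have hBpos : ∀ i, i ≤ m + 1 → 0 < B i := fun i hi =>
    lt_of_lt_of_le (by rw [hB0]; exact hs₀ : (0:ℝ) < B 0) (hBle i hi 0 (Nat.zero_le _))
  -- the basic step identity
  have hstep : ∀ k, 1 ≤ k → k < m → ∀ x : ℝ,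
      H (k+1) x = H k x + (c (k+1) x - b k * max (B k - x) 0) := by
    intro k hk1 hkm x
    rw [hH (k+1) (by omega) (by omega) x, hH k hk1 (by omega) x,
        Finset.sum_Ico_succ_top (by omega : 1 ≤ k)]
    ring
  have hstepm : ∀ x : ℝ, 0 ≤ x →
      H (m+1) x = H m x + (c (m+1) x - b m * max (B m - x) 0) := by
    intro x hx
    rw [hHtop x, ← hsum x hx, hH m hm1 le_rfl x,
        show Finset.Icc 1 m = Finset.Ico 1 (m+1) from by ext i; simp only [Finset.mem_Icc, Finset.mem_Ico]; omega,
        Finset.sum_Ico_succ_top (by omega : 1 ≤ m)]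
    ring
  have hstep' : ∀ k, 1 ≤ k → k ≤ m → ∀ x : ℝ, 0 ≤ x →
      H (k+1) x = H k x + (c (k+1) x - b k * max (B k - x) 0) := by
    intro k hk1 hkm x hx
    rcases eq_or_lt_of_le hkm with rfl | h
    · exact hstepm x hx
    · exact hstep k hk1 h x
  have hincr : ∀ k, 1 ≤ k → k ≤ m → ∀ x : ℝ, 0 ≤ x →
      0 ≤ c (k+1) x - b k * max (B k - x) 0 := by
    intro k hk1 hkm x hx
    have h := (hc (k+1) (by omega) (by omega)).2.2.2.2.2.2 x hx
    simp only [Nat.add_sub_cancel] at h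
    linarith
  have hmono : ∀ k, 1 ≤ k → k ≤ m → ∀ x : ℝ, 0 ≤ x → H k x ≤ H (k+1) x := by
    intro k hk1 hkm x hx
    rw [hstep' k hk1 hkm x hx]
    linarith [hincr k hk1 hkm x hx]
  have hchain : ∀ k l, 1 ≤ k → k ≤ l → l ≤ m + 1 → ∀ x : ℝ, 0 ≤ x → H k x ≤ H l x := by
    intro k l hk1 hkl
    induction l, hkl using Nat.le_induction with
    | base => exact fun _ x _ => le_rfl
    | succ n hn ih =>
        intro hnm x hx
        exact le_trans (ih (by omega) x hx) (hmono n (by omega) (by omega) x hx)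
  have hH1 : ∀ x : ℝ, H 1 x = c 1 x := by
    intro x; rw [hH 1 le_rfl hm1 x]; simp
  have hc1 := hc 1 le_rfl (by omega)
  have hH1nn : ∀ x : ℝ, 0 ≤ x → 0 ≤ H 1 x := fun x hx => by
    rw [hH1 x]; exact (hc1.1 x hx).1
  -- the call function is bounded by s₀
  have hintid : Integrable (fun y : ℝ => y) μ := by
    by_contra h
    rw [integral_undef h] at hμmean
    linarith
  have haepos : ∀ᵐ y ∂μ, 0 < y := by
    rw [ae_iff]
    have hset : {y : ℝ | ¬ 0 < y} = Iic 0 := by ext y; simp [not_lt]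
    rw [hset]; exact hμsupp
  have hintmax : ∀ x : ℝ, 0 ≤ x → Integrable (fun y => max (y - x) 0) μ := by
    intro x hx
    refine Integrable.mono' hintid.abs
      ((continuous_id.sub continuous_const).max continuous_const).aestronglyMeasurable ?_
    refine Eventually.of_forall fun y => ?_
    rw [Real.norm_eq_abs, abs_of_nonneg (le_max_right _ _)]
    exact le_trans (max_le_max (by linarith) le_rfl)
      (max_le (le_abs_self y) (abs_nonneg y))
  have hcμle : ∀ x : ℝ, 0 ≤ x → (∫ y, max (y - x) 0 ∂μ) ≤ s₀ := by
    intro x hx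
    rw [← hμmean]
    refine integral_mono_ae (hintmax x hx) hintid ?_
    filter_upwards [haepos] with y hy
    exact max_le (by linarith) (le_of_lt hy)
  -- membership in [0, s₀]
  have hIcc : ∀ x : ℝ, 0 ≤ x → H j x ∈ Icc 0 s₀ := by
    intro x hx
    constructor
    · exact le_trans (hH1nn x hx) (hchain 1 j le_rfl hj1 (by omega) x hx)
    · have h1 := hchain j (m+1) hj1 (by omega) le_rfl x hx
      rw [hHtop x] at h1
      exact le_trans h1 (hcμle x hx)
  -- convexity of H j
  have hgconv : ∀ i, 1 ≤ i → i ≤ m + 1 →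
      ConvexOn ℝ (Ici 0) (fun x => c i x - b i * max (B i - x) 0) := fun i hi1 him =>
    glue_convex (hBpos i him) (hc i hi1 him).2.1
      (hc i hi1 him).2.2.2.2.2.1 (hc i hi1 him).2.2.2.2.1
  have hHjconv : ConvexOn ℝ (Ici 0) (H j) := by
    have hfun : H j = fun x => (∑ i ∈ Finset.Ico 1 j, (c i x - b i * max (B i - x) 0)) + c j x :=
      funext (hH j hj1 hjm)
    rw [hfun]
    refine ConvexOn.add ?_ (hc j hj1 (by omega)).2.1
    exact convexOn_finset_sum fun i hi => hgconv i (Finset.mem_Ico.mp hi).1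
      (by have := (Finset.mem_Ico.mp hi).2; omega)
  -- derivative at 0
  have hderiv0 : ∀ k, k ≤ m → 1 ≤ k → HasDerivWithinAt (H k) (-1) (Ioi 0) 0 := by
    intro k
    induction k with
    | zero => intro _ h; exact absurd h (by omega)
    | succ n ih =>
        intro hkm _
        by_cases hn : n = 0
        · subst hn
          have h2 : HasDerivWithinAt (c 1) (-1) (Ioi 0) 0 := by
            simpa [hb0] using hc1.2.2.1
          exact h2.congr (fun y _ => hH1 y) (hH1 0)
        · have hn1 : 1 ≤ n := Nat.one_le_iff_ne_zero.mpr hn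
          have hder := ih (by omega) hn1
          have h1 := (hc (n+1) (by omega) (by omega)).2.2.1
          simp only [Nat.add_sub_cancel] at h1
          have h2 : HasDerivWithinAt (fun x => b n * max (B n - x) 0) (-(b n)) (Ioi 0) 0 :=
            (maxDeriv (b n) (B n) (hBpos n (by omega))).hasDerivWithinAt
          have h3 := hder.add (h1.sub h2)
          have hG : HasDerivWithinAt
              (fun x => H n x + (c (n+1) x - b n * max (B n - x) 0)) (-1) (Ioi 0) 0 := by
            rw [show (-1:ℝ) = -1 + (-(b n) - -(b n)) by ring]; exact h3
          exact hG.congr (fun y _ => hstep n hn1 (by omega) y) (hstep n hn1 (by omega) 0)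
  -- value at 0
  have hH0 : ∀ k, k ≤ m → 1 ≤ k → H k 0 = s₀ := by
    intro k
    induction k with
    | zero => intro _ h; exact absurd h (by omega)
    | succ n ih =>
        intro hkm _
        by_cases hn : n = 0
        · subst hn
          rw [hH1 0, hc1.2.2.2.1]
          norm_num [hb0, hB0]
        · have hn1 : 1 ≤ n := Nat.one_le_iff_ne_zero.mpr hn
          rw [hstep n hn1 (by omega) 0]
          have hc0 := (hc (n+1) (by omega) (by omega)).2.2.2.1
          simp only [Nat.add_sub_cancel] at hc0
          rw [hc0, ih (by omega) hn1,
            max_eq_left (by have := hBpos n (by omega); linarith)]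
          ring
  -- vanishing beyond B j
  have hvanish : ∀ x : ℝ, B j ≤ x → H j x = 0 := by
    intro x hx
    rw [hH j hj1 hjm x]
    have hzero : ∀ i ∈ Finset.Ico 1 j, c i x - b i * max (B i - x) 0 = 0 := by
      intro i hi
      simp only [Finset.mem_Ico] at hi
      have hBi : B i ≤ B j := hBle j (by omega) i (by omega)
      have h1 : c i x = 0 := (hc i hi.1 (by omega)).2.2.2.2.2.1 x (le_trans hBi hx)
      rw [h1, max_eq_right (by linarith), mul_zero, sub_zero]
    rw [Finset.sum_eq_zero hzero, (hc j hj1 (by omega)).2.2.2.2.2.1 x hx, add_zero]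
  -- derivative at B j
  have hnear : ∀ x ∈ Ioi (B (j-1)), H j x = c j x := by
    intro x hx
    rw [hH j hj1 hjm x]
    have hzero : ∀ i ∈ Finset.Ico 1 j, c i x - b i * max (B i - x) 0 = 0 := by
      intro i hi
      simp only [Finset.mem_Ico] at hi
      have hBi : B i ≤ B (j-1) := hBle (j-1) (by omega) i (by omega)
      have hxgt : B i ≤ x := le_trans hBi (le_of_lt hx)
      have h1 : c i x = 0 := (hc i hi.1 (by omega)).2.2.2.2.2.1 x hxgt
      rw [h1, max_eq_right (by linarith), mul_zero, sub_zero]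
    rw [Finset.sum_eq_zero hzero, zero_add]
  have hBj1 : B (j-1) < B j := by
    have h := hBmono (j-1) (by omega)
    have hj' : j - 1 + 1 = j := by omega
    rwa [hj'] at h
  have hderivB : HasDerivWithinAt (H j) (-(b j)) (Iio (B j)) (B j) := by
    have h := (hc j hj1 (by omega)).2.2.2.2.1
    have hev : H j =ᶠ[nhds (B j)] c j := by
      filter_upwards [Ioi_mem_nhds hBj1] with x hx
      exact hnear x hx
    exact h.congr_of_eventuallyEq (hev.filter_mono nhdsWithin_le_nhds)
      (hnear (B j) (mem_Ioi.mpr hBj1))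
  -- item 8
  have hitem8 : ConvexOn ℝ (Ici 0) (fun x => H (j+1) x - H j x + b j * max (B j - x) 0) := by
    refine convexOn_congr (hc (j+1) (by omega) (by omega)).2.1 fun x hx => ?_
    simp only [mem_Ici] at hx
    linarith [hstep' j hj1 hjm x hx]
  exact ⟨hIcc, hHjconv, fun x hx => ⟨hH1nn x hx, hmono j hj1 hjm x hx⟩,
    hderiv0 j hjm hj1, hH0 j hjm hj1, hvanish, hderivB, hitem8⟩
end
end

section
/- Let s₀ > 0, levels s₀ =: B₀ < B₁ < … < B_m < B_{m+1} < ∞, numbers b(B₁),…,b(B_m) ∈ [0,1] with b(B₀) := 1, and let c_μ be the call function of a probability measure μ on (0,∞) with mean s₀ such that μ((B_{m+1},∞)) = 0; set b(B_{m+1}) := −(left derivative of c_μ at B_{m+1}). Suppose 𝔠^{B₁},…,𝔠^{B_m} : [0,∞) → [0,s₀] satisfy, with 𝔠^{B_{m+1}} := c_μ, for every j = 1,…,m: 𝔠^{B_j} is convex; 0 ≤ 𝔠^{B₁} ≤ … ≤ 𝔠^{B_m} ≤ 𝔠^{B_{m+1}} pointwise; the right derivative of 𝔠^{B_j} at 0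 equals −1, 𝔠^{B_j}(0) = s₀, and 𝔠^{B_j}(x) = 0 for x ≥ B_j; the left derivative of 𝔠^{B_j} at B_j equals −b(B_j); and x ↦ 𝔠^{B_{j+1}}(x) − 𝔠^{B_j}(x) + b(B_j)·(B_j − x)⁺ is convex on [0,∞). Define 𝔠^{B₀}(x) := (s₀ − x)⁺ and c^{B_j}(x) := 𝔠^{B_j}(x) − 𝔠^{B_{j−1}}(x) + b(B_{j−1})·(B_{j−1} − x)⁺ for j = 1,…,m+1. Then for every j = 1,…,m+1: c^{B_j} maps [0,∞) to [0,s₀] and is convex; the right derivative of c^{B_j} at 0 equals −b(B_{j−1}) and c^{B_j}(0) = b(B_{j−1})·B_{j−1}; the left derivative of c^{B_j} at B_j equals −b(B_j) and c^{B_j}(x) = 0 for all x ≥ B_j; b(B_{j−1})·(B_{j−1} − x)⁺ ≤ c^{B_j}(x) for all x ≥ 0; and Σ_{j=1}^{m} ( c^{B_j}(x) − b(B_j)·(B_j − x)⁺ ) + c^{B_{m+1}}(x) = c_μ(x) for all x ≥ 0. -/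
open MeasureTheory Set Filter Topology

noncomputable section

/-- Tangent line bound to the right for convex functions on `Ici 0`. -/
lemma tangent_right {f : ℝ → ℝ} {d a x : ℝ} (hf : ConvexOn ℝ (Ici 0) f)
    (ha : (0:ℝ) ≤ a) (hd : HasDerivWithinAt f d (Ioi a) a) (hax : a < x) :
    f a + d * (x - a) ≤ f x := by
  have hxs : x ∈ Ici (0:ℝ) := le_trans ha hax.le
  rw [hasDerivWithinAt_iff_tendsto_slope] at hd
  have hset : Ioi a \ {a} = Ioi a := diff_singleton_eq_self (by simp)
  rw [hset] at hd
  have key : d ≤ (f x - f a) / (x - a) := by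
    refine le_of_tendsto hd ?_
    filter_upwards [Ioo_mem_nhdsGT hax] with z hz
    have := hf.secant_mono (a := a) (x := z) (y := x) ha
      (le_trans ha hz.1.le) hxs (ne_of_gt hz.1) (ne_of_gt hax) hz.2.le
    simpa [slope_def_field] using this
  have hxa : 0 < x - a := by linarith
  have := (le_div_iff₀ hxa).mp key
  linarith

/-- Tangent line bound to the left for convex functions on `Ici 0`. -/
lemma tangent_left {f : ℝ → ℝ} {d a x : ℝ} (hf : ConvexOn ℝ (Ici 0) f)
    (hx : (0:ℝ) ≤ x) (ha : (0:ℝ) ≤ a) (hd : HasDerivWithinAt f d (Iio a) a) (hax : x < a) :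
    f a + d * (x - a) ≤ f x := by
  rw [hasDerivWithinAt_iff_tendsto_slope] at hd
  have hset : Iio a \ {a} = Iio a := diff_singleton_eq_self (by simp)
  rw [hset] at hd
  have key : (f x - f a) / (x - a) ≤ d := by
    refine ge_of_tendsto hd ?_
    filter_upwards [Ioo_mem_nhdsLT hax] with z hz
    have := hf.secant_mono (a := a) (x := x) (y := z) ha hx
      (le_trans hx hz.1.le) (ne_of_lt hax) (ne_of_lt hz.2) hz.1.le
    simpa [slope_def_field] using this
  have hxa : x - a < 0 := by linarith
  have := (div_le_iff_of_neg hxa).mp key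
  linarith

section cmu

variable {μ : Measure ℝ} {T s₀ : ℝ}

lemma cmu_ae (h1 : μ (Iic 0) = 0) (h2 : μ (Ioi T) = 0) :
    ∀ᵐ y ∂μ, 0 < y ∧ y ≤ T := by
  rw [ae_iff]
  refine measure_mono_null (fun y hy => ?_) (measure_union_null h1 h2)
  simp only [mem_setOf_eq, not_and, not_le, not_lt] at hy
  rcases le_or_gt y 0 with h | h
  · exact mem_union_left _ h
  · exact mem_union_right _ (hy h)

lemma cmu_integrable [IsProbabilityMeasure μ] (hae : ∀ᵐ y ∂μ, 0 < y ∧ y ≤ T) (x : ℝ) :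
    Integrable (fun y => max (y - x) 0) μ := by
  refine Integrable.mono' (integrable_const (max (T - x) 0))
    ((continuous_id.sub continuous_const).max continuous_const).aestronglyMeasurable ?_
  filter_upwards [hae] with y hy
  rw [Real.norm_eq_abs, abs_of_nonneg (le_max_right _ _)]
  exact max_le_max (by linarith [hy.2]) le_rfl

lemma cmu_integrable_id [IsProbabilityMeasure μ] (hae : ∀ᵐ y ∂μ, 0 < y ∧ y ≤ T) :
    Integrable (fun y : ℝ => y) μ := by
  refine Integrable.mono' (integrable_const (max T 0))
    continuous_id.aestronglyMeasurable ?_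
  filter_upwards [hae] with y hy
  rw [Real.norm_eq_abs, abs_of_pos hy.1]
  exact le_trans hy.2 (le_max_left _ _)

lemma cmu_zero [IsProbabilityMeasure μ] (hae : ∀ᵐ y ∂μ, 0 < y ∧ y ≤ T)
    (hmean : (∫ y, y ∂μ) = s₀) : (∫ y, max (y - 0) 0 ∂μ) = s₀ := by
  rw [← hmean]
  refine integral_congr_ae ?_
  filter_upwards [hae] with y hy
  rw [sub_zero, max_eq_left hy.1.le]

lemma cmu_nonneg (x : ℝ) : 0 ≤ ∫ y, max (y - x) 0 ∂μ :=
  integral_nonneg fun y => le_max_right _ _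

lemma cmu_le [IsProbabilityMeasure μ] (hae : ∀ᵐ y ∂μ, 0 < y ∧ y ≤ T)
    (hmean : (∫ y, y ∂μ) = s₀) {x : ℝ} (hx : 0 ≤ x) :
    (∫ y, max (y - x) 0 ∂μ) ≤ s₀ := by
  rw [← cmu_zero hae hmean]
  exact integral_mono (cmu_integrable hae x) (cmu_integrable hae 0)
    (fun y => max_le_max (by linarith) le_rfl)

lemma cmu_sub_int [IsProbabilityMeasure μ] (hae : ∀ᵐ y ∂μ, 0 < y ∧ y ≤ T)
    (hmean : (∫ y, y ∂μ) = s₀) (x : ℝ) : (∫ y, (y - x) ∂μ) = s₀ - x := by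
  rw [integral_sub (cmu_integrable_id hae) (integrable_const x), hmean, integral_const]
  simp

lemma cmu_lb [IsProbabilityMeasure μ] (hae : ∀ᵐ y ∂μ, 0 < y ∧ y ≤ T)
    (hmean : (∫ y, y ∂μ) = s₀) (x : ℝ) : s₀ - x ≤ ∫ y, max (y - x) 0 ∂μ := by
  rw [← cmu_sub_int hae hmean x]
  exact integral_mono ((cmu_integrable_id hae).sub (integrable_const x))
    (cmu_integrable hae x) (fun y => le_max_left _ _)

lemma cmu_vanish (hae : ∀ᵐ y ∂μ, 0 < y ∧ y ≤ T) {x : ℝ} (hx : T ≤ x) :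
    (∫ y, max (y - x) 0 ∂μ) = 0 := by
  have h : (fun y => max (y - x) 0) =ᵐ[μ] (fun _ => (0:ℝ)) := by
    filter_upwards [hae] with y hy
    rw [max_eq_right (by linarith [hy.2])]
  rw [integral_congr_ae h, integral_const, smul_zero]

lemma cmu_convex [IsProbabilityMeasure μ] (hae : ∀ᵐ y ∂μ, 0 < y ∧ y ≤ T) :
    ConvexOn ℝ (Ici 0) (fun x => ∫ y, max (y - x) 0 ∂μ) := by
  refine ConvexOn.subset ?_ (subset_univ _) (convex_Ici 0)
  refine ⟨convex_univ, fun p _ q _ a c ha hc hac => ?_⟩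
  simp only [smul_eq_mul]
  calc (∫ y, max (y - (a * p + c * q)) 0 ∂μ)
      ≤ ∫ y, (a * max (y - p) 0 + c * max (y - q) 0) ∂μ := by
        refine integral_mono (cmu_integrable hae _)
          (((cmu_integrable hae p).const_mul a).add ((cmu_integrable hae q).const_mul c))
          (fun y => ?_)
        have hA : a * (y - p) ≤ a * max (y - p) 0 :=
          mul_le_mul_of_nonneg_left (le_max_left _ _) ha
        have hB : c * (y - q) ≤ c * max (y - q) 0 :=
          mul_le_mul_of_nonneg_left (le_max_left _ _) hc
        refine max_le ?_ (by positivity)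
        have hy : y - (a * p + c * q) = a * (y - p) + c * (y - q) := by
          linear_combination (-y) * hac
        rw [hy]; exact add_le_add hA hB
    _ = a * (∫ y, max (y - p) 0 ∂μ) + c * (∫ y, max (y - q) 0 ∂μ) := by
        rw [integral_add ((cmu_integrable hae p).const_mul a)
          ((cmu_integrable hae q).const_mul c), integral_const_mul, integral_const_mul]

lemma cmu_measure_tendsto (μ : Measure ℝ) [IsProbabilityMeasure μ] :
    Tendsto (fun x : ℝ => (μ (Ioc 0 x)).toReal) (𝓝[>] 0) (𝓝 0) := by
  have hseq : Tendsto (fun n : ℕ => μ (Ioc (0:ℝ) (1 / (n + 1)))) atTop (𝓝 0) := by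
    have h1 : (⋂ n : ℕ, Ioc (0:ℝ) (1 / (n + 1))) = ∅ := by
      ext y
      simp only [mem_iInter, mem_Ioc, mem_empty_iff_false, iff_false, not_forall]
      by_cases hy : 0 < y
      · obtain ⟨n, hn⟩ := exists_nat_one_div_lt hy
        exact ⟨n, fun h => absurd h.2 (not_le.mpr hn)⟩
      · exact ⟨0, fun h => hy h.1⟩
    have h2 := tendsto_measure_iInter_atTop
      (μ := μ) (s := fun n : ℕ => Ioc (0:ℝ) (1 / (n + 1)))
      (fun n => measurableSet_Ioc.nullMeasurableSet)
      (fun i j hij => Ioc_subset_Ioc le_rfl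
        (by
          apply one_div_le_one_div_of_le
          · positivity
          · exact_mod_cast by exact_mod_cast add_le_add_left (Nat.cast_le.mpr hij) 1))
      ⟨0, measure_ne_top μ _⟩
    rw [h1] at h2
    simpa [Function.comp_def] using h2
  refine tendsto_order.2 ⟨fun a ha => ?_, fun a ha => ?_⟩
  · filter_upwards with x
    exact lt_of_lt_of_le ha ENNReal.toReal_nonneg
  · have hofReal := ENNReal.ofReal_pos.mpr ha
    obtain ⟨n, hn⟩ := (hseq.eventually_lt_const hofReal).exists
    have hpos : (0:ℝ) < 1 / (n + 1) := by positivity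
    filter_upwards [Ioo_mem_nhdsGT hpos] with x hx
    refine ENNReal.toReal_lt_of_lt_ofReal (lt_of_le_of_lt ?_ hn)
    exact measure_mono (Ioc_subset_Ioc le_rfl hx.2.le)

lemma cmu_deriv0 [IsProbabilityMeasure μ] (hae : ∀ᵐ y ∂μ, 0 < y ∧ y ≤ T)
    (hmean : (∫ y, y ∂μ) = s₀) :
    HasDerivWithinAt (fun x => ∫ y, max (y - x) 0 ∂μ) (-1) (Ioi 0) 0 := by
  rw [hasDerivWithinAt_iff_tendsto_slope]
  have hset : Ioi (0:ℝ) \ {0} = Ioi 0 := diff_singleton_eq_self (by simp)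
  rw [hset]
  have h0 : (∫ y, max (y - 0) 0 ∂μ) = s₀ := cmu_zero hae hmean
  have upper : Tendsto (fun x : ℝ => -1 + (μ (Ioc 0 x)).toReal) (𝓝[>] 0) (𝓝 (-1)) := by
    simpa using tendsto_const_nhds.add (cmu_measure_tendsto μ)
  refine tendsto_of_tendsto_of_tendsto_of_le_of_le'
    (tendsto_const_nhds : Tendsto (fun _ : ℝ => (-1:ℝ)) _ _) upper ?_ ?_
  · filter_upwards [self_mem_nhdsWithin] with x (hx : x ∈ Ioi (0:ℝ))
    have hlb := cmu_lb hae hmean x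
    rw [slope_def_field, h0]
    rw [le_div_iff₀ (by simpa using hx)]
    simp only [sub_zero]
    linarith
  · filter_upwards [self_mem_nhdsWithin] with x (hx : x ∈ Ioi (0:ℝ))
    have hx0 : (0:ℝ) < x := hx
    have key : (∫ y, max (y - x) 0 ∂μ) ≤ (s₀ - x) + x * (μ (Ioc 0 x)).toReal := by
      have hind : Integrable ((Ioc (0:ℝ) x).indicator (fun _ => x)) μ :=
        (integrable_const x).indicator measurableSet_Ioc
      have hsub : Integrable (fun y : ℝ => y - x) μ :=
        (cmu_integrable_id hae).sub (integrable_const x)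
      have hint : (∫ y, ((y - x) + (Ioc (0:ℝ) x).indicator (fun _ => x) y) ∂μ)
          = (s₀ - x) + x * (μ (Ioc 0 x)).toReal := by
        rw [integral_add hsub hind,
          cmu_sub_int hae hmean, integral_indicator_const _ measurableSet_Ioc, smul_eq_mul, mul_comm, measureReal_def]
      rw [← hint]
      refine integral_mono_ae (cmu_integrable hae x) (hsub.add hind) ?_
      filter_upwards [hae] with y hy
      by_cases hxy : y ≤ x
      · rw [indicator_of_mem (mem_Ioc.mpr ⟨hy.1, hxy⟩)]
        exact max_le (by linarith) (by linarith [hy.1])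
      · rw [indicator_of_notMem (by simp [mem_Ioc]; intro _; linarith)]
        exact max_le (by linarith) (by linarith)
    rw [slope_def_field, h0]
    rw [div_le_iff₀ (by simpa using hx)]
    simp only [sub_zero]
    nlinarith [ENNReal.toReal_nonneg (a := μ (Ioc 0 x))]

end cmu
/-- From a decomposition `𝔠^{B₁},…,𝔠^{B_m}` as in the one-maturity
characterization (with `𝔠^{B₀}(x) := (s₀ − x)⁺` and `𝔠^{B_{m+1}} := c_μ`), the functions
`c^{B_j}(x) = 𝔠^{B_j}(x) − 𝔠^{B_{j−1}}(x) + b(B_{j−1})·(B_{j−1} − x)⁺`, `j = 1,…,m+1`,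
satisfy the conditions of the multi-maturity characterization for a single maturity. -/
theorem stmt_7 (s₀ : ℝ) (hs₀ : 0 < s₀) (m : ℕ) (B : ℕ → ℝ) (hB0 : B 0 = s₀)
    (hBmono : ∀ j, j ≤ m → B j < B (j + 1))
    (b : ℕ → ℝ) (hb0 : b 0 = 1) (hb : ∀ j, 1 ≤ j → j ≤ m → b j ∈ Icc (0:ℝ) 1)
    (μ : Measure ℝ) (hμ : IsProbabilityMeasure μ) (hμsupp : μ (Iic 0) = 0)
    (hμmean : (∫ y, y ∂μ) = s₀) (hμbdd : μ (Ioi (B (m + 1))) = 0)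
    (hbtop : HasDerivWithinAt (fun x => ∫ y, max (y - x) 0 ∂μ) (-(b (m + 1)))
      (Iio (B (m + 1))) (B (m + 1)))
    (𝔠 : ℕ → ℝ → ℝ)
    (h𝔠zero : ∀ x : ℝ, 𝔠 0 x = max (s₀ - x) 0)
    (h𝔠top : ∀ x : ℝ, 𝔠 (m + 1) x = ∫ y, max (y - x) 0 ∂μ)
    (h𝔠 : ∀ j, 1 ≤ j → j ≤ m →
      ConvexOn ℝ (Ici 0) (𝔠 j) ∧
      (∀ x : ℝ, 0 ≤ x → 𝔠 j x ∈ Icc 0 s₀) ∧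
      (∀ x : ℝ, 0 ≤ x → 0 ≤ 𝔠 1 x ∧ 𝔠 j x ≤ 𝔠 (j + 1) x) ∧
      HasDerivWithinAt (𝔠 j) (-1) (Ioi 0) 0 ∧
      𝔠 j 0 = s₀ ∧
      (∀ x : ℝ, B j ≤ x → 𝔠 j x = 0) ∧
      HasDerivWithinAt (𝔠 j) (-(b j)) (Iio (B j)) (B j) ∧
      ConvexOn ℝ (Ici 0) (fun x => 𝔠 (j + 1) x - 𝔠 j x + b j * max (B j - x) 0)) :
    ∀ c : ℕ → ℝ → ℝ,
      (∀ j, 1 ≤ j → j ≤ m + 1 → ∀ x : ℝ,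
        c j x = 𝔠 j x - 𝔠 (j - 1) x + b (j - 1) * max (B (j - 1) - x) 0) →
      (∀ j, 1 ≤ j → j ≤ m + 1 →
        (∀ x : ℝ, 0 ≤ x → c j x ∈ Icc 0 s₀) ∧
        ConvexOn ℝ (Ici 0) (c j) ∧
        HasDerivWithinAt (c j) (-(b (j - 1))) (Ioi 0) 0 ∧
        c j 0 = b (j - 1) * B (j - 1) ∧
        HasDerivWithinAt (c j) (-(b j)) (Iio (B j)) (B j) ∧
        (∀ x : ℝ, B j ≤ x → c j x = 0) ∧
        (∀ x : ℝ, 0 ≤ x → b (j - 1) * max (B (j - 1) - x) 0 ≤ c j x)) ∧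
      (∀ x : ℝ, 0 ≤ x →
        (∑ j ∈ Finset.Icc 1 m, (c j x - b j * max (B j - x) 0)) + c (m + 1) x
          = ∫ y, max (y - x) 0 ∂μ) := by
  intro c hc
  have hBle : ∀ i j : ℕ, i ≤ j → j ≤ m + 1 → B i ≤ B j := by
    intro i j hij
    induction j, hij using Nat.le_induction with
    | base => intro _; exact le_rfl
    | succ n hn ih => intro hn1; exact le_trans (ih (by omega)) (hBmono n (by omega)).le
  have h0pos : 0 < B 0 := by rw [hB0]; exact hs₀
  have hBpos : ∀ k, k ≤ m + 1 → 0 < B k := fun k hk =>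
    lt_of_lt_of_le h0pos (hBle 0 k (Nat.zero_le _) hk)
  have hbnn : ∀ k, k ≤ m → 0 ≤ b k := by
    intro k hk
    rcases Nat.eq_zero_or_pos k with rfl | hk1
    · rw [hb0]; norm_num
    · exact (hb k hk1 hk).1
  have hae := cmu_ae hμsupp hμbdd
  have hctopF : 𝔠 (m + 1) = (fun x => ∫ y, max (y - x) 0 ∂μ) := funext h𝔠top
  have F1 : ∀ k, k ≤ m + 1 → ∀ x : ℝ, 0 ≤ x → 𝔠 k x ∈ Icc 0 s₀ := by
    intro k hk x hx
    rcases Nat.eq_zero_or_pos k with rfl | hk1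
    · rw [h𝔠zero]; exact ⟨le_max_right _ _, max_le (by linarith) hs₀.le⟩
    rcases Nat.lt_or_ge k (m + 1) with hkm | hkm
    · exact (h𝔠 k hk1 (by omega)).2.1 x hx
    · have hkk : k = m + 1 := le_antisymm hk hkm
      subst hkk
      rw [h𝔠top]
      exact ⟨cmu_nonneg _, cmu_le hae hμmean hx⟩
  have F2 : ∀ k, k ≤ m + 1 → 𝔠 k 0 = s₀ := by
    intro k hk
    rcases Nat.eq_zero_or_pos k with rfl | hk1
    · rw [h𝔠zero]; simp [max_eq_left hs₀.le]
    rcases Nat.lt_or_ge k (m + 1) with hkm | hkm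
    · exact (h𝔠 k hk1 (by omega)).2.2.2.2.1
    · have hkk : k = m + 1 := le_antisymm hk hkm
      subst hkk
      exact (h𝔠top 0).trans (cmu_zero hae hμmean)
  have F3 : ∀ k, k ≤ m + 1 → HasDerivWithinAt (𝔠 k) (-1) (Ioi 0) 0 := by
    intro k hk
    rcases Nat.eq_zero_or_pos k with rfl | hk1
    · have hbase : HasDerivWithinAt (fun x : ℝ => s₀ - x) (-1) (Ioi 0) 0 := by
        simpa using ((hasDerivAt_id (0:ℝ)).const_sub s₀).hasDerivWithinAt
      refine hbase.congr_of_eventuallyEq ?_ ?_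
      · filter_upwards [nhdsWithin_le_nhds (Iio_mem_nhds hs₀)] with x (hx : x ∈ Iio s₀)
        rw [h𝔠zero, max_eq_left (by simp only [mem_Iio] at hx; linarith)]
      · rw [h𝔠zero, max_eq_left (by linarith)]
    rcases Nat.lt_or_ge k (m + 1) with hkm | hkm
    · exact (h𝔠 k hk1 (by omega)).2.2.2.1
    · have hkk : k = m + 1 := le_antisymm hk hkm
      subst hkk
      rw [hctopF]
      exact cmu_deriv0 hae hμmean
  have F4 : ∀ k, k ≤ m + 1 → ∀ x : ℝ, B k ≤ x → 𝔠 k x = 0 := by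
    intro k hk x hx
    rcases Nat.eq_zero_or_pos k with rfl | hk1
    · rw [h𝔠zero, max_eq_right (by rw [hB0] at hx; linarith)]
    rcases Nat.lt_or_ge k (m + 1) with hkm | hkm
    · exact (h𝔠 k hk1 (by omega)).2.2.2.2.2.1 x hx
    · have hkk : k = m + 1 := le_antisymm hk hkm
      subst hkk
      rw [h𝔠top]
      exact cmu_vanish hae hx
  have F6 : ∀ k, k ≤ m → ∀ x : ℝ, 0 ≤ x → 𝔠 k x ≤ 𝔠 (k + 1) x := by
    intro k hk x hx
    rcases Nat.eq_zero_or_pos k with rfl | hk1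
    · rw [h𝔠zero]
      rcases Nat.eq_zero_or_pos m with rfl | hm
      · rw [h𝔠top]
        exact max_le (cmu_lb hae hμmean x) (cmu_nonneg _)
      · have h1 := h𝔠 1 le_rfl hm
        have h1nn : 0 ≤ 𝔠 1 x := (h1.2.1 x hx).1
        have hlin : s₀ - x ≤ 𝔠 1 x := by
          rcases eq_or_lt_of_le hx with rfl | hx'
          · rw [h1.2.2.2.2.1]; linarith
          · have ht := tangent_right h1.1 le_rfl h1.2.2.2.1 hx'
            rw [h1.2.2.2.2.1] at ht
            linarith
        exact max_le hlin h1nn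
    · exact ((h𝔠 k hk1 hk).2.2.1 x hx).2
  have F7 : ∀ k, k ≤ m → ∀ x : ℝ, 0 ≤ x → b k * max (B k - x) 0 ≤ 𝔠 k x := by
    intro k hk x hx
    rcases Nat.eq_zero_or_pos k with rfl | hk1
    · rw [h𝔠zero, hb0, hB0, one_mul]
    · rcases le_or_gt (B k) x with hbk | hbk
      · rw [max_eq_right (by linarith), mul_zero]
        exact (F1 k (by omega) x hx).1
      · have hk' := h𝔠 k hk1 hk
        have ht := tangent_left hk'.1 hx (hBpos k (by omega)).le hk'.2.2.2.2.2.2.1 hbk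
        rw [hk'.2.2.2.2.2.1 (B k) le_rfl] at ht
        rw [max_eq_left (by linarith)]
        have heq : b k * (B k - x) = 0 + -(b k) * (x - B k) := by ring
        rw [heq]
        exact ht
  have F8 : ∀ k, k ≤ m → ∀ x : ℝ, B k ≤ x → 𝔠 k x = b k * max (B k - x) 0 := by
    intro k hk x hx
    rw [F4 k (by omega) x hx, max_eq_right (by linarith), mul_zero]
  constructor
  · intro j hj1 hj2
    obtain ⟨k, rfl⟩ : ∃ k, j = k + 1 := ⟨j - 1, by omega⟩
    have hk : k ≤ m := by omega
    simp only [Nat.add_sub_cancel]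
    have hcf : ∀ x : ℝ, c (k + 1) x = 𝔠 (k + 1) x - 𝔠 k x + b k * max (B k - x) 0 := by
      intro x
      rw [hc (k + 1) (by omega) (by omega) x]
      simp only [Nat.add_sub_cancel]
    have hceq : c (k + 1) = (fun x => 𝔠 (k + 1) x - 𝔠 k x + b k * max (B k - x) 0) :=
      funext hcf
    refine ⟨?_, ?_, ?_, ?_, ?_, ?_, ?_⟩
    · intro x hx
      have h6 := F6 k hk x hx
      have h7 := F7 k hk x hx
      have h1 := F1 (k + 1) (by omega) x hx
      have hmn : 0 ≤ b k * max (B k - x) 0 := mul_nonneg (hbnn k hk) (le_max_right _ _)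
      rw [hcf]
      exact ⟨by linarith, by linarith [h1.2]⟩
    · rcases Nat.eq_zero_or_pos k with rfl | hk1
      · have hceq1 : c 1 = 𝔠 1 := by
          funext x
          rw [hcf x, h𝔠zero, hb0, hB0, one_mul]
          ring
        rw [hceq1]
        rcases Nat.eq_zero_or_pos m with rfl | hm
        · have hct : 𝔠 1 = (fun x => ∫ y, max (y - x) 0 ∂μ) := by simpa using hctopF
          rw [hct]
          exact cmu_convex hae
        · exact (h𝔠 1 le_rfl hm).1
      · rw [hceq]
        exact (h𝔠 k hk1 hk).2.2.2.2.2.2.2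
    · have hmax : HasDerivWithinAt (fun x : ℝ => b k * max (B k - x) 0) (b k * -1)
          (Ioi 0) 0 := by
        have hbase : HasDerivWithinAt (fun x : ℝ => b k * (B k - x)) (b k * -1) (Ioi 0) 0 := by
          simpa using (((hasDerivAt_id (0:ℝ)).const_sub (B k)).const_mul (b k)).hasDerivWithinAt
        refine hbase.congr_of_eventuallyEq ?_ ?_
        · filter_upwards [nhdsWithin_le_nhds (Iio_mem_nhds (hBpos k (by omega)))]
            with x (hx : x ∈ Iio (B k))
          rw [max_eq_left (by simp only [mem_Iio] at hx; linarith)]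
        · rw [max_eq_left (by linarith [hBpos k (by omega : k ≤ m + 1)])]
      have h1 := F3 (k + 1) (by omega)
      have h2 := F3 k (by omega)
      rw [hceq]
      have hcomb := (h1.sub h2).add hmax
      exact hcomb.congr_deriv (by ring)
    · rw [hcf 0, F2 (k + 1) (by omega), F2 k (by omega),
        max_eq_left (by linarith [hBpos k (by omega : k ≤ m + 1)])]
      ring
    · have hd : HasDerivWithinAt (𝔠 (k + 1)) (-(b (k + 1))) (Iio (B (k + 1))) (B (k + 1)) := by
        rcases Nat.lt_or_ge (k + 1) (m + 1) with hkm | hkm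
        · exact (h𝔠 (k + 1) (by omega) (by omega)).2.2.2.2.2.2.1
        · have hkk : k + 1 = m + 1 := by omega
          rw [hkk, hctopF]
          exact hbtop
      refine hd.congr_of_eventuallyEq ?_ ?_
      · filter_upwards [nhdsWithin_le_nhds (Ioi_mem_nhds (hBmono k hk))]
          with x (hx : x ∈ Ioi (B k))
        rw [hcf x, F8 k hk x (le_of_lt hx)]
        ring
      · rw [hcf _, F8 k hk _ (hBle k (k + 1) (by omega) (by omega))]
        ring
    · intro x hx
      have hkx : B k ≤ x := le_trans (hBle k (k + 1) (by omega) (by omega)) hx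
      rw [hcf x, F8 k hk x hkx, F4 (k + 1) (by omega) x hx]
      ring
    · intro x hx
      rw [hcf x]
      have h6 := F6 k hk x hx
      linarith
  · intro x hx
    set f : ℕ → ℝ := fun k => 𝔠 k x - b k * max (B k - x) 0 with hf
    have hstep : ∀ j ∈ Finset.Icc 1 m, c j x - b j * max (B j - x) 0 = f j - f (j - 1) := by
      intro j hj
      rw [Finset.mem_Icc] at hj
      obtain ⟨k, rfl⟩ : ∃ k, j = k + 1 := ⟨j - 1, by omega⟩
      rw [hc (k + 1) (by omega) (by omega) x]
      simp only [hf, Nat.add_sub_cancel]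
      ring
    rw [Finset.sum_congr rfl hstep]
    have htel : (∑ j ∈ Finset.Icc 1 m, (f j - f (j - 1))) = f m - f 0 := by
      rw [show Finset.Icc 1 m = Finset.Ico 1 (m + 1) from (Finset.Ico_add_one_right_eq_Icc 1 m).symm]
      rw [Finset.sum_Ico_eq_sum_range]
      simp only [Nat.add_sub_cancel]
      have hterm : ∀ i, f (1 + i) - f (1 + i - 1) = f (i + 1) - f i := by
        intro i
        congr 2 <;> omega
      rw [Finset.sum_congr rfl (fun i _ => hterm i)]
      exact Finset.sum_range_sub f m
    rw [htel]
    have hf0 : f 0 = 0 := by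
      simp only [hf]
      rw [h𝔠zero, hb0, hB0, one_mul]
      ring
    have hcm1 : c (m + 1) x = (∫ y, max (y - x) 0 ∂μ) - f m := by
      rw [hc (m + 1) (by omega) (by omega) x, h𝔠top x]
      simp only [hf, Nat.add_sub_cancel]
      ring
    rw [hcm1, hf0]
    ring
end
end

section
/- Let B > s₀ and define 𝔠^B(x) := E[(S_{T∧H_B} − x)⁺] for x ∈ ℝ. Then ℙ(M_T ≥ B) = ℙ(H_B ≤ T) = ℙ(S_{T∧H_B} = B), and the left derivative of 𝔠^B at B equals −ℙ(M_T ≥ B). -/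
open MeasureTheory Set Filter

noncomputable section

open Topology

namespace Stmt9Aux

variable {Ω : Type} {S : ℝ → Ω → ℝ} {B T : ℝ} {ω : Ω}

/-- countable dense subset of `Icc 0 s` -/
def ratIcc (s : ℝ) : Set ℝ := insert s (Icc 0 s ∩ range ((↑) : ℚ → ℝ))

lemma ratIcc_countable (s : ℝ) : (ratIcc s).Countable :=
  ((countable_range _).mono inter_subset_right).insert s

lemma ratIcc_subset {s : ℝ} (hs : 0 ≤ s) : ratIcc s ⊆ Icc 0 s :=
  insert_subset ⟨hs, le_rfl⟩ inter_subset_left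

lemma subset_closure_ratIcc {s : ℝ} (hs : 0 ≤ s) : Icc 0 s ⊆ closure (ratIcc s) := by
  intro t ht
  rcases eq_or_lt_of_le ht.2 with rfl | hts
  · exact subset_closure (mem_insert _ _)
  · have h1 : Ioo t s ⊆ closure (Ioo t s ∩ range ((↑) : ℚ → ℝ)) :=
      Rat.denseRange_cast.open_subset_closure_inter isOpen_Ioo
    have h2 : Ioo t s ∩ range ((↑) : ℚ → ℝ) ⊆ ratIcc s := fun x hx =>
      mem_insert_of_mem _ ⟨⟨ht.1.trans hx.1.1.le, hx.1.2.le⟩, hx.2⟩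
    have h3 : t ∈ closure (Ioo t s) := by
      rw [closure_Ioo hts.ne]; exact ⟨le_rfl, hts.le⟩
    have h4 : closure (Ioo t s) ⊆ closure (ratIcc s) := by
      calc closure (Ioo t s) ⊆ closure (closure (Ioo t s ∩ range ((↑) : ℚ → ℝ))) :=
            closure_mono h1
        _ = closure (Ioo t s ∩ range ((↑) : ℚ → ℝ)) := closure_closure
        _ ⊆ closure (ratIcc s) := closure_mono h2
    exact h4 h3

lemma exists_iff_sup {s : ℝ} (hs : 0 ≤ s)
    (hc : ContinuousOn (fun t => S t ω) (Icc 0 s)) :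
    (∃ t ∈ Icc (0:ℝ) s, B ≤ S t ω) ↔ B ≤ ⨆ t : Icc (0:ℝ) s, S t ω := by
  have hne : (Icc (0:ℝ) s).Nonempty := nonempty_Icc.2 hs
  haveI : Nonempty (Icc (0:ℝ) s) := hne.to_subtype
  obtain ⟨t₀, ht₀, hmax⟩ := isCompact_Icc.exists_isMaxOn hne hc
  have hbdd : BddAbove (range fun t : Icc (0:ℝ) s => S t ω) := by
    refine ⟨S t₀ ω, ?_⟩
    rintro _ ⟨t, rfl⟩
    exact hmax t.2
  constructor
  · rintro ⟨t, ht, hBt⟩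
    exact hBt.trans (le_ciSup hbdd ⟨t, ht⟩)
  · intro h
    exact ⟨t₀, ht₀, h.trans (ciSup_le fun t => hmax t.2)⟩

lemma exists_iff_supRat {s : ℝ} (hs : 0 ≤ s)
    (hc : ContinuousOn (fun t => S t ω) (Icc 0 s)) :
    (∃ t ∈ Icc (0:ℝ) s, B ≤ S t ω) ↔ B ≤ ⨆ q : ratIcc s, S (q : ℝ) ω := by
  have hne : (Icc (0:ℝ) s).Nonempty := nonempty_Icc.2 hs
  haveI : Nonempty (ratIcc s) := ⟨⟨s, mem_insert _ _⟩⟩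
  obtain ⟨t₀, ht₀, hmax⟩ := isCompact_Icc.exists_isMaxOn hne hc
  have hbdd : BddAbove (range fun q : ratIcc s => S (q : ℝ) ω) := by
    refine ⟨S t₀ ω, ?_⟩
    rintro _ ⟨q, rfl⟩
    exact hmax (ratIcc_subset hs q.2)
  constructor
  · rintro ⟨t, ht, hBt⟩
    have hneb : (𝓝[ratIcc s] t).NeBot :=
      mem_closure_iff_nhdsWithin_neBot.mp (subset_closure_ratIcc hs ht)
    have htd : Tendsto (fun u => S u ω) (𝓝[ratIcc s] t) (𝓝 (S t ω)) :=
      (hc t ht).mono (ratIcc_subset hs)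
    have hb : ∀ᶠ u in 𝓝[ratIcc s] t, S u ω ≤ ⨆ q : ratIcc s, S (q : ℝ) ω :=
      eventually_mem_nhdsWithin.mono fun u hu => le_ciSup hbdd ⟨u, hu⟩
    exact hBt.trans (le_of_tendsto htd hb)
  · intro h
    exact ⟨t₀, ht₀, h.trans (ciSup_le fun q => hmax (ratIcc_subset hs q.2))⟩

lemma le_stopVal_of_exists (hc : ContinuousOn (fun t => S t ω) (Icc 0 T))
    (hex : ∃ t ∈ Icc (0:ℝ) T, B ≤ S t ω) :
    B ≤ S (hittingBtwn S (Ici B) 0 T ω) ω := by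
  have hexists : ∃ j ∈ Icc (0:ℝ) T, S j ω ∈ Ici B := hex
  have hA_closed : IsClosed (Icc (0:ℝ) T ∩ (fun t => S t ω) ⁻¹' Ici B) :=
    hc.preimage_isClosed_of_isClosed isClosed_Icc isClosed_Ici
  have hA_ne : (Icc (0:ℝ) T ∩ (fun t => S t ω) ⁻¹' Ici B).Nonempty := by
    obtain ⟨t, ht, hb⟩ := hex; exact ⟨t, ht, hb⟩
  have hmem := hA_closed.csInf_mem hA_ne bddBelow_Icc.inter_of_left
  simp only [hittingBtwn, if_pos hexists]
  exact hmem.2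

lemma stopVal_le_and_iff (hT : 0 ≤ T) (hc : ContinuousOn (fun t => S t ω) (Icc 0 T))
    (h0 : S 0 ω < B) :
    S (hittingBtwn S (Ici B) 0 T ω) ω ≤ B ∧
      (S (hittingBtwn S (Ici B) 0 T ω) ω = B ↔ ∃ t ∈ Icc (0:ℝ) T, B ≤ S t ω) := by
  by_cases hex : ∃ t ∈ Icc (0:ℝ) T, B ≤ S t ω
  · have hR : B ≤ S (hittingBtwn S (Ici B) 0 T ω) ω := le_stopVal_of_exists hc hex
    have hH : hittingBtwn S (Ici B) 0 T ω ∈ Icc (0:ℝ) T := hittingBtwn_mem_Icc hT ω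
    have h0H : 0 < hittingBtwn S (Ici B) 0 T ω := by
      rcases eq_or_lt_of_le hH.1 with h | h
      · exfalso; rw [← h] at hR; exact absurd hR (not_le.2 h0)
      · exact h
    have hlt : ∀ t ∈ Ico (0:ℝ) (hittingBtwn S (Ici B) 0 T ω), S t ω < B := by
      intro t ht
      have h2 : S t ω ∉ Ici B := notMem_of_lt_hittingBtwn ht.2 ht.1
      exact not_le.1 h2
    have hneb : (𝓝[Ico (0:ℝ) (hittingBtwn S (Ici B) 0 T ω)] (hittingBtwn S (Ici B) 0 T ω)).NeBot := by
      refine mem_closure_iff_nhdsWithin_neBot.mp ?_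
      rw [closure_Ico h0H.ne]
      exact ⟨hH.1, le_rfl⟩
    have htd : Tendsto (fun t => S t ω) (𝓝[Ico (0:ℝ) (hittingBtwn S (Ici B) 0 T ω)]
        (hittingBtwn S (Ici B) 0 T ω)) (𝓝 (S (hittingBtwn S (Ici B) 0 T ω) ω)) :=
      (hc _ hH).mono fun t ht => ⟨ht.1, ht.2.le.trans hH.2⟩
    have hle : S (hittingBtwn S (Ici B) 0 T ω) ω ≤ B :=
      le_of_tendsto htd (eventually_mem_nhdsWithin.mono fun t ht => (hlt t ht).le)
    exact ⟨hle, ⟨fun _ => hex, fun _ => le_antisymm hle hR⟩⟩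
  · have hH : hittingBtwn S (Ici B) 0 T ω = T := by
      have hex' : ¬ ∃ j ∈ Icc (0:ℝ) T, S j ω ∈ Ici B := hex
      simp only [hittingBtwn, if_neg hex']
    have hTlt : S T ω < B := by
      push_neg at hex
      exact hex T ⟨hT, le_rfl⟩
    rw [hH]
    exact ⟨hTlt.le, ⟨fun h => absurd h hTlt.ne, fun h => absurd h hex⟩⟩

variable [mΩ : MeasurableSpace Ω]

lemma measurableSet_exists (hT : 0 ≤ T)
    (hSM : ∀ t ∈ Icc (0:ℝ) T, Measurable (S t))
    (hcont : ∀ ω, ContinuousOn (fun t => S t ω) (Icc 0 T))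
    {s : ℝ} (hs0 : 0 ≤ s) (hsT : s ≤ T) :
    MeasurableSet {ω | ∃ t ∈ Icc (0:ℝ) s, B ≤ S t ω} := by
  haveI : Countable (ratIcc s) := (ratIcc_countable s).to_subtype
  have hmeas : Measurable fun ω => ⨆ q : ratIcc s, S (q : ℝ) ω :=
    Measurable.iSup fun q => hSM _ (Icc_subset_Icc_right hsT (ratIcc_subset hs0 q.2))
  have hset : {ω | ∃ t ∈ Icc (0:ℝ) s, B ≤ S t ω}
      = (fun ω => ⨆ q : ratIcc s, S (q : ℝ) ω) ⁻¹' Ici B := by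
    ext ω
    exact exists_iff_supRat hs0 ((hcont ω).mono (Icc_subset_Icc_right hsT))
  rw [hset]
  exact hmeas measurableSet_Ici

lemma isStoppingTime_hittingB (hT : 0 ≤ T)
    (hSM : ∀ t ∈ Icc (0:ℝ) T, Measurable (S t))
    (hcont : ∀ ω, ContinuousOn (fun t => S t ω) (Icc 0 T)) :
    IsStoppingTime (Filtration.const ℝ mΩ le_rfl)
      (fun ω => ((hittingBtwn S (Ici B) 0 T ω : ℝ) : WithTop ℝ)) := by
  intro i
  have hcoe : {ω | ((hittingBtwn S (Ici B) 0 T ω : ℝ) : WithTop ℝ) ≤ (i : WithTop ℝ)}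
      = {ω | hittingBtwn S (Ici B) 0 T ω ≤ i} := by simp only [WithTop.coe_le_coe]
  rw [hcoe]
  show MeasurableSet[mΩ] {ω | hittingBtwn S (Ici B) 0 T ω ≤ i}
  by_cases hiT : T ≤ i
  · have h : {ω | hittingBtwn S (Ici B) 0 T ω ≤ i} = univ :=
      eq_univ_of_forall fun ω => (hittingBtwn_le ω).trans hiT
    rw [h]; exact MeasurableSet.univ
  by_cases hi0 : 0 ≤ i
  · have h : {ω | hittingBtwn S (Ici B) 0 T ω ≤ i} = {ω | ∃ t ∈ Icc (0:ℝ) i, B ≤ S t ω} := by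
      ext ω
      simp only [mem_setOf_eq]
      constructor
      · intro h
        by_cases hex : ∃ t ∈ Icc (0:ℝ) T, B ≤ S t ω
        · exact ⟨hittingBtwn S (Ici B) 0 T ω, ⟨le_hittingBtwn hT ω, h⟩,
            le_stopVal_of_exists (hcont ω) hex⟩
        · exfalso
          have hex' : ¬ ∃ j ∈ Icc (0:ℝ) T, S j ω ∈ Ici B := hex
          simp only [hittingBtwn, if_neg hex'] at h
          exact hiT h
      · rintro ⟨t, ht, hBt⟩
        exact (hittingBtwn_le_of_mem ht.1 (ht.2.trans (not_le.1 hiT).le) hBt).trans ht.2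
    rw [h]
    exact measurableSet_exists hT hSM hcont hi0 (not_le.1 hiT).le
  · have h : {ω | hittingBtwn S (Ici B) 0 T ω ≤ i} = ∅ := by
      apply eq_empty_of_forall_notMem
      intro ω hω
      exact hi0 (le_trans (le_hittingBtwn hT ω) hω)
    rw [h]; exact MeasurableSet.empty

lemma measurable_stopVal (hT : 0 ≤ T)
    (hSM : ∀ t ∈ Icc (0:ℝ) T, StronglyMeasurable[mΩ] (S t))
    (hcont : ∀ ω, ContinuousOn (fun t => S t ω) (Icc 0 T)) :
    Measurable (stopVal S B T) := by
  have hSM' : ∀ t ∈ Icc (0:ℝ) T, Measurable (S t) := fun t ht => (hSM t ht).measurable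
  have clamp_mem : ∀ t : ℝ, min (max t 0) T ∈ Icc (0:ℝ) T := fun t =>
    ⟨le_min (le_max_right t 0) hT, min_le_right _ _⟩
  set f : Filtration ℝ mΩ := Filtration.const ℝ mΩ le_rfl with hf
  set S' : ℝ → Ω → ℝ := fun t ω => S (min (max t 0) T) ω with hS'
  have hadp : StronglyAdapted f S' := fun t => hSM _ (clamp_mem t)
  have hcont' : ∀ ω, Continuous fun t => S' t ω := fun ω =>
    (hcont ω).comp_continuous ((continuous_id.max continuous_const).min continuous_const)
      clamp_mem
  have hprog : IsStronglyProgressive f S' := hadp.isStronglyProgressive_of_continuous hcont'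
  have hst : IsStoppingTime f (fun ω => ((hittingBtwn S (Ici B) 0 T ω : ℝ) : WithTop ℝ)) :=
    isStoppingTime_hittingB hT hSM' hcont
  have key : StronglyMeasurable[f T]
      (stoppedValue S' (fun ω => ((hittingBtwn S (Ici B) 0 T ω : ℝ) : WithTop ℝ))) :=
    stronglyMeasurable_stoppedValue_of_le hprog hst fun ω => WithTop.coe_le_coe.2 (hittingBtwn_le ω)
  have heq : stopVal S B T
      = stoppedValue S' (fun ω => ((hittingBtwn S (Ici B) 0 T ω : ℝ) : WithTop ℝ)) := by
    funext ω
    have hH := hittingBtwn_mem_Icc (u := S) (s := Ici B) (n := (0:ℝ)) hT ω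
    simp only [stopVal, stoppedValue, hS']
    change S _ ω = S (min (max (hittingBtwn S (Ici B) 0 T ω) 0) T) ω
    rw [max_eq_left hH.1, min_eq_left hH.2]
  rw [heq]
  exact key.measurable

end Stmt9Aux

/-- For `B > s₀` and `𝔠^B(x) = E[(S_{T∧H_B} − x)⁺]`:
`ℙ(M_T ≥ B) = ℙ(H_B ≤ T) = ℙ(S_{T∧H_B} = B)`, and the left derivative of `𝔠^B` at `B`
equals `−ℙ(M_T ≥ B)`. -/
theorem stmt_9 {Ω : Type} [mΩ : MeasurableSpace Ω] (ℙ : Measure Ω) [IsProbabilityMeasure ℙ]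
    (ℱ : Filtration ℝ mΩ) (S : ℝ → Ω → ℝ) (s₀ T : ℝ) (hs₀ : 0 < s₀) (hT : 0 < T)
    (hS : IsPosContMart ℙ ℱ S s₀ T) (B : ℝ) (hB : s₀ < B) :
    ℙ {ω | B ≤ runMax S T ω} = ℙ (hitEvent S B T) ∧
    ℙ (hitEvent S B T) = ℙ {ω | stopVal S B T ω = B} ∧
    HasDerivWithinAt (fun x => ∫ ω, max (stopVal S B T ω - x) 0 ∂ℙ)
      (-(ℙ {ω | B ≤ runMax S T ω}).toReal) (Iio B) B := by
  have hc := hS.contPaths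
  have hTle : (0:ℝ) ≤ T := hT.le
  have hset1 : {ω | B ≤ runMax S T ω} = hitEvent S B T := by
    ext ω
    simp only [runMax, hitEvent, mem_setOf_eq]
    exact (Stmt9Aux.exists_iff_sup hTle (hc ω)).symm
  have h1 : ℙ {ω | B ≤ runMax S T ω} = ℙ (hitEvent S B T) := by rw [hset1]
  have hVmeas : Measurable (stopVal S B T) :=
    Stmt9Aux.measurable_stopVal hTle
      (fun t ht => (hS.adapted t ht).mono (ℱ.le t)) hc
  have h0B : ∀ᵐ ω ∂ℙ, S 0 ω < B := hS.init.mono fun ω h => by rw [h]; exact hB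
  have hVle : ∀ᵐ ω ∂ℙ, stopVal S B T ω ≤ B :=
    h0B.mono fun ω h => (Stmt9Aux.stopVal_le_and_iff hTle (hc ω) h).1
  have hiff : ∀ᵐ ω ∂ℙ, (ω ∈ hitEvent S B T ↔ ω ∈ {ω | stopVal S B T ω = B}) :=
    h0B.mono fun ω h => ((Stmt9Aux.stopVal_le_and_iff hTle (hc ω) h).2).symm
  have h2 : ℙ (hitEvent S B T) = ℙ {ω | stopVal S B T ω = B} :=
    measure_congr (eventuallyEq_set.2 hiff)
  refine ⟨h1, h2, ?_⟩
  rw [h1, h2]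
  set V := stopVal S B T with hVdef
  set L : ℝ := (ℙ {ω | V ω = B}).toReal with hL
  set cF : ℝ → ℝ := fun x => ∫ ω, max (V ω - x) 0 ∂ℙ with hcF
  have hmeas_int : ∀ x : ℝ, AEStronglyMeasurable (fun ω => max (V ω - x) 0) ℙ :=
    fun x => ((hVmeas.sub measurable_const).max measurable_const).aestronglyMeasurable
  have hint : ∀ x : ℝ, Integrable (fun ω => max (V ω - x) 0) ℙ := by
    intro x
    refine Integrable.mono' (integrable_const (max (B - x) 0)) (hmeas_int x) ?_
    filter_upwards [hVle] with ω h
    rw [Real.norm_eq_abs, abs_of_nonneg (le_max_right _ _)]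
    exact max_le_max (sub_le_sub_right h x) le_rfl
  have hcB : cF B = 0 := by
    apply integral_eq_zero_of_ae
    filter_upwards [hVle] with ω h
    show max (V ω - B) 0 = 0
    exact max_eq_right (sub_nonpos.2 h)
  have hmeasVB : MeasurableSet {ω | V ω = B} := hVmeas (measurableSet_singleton B)
  have hlow : ∀ x : ℝ, x < B → L * (B - x) ≤ cF x := by
    intro x hx
    have h1' : ∫ ω, ({ω | V ω = B}).indicator (fun _ => B - x) ω ∂ℙ = L * (B - x) := by
      rw [integral_indicator_const _ hmeasVB, hL, smul_eq_mul, measureReal_def]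
    rw [← h1']
    refine integral_mono_ae ((integrable_const (B - x)).indicator hmeasVB) (hint x) ?_
    filter_upwards [hVle] with ω h
    by_cases hm : ω ∈ {ω | V ω = B}
    · rw [indicator_of_mem hm]
      have hVB : V ω = B := hm
      rw [← hVB]
      exact le_max_left _ _
    · rw [indicator_of_notMem hm]
      exact le_max_right _ _
  have hup : ∀ x : ℝ, x < B → cF x ≤ (ℙ {ω | x < V ω}).toReal * (B - x) := by
    intro x hx
    have hms : MeasurableSet {ω | x < V ω} := hVmeas measurableSet_Ioi
    have h1' : ∫ ω, ({ω | x < V ω}).indicator (fun _ => B - x) ω ∂ℙ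
        = (ℙ {ω | x < V ω}).toReal * (B - x) := by
      rw [integral_indicator_const _ hms, smul_eq_mul, measureReal_def]
    rw [← h1']
    refine integral_mono_ae (hint x) ((integrable_const (B - x)).indicator hms) ?_
    filter_upwards [hVle] with ω h
    by_cases hm : ω ∈ {ω | x < V ω}
    · rw [indicator_of_mem hm]
      exact max_le (sub_le_sub_right h x) (by linarith)
    · rw [indicator_of_notMem hm]
      have hvx : V ω ≤ x := not_lt.1 hm
      rw [max_eq_right (sub_nonpos.2 hvx)]
  have hGlim : Tendsto (fun x => (ℙ {ω | x < V ω}).toReal) (𝓝[<] B) (𝓝 L) := by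
    set A : ℕ → Set Ω := fun n => {ω | B - 1 / (n + 1 : ℝ) < V ω} with hA
    have hAm : ∀ n, MeasurableSet (A n) := fun n => hVmeas measurableSet_Ioi
    have hAanti : Antitone A := by
      intro n m hnm ω hω
      have hle : B - 1 / (n + 1 : ℝ) ≤ B - 1 / (m + 1 : ℝ) := by
        have h1 : (0:ℝ) < n + 1 := by positivity
        have h2 : (n:ℝ) + 1 ≤ (m:ℝ) + 1 := by
          have := (Nat.cast_le (α := ℝ)).2 hnm
          linarith
        have := one_div_le_one_div_of_le h1 h2
        linarith
      exact lt_of_le_of_lt hle hω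
    have hInter : ⋂ n, A n = {ω | B ≤ V ω} := by
      ext ω
      simp only [mem_iInter, hA, mem_setOf_eq]
      constructor
      · intro h
        by_contra hlt
        obtain ⟨n, hn⟩ := exists_nat_one_div_lt (sub_pos.2 (not_le.1 hlt))
        have := h n
        linarith
      · intro h n
        have hp : (0:ℝ) < 1 / (n + 1 : ℝ) := by positivity
        linarith
    have hBVL : ℙ {ω | B ≤ V ω} = ℙ {ω | V ω = B} := by
      apply measure_congr
      apply eventuallyEq_set.2
      filter_upwards [hVle] with ω h
      exact ⟨fun hb => le_antisymm h hb, fun he => he.ge⟩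
    have htm : Tendsto (fun n => ℙ (A n)) atTop (𝓝 (ℙ {ω | V ω = B})) := by
      have h := tendsto_measure_iInter_atTop (fun n => (hAm n).nullMeasurableSet) hAanti
        ⟨0, measure_ne_top ℙ _⟩
      rwa [hInter, hBVL] at h
    have htm' : Tendsto (fun n => (ℙ (A n)).toReal) atTop (𝓝 L) :=
      (ENNReal.tendsto_toReal (measure_ne_top ℙ _)).comp htm
    rw [Metric.tendsto_nhdsWithin_nhds]
    intro ε hε
    obtain ⟨n, hn⟩ := (htm'.eventually (gt_mem_nhds (lt_add_of_pos_right L hε))).exists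
    refine ⟨1 / (n + 1 : ℝ), by positivity, ?_⟩
    intro x hx hdist
    have hxB : x < B := hx
    have hxlow : B - 1 / (n + 1 : ℝ) < x := by
      rw [Real.dist_eq, abs_lt] at hdist
      linarith [hdist.1]
    have hsub : {ω | x < V ω} ⊆ A n := fun ω hω => lt_trans hxlow hω
    have hub : (ℙ {ω | x < V ω}).toReal ≤ (ℙ (A n)).toReal :=
      ENNReal.toReal_mono (measure_ne_top ℙ _) (measure_mono hsub)
    have hlb : L ≤ (ℙ {ω | x < V ω}).toReal := by
      rw [hL]
      refine ENNReal.toReal_mono (measure_ne_top ℙ _) (measure_mono ?_)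
      intro ω hω
      have hVB : V ω = B := hω
      show x < V ω
      rw [hVB]; exact hxB
    rw [Real.dist_eq, abs_lt]
    constructor <;> linarith [hn]
  rw [hasDerivWithinAt_iff_tendsto_slope]
  have hdiff : Iio B \ {B} = Iio B := diff_singleton_eq_self (fun h => lt_irrefl B h)
  rw [hdiff]
  have hslope : ∀ x ∈ Iio B, slope cF B x = cF x / (x - B) := by
    intro x hx
    rw [slope_def_field, hcB, sub_zero]
  refine tendsto_of_tendsto_of_tendsto_of_le_of_le' hGlim.neg tendsto_const_nhds ?_ ?_
  · filter_upwards [eventually_mem_nhdsWithin] with x hx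
    have hxB : x < B := hx
    have hneg : x - B < 0 := by linarith
    rw [hslope x hx, le_div_iff_of_neg hneg,
      show -(ℙ {ω | x < V ω}).toReal * (x - B) = (ℙ {ω | x < V ω}).toReal * (B - x) from by ring]
    exact hup x hxB
  · filter_upwards [eventually_mem_nhdsWithin] with x hx
    have hxB : x < B := hx
    have hneg : x - B < 0 := by linarith
    rw [hslope x hx, div_le_iff_of_neg hneg,
      show -L * (x - B) = L * (B - x) from by ring]
    exact hlow x hxB
end
end

section
/- Let s₀ < B ≤ B'. Then for every x ∈ ℝ: E[(S_{T∧H_{B'}} − x)⁺] − E[(S_{T∧H_B} − x)⁺] + ℙ(M_T ≥ B)·(B − x)⁺ = E[ 1_{H_B ≤ T} · (S_{T∧H_{B'}} − x)⁺ ]. In particular, the function x ↦ E[(S_{T∧H_{B'}} − x)⁺] − E[(S_{T∧H_B} − x)⁺] + ℙ(M_T ≥ B)·(B − x)⁺ is convex on ℝ. -/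
open MeasureTheory Set Filter

noncomputable section

/-- If `B` is not hit, the stopped value is `S_T`. -/
lemma stopVal_of_not_hit {Ω : Type} (S : ℝ → Ω → ℝ) {B T : ℝ} {ω : Ω}
    (h : ω ∉ hitEvent S B T) : stopVal S B T ω = S T ω := by
  have hne : ¬ ∃ j ∈ Set.Icc (0:ℝ) T, S j ω ∈ Ici B := by
    rintro ⟨j, hj, hjB⟩
    exact h ⟨j, hj, hjB⟩
  rw [stopVal, hittingBtwn_def]
  simp only [if_neg hne]

/-- If `B` is hit and the path starts below `B`, the stopped value is exactly `B`. -/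
lemma stopVal_of_hit {Ω : Type} (S : ℝ → Ω → ℝ) {B T : ℝ} {ω : Ω}
    (hc : ContinuousOn (fun t => S t ω) (Icc (0:ℝ) T))
    (h0 : S 0 ω < B) (h : ω ∈ hitEvent S B T) : stopVal S B T ω = B := by
  obtain ⟨t, ht, htB⟩ := h
  have hex : ∃ j ∈ Set.Icc (0:ℝ) T, S j ω ∈ Ici B := ⟨t, ht, htB⟩
  set A : Set ℝ := Set.Icc (0:ℝ) T ∩ {i | S i ω ∈ Ici B} with hA
  have hHdef : hittingBtwn S (Ici B) 0 T ω = sInf A := by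
    rw [hittingBtwn_def]
    simp only [if_pos hex]
    rfl
  have hclosed : IsClosed A := hc.preimage_isClosed_of_isClosed isClosed_Icc isClosed_Ici
  have hnA : A.Nonempty := ⟨t, ht, htB⟩
  have hbdd : BddBelow A := ⟨0, fun y hy => hy.1.1⟩
  have hmem : sInf A ∈ A := hclosed.csInf_mem hnA hbdd
  set H := sInf A with hHs
  have hH0 : 0 ≤ H := hmem.1.1
  have hHT : H ≤ T := hmem.1.2
  have hBH : B ≤ S H ω := hmem.2
  have hsub : Icc (0:ℝ) H ⊆ Icc (0:ℝ) T := Icc_subset_Icc le_rfl hHT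
  have hivt := intermediate_value_Icc hH0 (hc.mono hsub)
  have hBmem : B ∈ Icc (S 0 ω) (S H ω) := ⟨le_of_lt h0, hBH⟩
  obtain ⟨u, hu, huB⟩ := hivt hBmem
  have huA : u ∈ A := ⟨⟨hu.1, hu.2.trans hHT⟩, by
    simp only [Set.mem_setOf_eq, Set.mem_Ici]
    rw [show S u ω = B from huB]⟩
  have hHu : H ≤ u := csInf_le hbdd huA
  have huH : u = H := le_antisymm hu.2 hHu
  rw [stopVal, hHdef, ← huH]
  exact huB

/-- For `s₀ < B ≤ B'` and every `x`,
`E[(S_{T∧H_{B'}} − x)⁺] − E[(S_{T∧H_B} − x)⁺] + ℙ(M_T ≥ B)·(B − x)⁺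
  = E[1_{H_B ≤ T}·(S_{T∧H_{B'}} − x)⁺]`;
in particular the left-hand side is a convex function of `x` on `ℝ`. -/
theorem stmt_10 {Ω : Type} [mΩ : MeasurableSpace Ω] (ℙ : Measure Ω) [IsProbabilityMeasure ℙ]
    (ℱ : Filtration ℝ mΩ) (S : ℝ → Ω → ℝ) (s₀ T : ℝ) (hs₀ : 0 < s₀) (hT : 0 < T)
    (hS : IsPosContMart ℙ ℱ S s₀ T) (B B' : ℝ) (hB : s₀ < B) (hBB' : B ≤ B') :
    (∀ x : ℝ,
      (∫ ω, max (stopVal S B' T ω - x) 0 ∂ℙ) - (∫ ω, max (stopVal S B T ω - x) 0 ∂ℙ)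
          + (ℙ {ω | B ≤ runMax S T ω}).toReal * max (B - x) 0
        = ∫ ω in hitEvent S B T, max (stopVal S B' T ω - x) 0 ∂ℙ) ∧
    ConvexOn ℝ univ (fun x =>
      (∫ ω, max (stopVal S B' T ω - x) 0 ∂ℙ) - (∫ ω, max (stopVal S B T ω - x) 0 ∂ℙ)
        + (ℙ {ω | B ≤ runMax S T ω}).toReal * max (B - x) 0) := by
  have hTmem : (T:ℝ) ∈ Icc (0:ℝ) T := ⟨le_of_lt hT, le_rfl⟩
  have h0mem : (0:ℝ) ∈ Icc (0:ℝ) T := ⟨le_rfl, le_of_lt hT⟩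
  haveI : Nonempty (Icc (0:ℝ) T) := ⟨⟨0, h0mem⟩⟩
  set E : Set Ω := hitEvent S B T with hEdef
  set E' : Set Ω := hitEvent S B' T with hE'def
  have hE'E : E' ⊆ E := by
    rintro ω ⟨t, ht, hB't⟩
    exact ⟨t, ht, le_trans hBB' hB't⟩
  have hmeasS : ∀ t ∈ Icc (0:ℝ) T, Measurable (S t) := fun t ht =>
    ((hS.adapted t ht).measurable).mono (ℱ.le t) le_rfl
  -- measurability of hit events
  have hEvMeas : ∀ C : ℝ, MeasurableSet (hitEvent S C T) := by
    intro C
    have hset : hitEvent S C T =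
        ⋂ (n : ℕ), ⋃ (q : ℚ), {ω | (q:ℝ) ∈ Icc (0:ℝ) T ∧ C - 1/(n+1) < S q ω} := by
      ext ω
      simp only [hitEvent, Set.mem_setOf_eq, Set.mem_iInter, Set.mem_iUnion]
      constructor
      · rintro ⟨t, ht, hCt⟩ n
        have hε : (0:ℝ) < 1/(n+1) := by positivity
        have hcw := hS.contPaths ω t ht
        rw [Metric.continuousWithinAt_iff] at hcw
        obtain ⟨δ, hδ, hδ'⟩ := hcw _ hε
        have hlr : max (t - δ) 0 < min (t + δ) T := by
          rcases ht with ⟨ht0, htT⟩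
          simp only [max_lt_iff, lt_min_iff]
          refine ⟨⟨by linarith, by linarith⟩, by linarith, hT⟩
        obtain ⟨q, hq1, hq2⟩ := exists_rat_btwn hlr
        have hq0 : (0:ℝ) ≤ q := le_of_lt (lt_of_le_of_lt (le_max_right _ _) hq1)
        have hqT : (q:ℝ) ≤ T := le_of_lt (lt_of_lt_of_le hq2 (min_le_right _ _))
        have hqIcc : (q:ℝ) ∈ Icc (0:ℝ) T := ⟨hq0, hqT⟩
        have hdist : dist (q:ℝ) t < δ := by
          rw [Real.dist_eq, abs_lt]
          constructor
          · have := lt_of_le_of_lt (le_max_left _ _) hq1; linarith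
          · have := lt_of_lt_of_le hq2 (min_le_left _ _); linarith
        have hclose := hδ' hqIcc hdist
        rw [Real.dist_eq, abs_lt] at hclose
        refine ⟨q, hqIcc, ?_⟩
        have h1 := hclose.1
        linarith
      · intro h
        obtain ⟨t0, ht0, hmax⟩ :=
          isCompact_Icc.exists_isMaxOn (Set.nonempty_Icc.2 (le_of_lt hT)) (hS.contPaths ω)
        refine ⟨t0, ht0, ?_⟩
        by_contra hlt
        push_neg at hlt
        obtain ⟨n, hn⟩ := exists_nat_one_div_lt (show (0:ℝ) < C - S t0 ω by linarith)
        obtain ⟨q, hq, hq'⟩ := h n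
        have hle : S q ω ≤ S t0 ω := hmax hq
        linarith
    rw [hset]
    refine MeasurableSet.iInter fun n => MeasurableSet.iUnion fun q => ?_
    by_cases hq : (q:ℝ) ∈ Icc (0:ℝ) T
    · have heq : {ω : Ω | (q:ℝ) ∈ Icc (0:ℝ) T ∧ C - 1/(n+1) < S q ω}
          = {ω : Ω | C - 1/(n+1) < S q ω} := by
        ext ω; simp [hq]
      rw [heq]
      exact measurableSet_lt measurable_const (hmeasS q hq)
    · have heq : {ω : Ω | (q:ℝ) ∈ Icc (0:ℝ) T ∧ C - 1/(n+1) < S q ω} = (∅ : Set Ω) := by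
        ext ω; simp [hq]
      rw [heq]
      exact MeasurableSet.empty
  have hE : MeasurableSet E := hEvMeas B
  -- the running-max event coincides with the hit event
  have hrun : {ω | B ≤ runMax S T ω} = E := by
    ext ω
    obtain ⟨t0, ht0, hmax⟩ :=
      isCompact_Icc.exists_isMaxOn (Set.nonempty_Icc.2 (le_of_lt hT)) (hS.contPaths ω)
    have hbd : BddAbove (Set.range fun t : Icc (0:ℝ) T => S t ω) := by
      refine ⟨S t0 ω, ?_⟩
      rintro y ⟨⟨u, hu⟩, rfl⟩
      exact hmax hu
    simp only [Set.mem_setOf_eq, runMax, hEdef, hitEvent]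
    constructor
    · intro hω
      refine ⟨t0, ht0, le_trans hω ?_⟩
      exact ciSup_le fun u => hmax u.2
    · rintro ⟨t, ht, hBt⟩
      exact le_trans hBt (le_ciSup hbd ⟨t, ht⟩)
  -- measurable/integrable representatives of the stopped values
  have hmeasT : Measurable (S T) := hmeasS T hTmem
  have hintT : Integrable (S T) ℙ := hS.integrable T hTmem
  classical
  set f : Ω → ℝ := fun ω => if ω ∈ E then B else S T ω with hfdef
  set g : Ω → ℝ := fun ω => if ω ∈ E' then B' else S T ω with hgdef
  have hfint : Integrable f ℙ := by
    have hrepr : f = E.indicator (fun _ => B) + Eᶜ.indicator (S T) := by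
      funext ω
      by_cases hω : ω ∈ E <;>
        simp [hfdef, hω, Set.indicator_apply]
    rw [hrepr]
    exact ((integrable_const B).indicator hE).add (hintT.indicator hE.compl)
  have hgint : Integrable g ℙ := by
    have hrepr : g = E'.indicator (fun _ => B') + E'ᶜ.indicator (S T) := by
      funext ω
      by_cases hω : ω ∈ E' <;>
        simp [hgdef, hω, Set.indicator_apply]
    rw [hrepr]
    exact ((integrable_const B').indicator (hEvMeas B')).add (hintT.indicator (hEvMeas B').compl)
  -- a.e. identification
  have hae : ∀ᵐ ω ∂ℙ, stopVal S B T ω = f ω ∧ stopVal S B' T ω = g ω := by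
    filter_upwards [hS.init] with ω h0
    have h0B : S 0 ω < B := by rw [h0]; exact hB
    have h0B' : S 0 ω < B' := lt_of_lt_of_le h0B hBB'
    constructor
    · by_cases hω : ω ∈ E
      · rw [stopVal_of_hit S (hS.contPaths ω) h0B hω]
        simp [hfdef, hω]
      · rw [stopVal_of_not_hit S hω]
        simp [hfdef, hω]
    · by_cases hω : ω ∈ E'
      · rw [stopVal_of_hit S (hS.contPaths ω) h0B' hω]
        simp [hgdef, hω]
      · rw [stopVal_of_not_hit S hω]
        simp [hgdef, hω]
  have hRHSall : ∀ x : ℝ, ∫ ω in E, max (stopVal S B' T ω - x) 0 ∂ℙ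
      = ∫ ω in E, max (g ω - x) 0 ∂ℙ := fun x =>
    setIntegral_congr_ae hE (by filter_upwards [hae] with ω h _; rw [h.2])
  have hkey : ∀ x : ℝ,
      (∫ ω, max (stopVal S B' T ω - x) 0 ∂ℙ) - (∫ ω, max (stopVal S B T ω - x) 0 ∂ℙ)
          + (ℙ {ω | B ≤ runMax S T ω}).toReal * max (B - x) 0
        = ∫ ω in E, max (stopVal S B' T ω - x) 0 ∂ℙ := by
    intro x
    have hfint' : Integrable (fun ω => max (f ω - x) 0) ℙ :=
      (hfint.sub (integrable_const x)).pos_part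
    have hgint' : Integrable (fun ω => max (g ω - x) 0) ℙ :=
      (hgint.sub (integrable_const x)).pos_part
    have hIf : ∫ ω, max (stopVal S B T ω - x) 0 ∂ℙ = ∫ ω, max (f ω - x) 0 ∂ℙ :=
      integral_congr_ae (by filter_upwards [hae] with ω h; rw [h.1])
    have hIg : ∫ ω, max (stopVal S B' T ω - x) 0 ∂ℙ = ∫ ω, max (g ω - x) 0 ∂ℙ :=
      integral_congr_ae (by filter_upwards [hae] with ω h; rw [h.2])
    have hsplitf : ∫ ω, max (f ω - x) 0 ∂ℙ
        = (∫ ω in E, max (f ω - x) 0 ∂ℙ) + ∫ ω in Eᶜ, max (f ω - x) 0 ∂ℙ :=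
      (integral_add_compl hE hfint').symm
    have hsplitg : ∫ ω, max (g ω - x) 0 ∂ℙ
        = (∫ ω in E, max (g ω - x) 0 ∂ℙ) + ∫ ω in Eᶜ, max (g ω - x) 0 ∂ℙ :=
      (integral_add_compl hE hgint').symm
    have hfE : ∫ ω in E, max (f ω - x) 0 ∂ℙ = (ℙ E).toReal * max (B - x) 0 := by
      rw [setIntegral_congr_fun hE (g := fun _ => max (B - x) 0)
        (fun ω hω => by simp [hfdef, hω])]
      simp [setIntegral_const, smul_eq_mul, measureReal_def]
    have hfEc : ∫ ω in Eᶜ, max (f ω - x) 0 ∂ℙ = ∫ ω in Eᶜ, max (S T ω - x) 0 ∂ℙ :=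
      setIntegral_congr_fun hE.compl (fun ω hω => by
        have hω' : ω ∉ E := hω
        simp [hfdef, hω'])
    have hgEc : ∫ ω in Eᶜ, max (g ω - x) 0 ∂ℙ = ∫ ω in Eᶜ, max (S T ω - x) 0 ∂ℙ :=
      setIntegral_congr_fun hE.compl (fun ω hω => by
        have hω' : ω ∉ E' := fun h => hω (hE'E h)
        simp [hgdef, hω'])
    rw [hrun, hIf, hIg, hsplitf, hsplitg, hfE, hfEc, hgEc, hRHSall x]
    ring
  refine ⟨hkey, ?_⟩
  have hconv : ConvexOn ℝ univ (fun x => ∫ ω in E, max (g ω - x) 0 ∂ℙ) := by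
    refine ⟨convex_univ, ?_⟩
    intro x _ y _ a b ha hb hab
    have hgr : Integrable g (ℙ.restrict E) := hgint.restrict
    have hix : Integrable (fun ω => max (g ω - x) 0) (ℙ.restrict E) :=
      (hgr.sub (integrable_const x)).pos_part
    have hiy : Integrable (fun ω => max (g ω - y) 0) (ℙ.restrict E) :=
      (hgr.sub (integrable_const y)).pos_part
    have hiz : Integrable (fun ω => max (g ω - (a * x + b * y)) 0) (ℙ.restrict E) :=
      (hgr.sub (integrable_const _)).pos_part
    simp only [smul_eq_mul]
    calc ∫ ω in E, max (g ω - (a * x + b * y)) 0 ∂ℙ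
        ≤ ∫ ω in E, (a * max (g ω - x) 0 + b * max (g ω - y) 0) ∂ℙ := by
          refine integral_mono hiz ((hix.const_mul a).add (hiy.const_mul b)) fun ω => ?_
          have hdecomp : g ω - (a * x + b * y) = a * (g ω - x) + b * (g ω - y) := by
            have h1 : a = 1 - b := by linarith
            rw [h1]; ring
          rw [hdecomp]
          refine max_le ?_ ?_
          · exact add_le_add (mul_le_mul_of_nonneg_left (le_max_left _ _) ha)
              (mul_le_mul_of_nonneg_left (le_max_left _ _) hb)
          · exact add_nonneg (mul_nonneg ha (le_max_right _ _))
              (mul_nonneg hb (le_max_right _ _))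
      _ = a * (∫ ω in E, max (g ω - x) 0 ∂ℙ) + b * ∫ ω in E, max (g ω - y) 0 ∂ℙ := by
          rw [integral_add (hix.const_mul a) (hiy.const_mul b),
            integral_const_mul, integral_const_mul]
  have hfun : (fun x : ℝ =>
      (∫ ω, max (stopVal S B' T ω - x) 0 ∂ℙ) - (∫ ω, max (stopVal S B T ω - x) 0 ∂ℙ)
        + (ℙ {ω | B ≤ runMax S T ω}).toReal * max (B - x) 0)
      = fun x : ℝ => ∫ ω in E, max (g ω - x) 0 ∂ℙ := by
    funext x
    rw [hkey x, hRHSall x]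
  rw [hfun]
  exact hconv
end
end
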